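/- arXiv:1506.02921 — 5 statements merged into one kernel-verified Lean document; each statement's English description precedes it below -/
import Mathlib

section
/- Let X be a real or complex Hilbert space, let A : X → Set X be a dissipative set-valued map, and let P : X → X be a bounded self-adjoint linear operator that is strictly coercive, i.e. there is m > 0 with ⟪P x, x⟫ ≥ m‖x‖² for all x ∈ X. If A − I is surjective (for every f ∈ X there exist x ∈ D(A) and y ∈ A x with y − x = f), then AP − I is also surjective, where AP denotes the set-valued map x ↦ A(P x) with domain {x ∈ X : P x ∈ D(A)}. -/
open RCLike

section Aux
variable {𝕜 : Type*} [RCLike 𝕜] {X : Type*} [NormedAddCommGroup X]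
  [InnerProductSpace 𝕜 X] [CompleteSpace X]

/-- Resolvent estimate from dissipativity. -/
lemma aux_diss_est (A : X → Set X)
    (hdiss : ∀ x x' y y', y ∈ A x → y' ∈ A x' →
      RCLike.re (inner 𝕜 (y - y') (x - x') : 𝕜) ≤ 0)
    {lam : ℝ} (hlam : 0 < lam) {x x' y y' g g' : X}
    (hy : y ∈ A x) (hy' : y' ∈ A x')
    (h : y - (lam : 𝕜) • x = g) (h' : y' - (lam : 𝕜) • x' = g') :
    ‖x - x'‖ ≤ lam⁻¹ * ‖g - g'‖ := by
  have h0 := hdiss x x' y y' hy hy'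
  have hd : y - y' = (lam : 𝕜) • (x - x') + (g - g') := by
    have hy2 : y = (lam : 𝕜) • x + g := by rw [← h]; abel
    have hy2' : y' = (lam : 𝕜) • x' + g' := by rw [← h']; abel
    rw [hy2, hy2', smul_sub]; abel
  rw [hd, inner_add_left, inner_smul_left, conj_ofReal,
    inner_self_eq_norm_sq_to_K, map_add] at h0
  have hre : re ((lam : 𝕜) * (‖x - x'‖ : 𝕜) ^ 2) = lam * ‖x - x'‖ ^ 2 := by
    rw [← RCLike.ofReal_pow, ← RCLike.ofReal_mul, RCLike.ofReal_re]
  rw [hre] at h0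
  have h2 : -(‖g - g'‖ * ‖x - x'‖) ≤ re (inner 𝕜 (g - g') (x - x') : 𝕜) := by
    have h3 := abs_re_le_norm (inner 𝕜 (g - g') (x - x') : 𝕜)
    have h4 := norm_inner_le_norm (𝕜 := 𝕜) (g - g') (x - x')
    have := abs_le.mp h3
    linarith [this.1]
  have key : lam * ‖x - x'‖ ^ 2 ≤ ‖g - g'‖ * ‖x - x'‖ := by linarith
  rcases eq_or_lt_of_le (norm_nonneg (x - x')) with h5 | h5
  · rw [← h5]
    positivity
  · rw [inv_mul_eq_div, le_div_iff₀ hlam]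
    nlinarith

/-- Banach fixed point step: solve `y - lam•x = G x` for a Lipschitz perturbation `G`
with constant `κ < lam`, given the resolvent at `lam`. -/
lemma aux_fixed (A : X → Set X)
    (hdiss : ∀ x x' y y', y ∈ A x → y' ∈ A x' →
      RCLike.re (inner 𝕜 (y - y') (x - x') : 𝕜) ≤ 0)
    {lam : ℝ} (hlam : 0 < lam)
    (hres : ∀ g : X, ∃ x y, y ∈ A x ∧ y - (lam : 𝕜) • x = g)
    (G : X → X) {κ : ℝ} (hκ0 : 0 ≤ κ) (hκ : κ < lam)
    (hG : ∀ u v, ‖G u - G v‖ ≤ κ * ‖u - v‖) :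
    ∃ x y, y ∈ A x ∧ y - (lam : 𝕜) • x = G x := by
  classical
  set J : X → X := fun g => (hres g).choose with hJdef
  have hJspec : ∀ g : X, ∃ y, y ∈ A (J g) ∧ y - (lam : 𝕜) • (J g) = g := by
    intro g
    exact (hres g).choose_spec
  have hJlip : ∀ g g', ‖J g - J g'‖ ≤ lam⁻¹ * ‖g - g'‖ := by
    intro g g'
    obtain ⟨y, hy, h⟩ := hJspec g
    obtain ⟨y', hy', h'⟩ := hJspec g'
    exact aux_diss_est A hdiss hlam hy hy' h h'
  set T : X → X := fun x => J (G x) with hTdef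
  have hKnn : (0:ℝ) ≤ κ / lam := div_nonneg hκ0 hlam.le
  have hTlip : LipschitzWith (Real.toNNReal (κ / lam)) T := by
    apply LipschitzWith.of_dist_le_mul
    intro u v
    rw [Real.coe_toNNReal _ hKnn, dist_eq_norm, dist_eq_norm]
    calc ‖T u - T v‖ ≤ lam⁻¹ * ‖G u - G v‖ := hJlip _ _
      _ ≤ lam⁻¹ * (κ * ‖u - v‖) := by
          have : (0:ℝ) ≤ lam⁻¹ := by positivity
          exact mul_le_mul_of_nonneg_left (hG u v) this
      _ = κ / lam * ‖u - v‖ := by field_simp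
  have hcontr : ContractingWith (Real.toNNReal (κ / lam)) T := by
    refine ⟨?_, hTlip⟩
    rw [← NNReal.coe_lt_coe, Real.coe_toNNReal _ hKnn, NNReal.coe_one]
    exact (div_lt_one hlam).mpr hκ
  haveI : Nonempty X := ⟨0⟩
  set x : X := ContractingWith.fixedPoint T hcontr with hxdef
  have hfix : T x = x := hcontr.fixedPoint_isFixedPt
  obtain ⟨y, hy, h⟩ := hJspec (G x)
  have hJx : J (G x) = x := hfix
  rw [hJx] at hy h
  exact ⟨x, y, hy, h⟩

/-- Shift the resolvent parameter. -/
lemma aux_shift (A : X → Set X)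
    (hdiss : ∀ x x' y y', y ∈ A x → y' ∈ A x' →
      RCLike.re (inner 𝕜 (y - y') (x - x') : 𝕜) ≤ 0)
    {lam0 lam : ℝ} (h0 : 0 < lam0) (hlam : 0 < lam) (hd : |lam - lam0| < lam0)
    (hres : ∀ g : X, ∃ x y, y ∈ A x ∧ y - (lam0 : 𝕜) • x = g) :
    ∀ g : X, ∃ x y, y ∈ A x ∧ y - (lam : 𝕜) • x = g := by
  intro g
  obtain ⟨x, y, hy, h⟩ := aux_fixed A hdiss h0 hres
    (fun x => ((lam - lam0 : ℝ) : 𝕜) • x + g) (abs_nonneg _) hd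
    (fun u v => by
      have he : (((lam - lam0 : ℝ) : 𝕜) • u + g) - (((lam - lam0 : ℝ) : 𝕜) • v + g)
          = ((lam - lam0 : ℝ) : 𝕜) • (u - v) := by rw [smul_sub]; abel
      rw [he, norm_smul, RCLike.norm_ofReal])
  refine ⟨x, y, hy, ?_⟩
  have hy2 : y = (lam0 : 𝕜) • x + (((lam - lam0 : ℝ) : 𝕜) • x + g) := by
    rw [← h]; abel
  rw [hy2, ← add_assoc, ← add_smul, ← RCLike.ofReal_add]
  norm_num

/-- Resolvent of a dissipative map at every positive parameter. -/
lemma aux_res_all (A : X → Set X)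
    (hdiss : ∀ x x' y y', y ∈ A x → y' ∈ A x' →
      RCLike.re (inner 𝕜 (y - y') (x - x') : 𝕜) ≤ 0)
    (hsurj : ∀ f : X, ∃ x y, y ∈ A x ∧ y - x = f) :
    ∀ lam : ℝ, 0 < lam → ∀ g : X, ∃ x y, y ∈ A x ∧ y - (lam : 𝕜) • x = g := by
  have hres1 : ∀ g : X, ∃ x y, y ∈ A x ∧ y - ((1 : ℝ) : 𝕜) • x = g := by
    intro g
    obtain ⟨x, y, hy, h⟩ := hsurj g
    exact ⟨x, y, hy, by simpa using h⟩
  have key : ∀ n : ℕ, ∀ lam : ℝ, 0 < lam → lam ≤ (3/2 : ℝ) ^ n →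
      ∀ g : X, ∃ x y, y ∈ A x ∧ y - (lam : 𝕜) • x = g := by
    intro n
    induction n with
    | zero =>
      intro lam hl hle
      simp only [pow_zero] at hle
      exact aux_shift A hdiss one_pos hl (abs_lt.mpr ⟨by linarith, by linarith⟩) hres1
    | succ n ih =>
      intro lam hl hle
      have h23 : (0:ℝ) < (2/3) * lam := by linarith
      refine aux_shift A hdiss h23 hl (abs_lt.mpr ⟨by linarith, by linarith⟩)
        (ih ((2/3) * lam) h23 ?_)
      rw [pow_succ] at hle
      linarith
  intro lam hl g
  obtain ⟨n, hn⟩ := pow_unbounded_of_one_lt lam (by norm_num : (1:ℝ) < 3/2)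
  exact key n lam hl hn.le g

end Aux


/-- Lemma 4.1 of the paper.
If `A` is a dissipative set-valued map on a Hilbert space `X`, `P` is a bounded
self-adjoint strictly coercive linear operator, and `A - I` is surjective, then
`AP - I` is surjective. -/
theorem stmt_0
    {𝕜 : Type*} [RCLike 𝕜]
    {X : Type*} [NormedAddCommGroup X] [InnerProductSpace 𝕜 X] [CompleteSpace X]
    (A : X → Set X)
    (hdiss : ∀ x x' y y', y ∈ A x → y' ∈ A x' →
      RCLike.re (inner 𝕜 (y - y') (x - x') : 𝕜) ≤ 0)
    (P : X →L[𝕜] X) (hPsa : IsSelfAdjoint P)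
    (m : ℝ) (hm : 0 < m)
    (hcoer : ∀ x : X, m * ‖x‖ ^ 2 ≤ RCLike.re (inner 𝕜 (P x) x : 𝕜))
    (hsurj : ∀ f : X, ∃ x y, y ∈ A x ∧ y - x = f) :
    ∀ f : X, ∃ x y, y ∈ A (P x) ∧ y - x = f := by
  classical
  rcases subsingleton_or_nontrivial X with hX | hX
  · intro f
    obtain ⟨x, y, hy, h⟩ := hsurj f
    exact ⟨x, y, by rwa [Subsingleton.elim (P x) x], h⟩
  intro f
  -- basic norm facts
  have hre_le : ∀ u v : X, re (inner 𝕜 u v : 𝕜) ≤ ‖u‖ * ‖v‖ := by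
    intro u v
    have h3 := abs_re_le_norm (inner 𝕜 u v : 𝕜)
    have h4 := norm_inner_le_norm (𝕜 := 𝕜) u v
    linarith [(abs_le.mp h3).2]
  have hPx : ∀ x : X, m * ‖x‖ ≤ ‖P x‖ := by
    intro x
    rcases eq_or_lt_of_le (norm_nonneg x) with h5 | h5
    · rw [← h5]; simpa using norm_nonneg (P x)
    · have h1 := hcoer x
      have h2 := hre_le (P x) x
      nlinarith
  have hmP : m ≤ ‖P‖ := by
    obtain ⟨x, hx⟩ := exists_ne (0 : X)
    have h1 := hPx x
    have h2 := P.le_opNorm x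
    have hx0 : 0 < ‖x‖ := norm_pos_iff.mpr hx
    nlinarith
  have hPpos : 0 < ‖P‖ := lt_of_lt_of_le hm hmP
  -- surjectivity of P
  have hPsurj : Function.Surjective (⇑P) := by
    have hanti : AntilipschitzWith (Real.toNNReal m⁻¹) (⇑P) := by
      apply AddMonoidHomClass.antilipschitz_of_bound
      intro x
      rw [Real.coe_toNNReal _ (by positivity)]
      have h1 := hPx x
      have h2 : m⁻¹ * (m * ‖x‖) ≤ m⁻¹ * ‖P x‖ :=
        mul_le_mul_of_nonneg_left h1 (by positivity)
      calc ‖x‖ = m⁻¹ * (m * ‖x‖) := by field_simp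
        _ ≤ m⁻¹ * ‖P x‖ := h2
    have hclosed : IsClosed (Set.range (⇑P)) := hanti.isClosed_range P.uniformContinuous
    set K : Submodule 𝕜 X := LinearMap.range (P : X →ₗ[𝕜] X) with hKdef
    have hKset : (K : Set X) = Set.range (⇑P) := by
      ext v
      simp [hKdef, LinearMap.mem_range]
    haveI : CompleteSpace K := by
      rw [← hKset] at hclosed
      exact hclosed.completeSpace_coe
    have hbot : Kᗮ = ⊥ := by
      rw [Submodule.eq_bot_iff]
      intro v hv
      rw [Submodule.mem_orthogonal] at hv
      have h0 : (inner 𝕜 (P v) v : 𝕜) = 0 := hv (P v) ⟨v, rfl⟩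
      have h1 := hcoer v
      rw [h0, map_zero] at h1
      have h2 : ‖v‖ ^ 2 = 0 := le_antisymm (by nlinarith) (sq_nonneg _)
      exact norm_eq_zero.mp (sq_eq_zero_iff.mp h2)
    have htop : K = ⊤ := Submodule.orthogonal_eq_bot_iff.mp hbot
    intro v
    have hv : v ∈ K := htop ▸ Submodule.mem_top
    obtain ⟨w, hw⟩ := hv
    exact ⟨w, hw⟩
  choose B hB using hPsurj
  -- constants
  set c : ℝ := m / ‖P‖ ^ 2 with hcdef
  set MB : ℝ := m⁻¹ with hMBdef
  have hc : 0 < c := by positivity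
  have hMB : 0 < MB := by positivity
  have hBlip : ∀ u v : X, ‖B u - B v‖ ≤ MB * ‖u - v‖ := by
    intro u v
    have hPd : P (B u - B v) = u - v := by rw [map_sub, hB, hB]
    have h1 := hcoer (B u - B v)
    have h2 := hre_le (P (B u - B v)) (B u - B v)
    rw [hPd] at h1 h2
    rcases eq_or_lt_of_le (norm_nonneg (B u - B v)) with h5 | h5
    · rw [← h5]; positivity
    · rw [hMBdef, ← sub_nonneg]
      have key : m * ‖B u - B v‖ ≤ ‖u - v‖ := by nlinarith
      nlinarith [mul_le_mul_of_nonneg_left key (by positivity : (0:ℝ) ≤ m⁻¹),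
        (by field_simp : m⁻¹ * (m * ‖B u - B v‖) = ‖B u - B v‖)]
  have hBcoer : ∀ u v : X, c * ‖u - v‖ ^ 2 ≤ re (inner 𝕜 (B u - B v) (u - v) : 𝕜) := by
    intro u v
    have hPd : P (B u - B v) = u - v := by rw [map_sub, hB, hB]
    have h1 := hcoer (B u - B v)
    have hre : re (inner 𝕜 (B u - B v) (u - v) : 𝕜)
        = re (inner 𝕜 (P (B u - B v)) (B u - B v) : 𝕜) := by
      rw [hPd, ← inner_conj_symm, RCLike.conj_re]
    have h2 : ‖u - v‖ ≤ ‖P‖ * ‖B u - B v‖ := by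
      rw [← hPd]; exact P.le_opNorm _
    have hcP : c * ‖P‖ ^ 2 = m := by rw [hcdef, div_mul_cancel₀ _ (pow_pos hPpos 2).ne']
    rw [hre]
    nlinarith [norm_nonneg (u - v), norm_nonneg (B u - B v),
      mul_le_mul_of_nonneg_left h2 hc.le]
  have hcMB : c ≤ MB := by
    rw [hcdef, hMBdef, div_le_iff₀ (by positivity)]
    rw [inv_mul_eq_div, le_div_iff₀ hm]
    nlinarith
  -- contraction setup
  set lam : ℝ := MB ^ 2 / c with hlamdef
  have hlam : 0 < lam := by positivity
  have hlamc : lam * c = MB ^ 2 := by rw [hlamdef, div_mul_cancel₀ _ hc.ne']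
  have hMBlam : MB ≤ lam := by
    rw [hlamdef, le_div_iff₀ hc]
    nlinarith
  set κ : ℝ := Real.sqrt (lam ^ 2 - MB ^ 2) with hκdef
  have hκsq : κ ^ 2 = lam ^ 2 - MB ^ 2 := Real.sq_sqrt (by nlinarith)
  have hκ0 : 0 ≤ κ := Real.sqrt_nonneg _
  have hκlt : κ < lam := by nlinarith
  have hGlip : ∀ u v : X,
      ‖(B u - (lam : 𝕜) • u + f) - (B v - (lam : 𝕜) • v + f)‖ ≤ κ * ‖u - v‖ := by
    intro u v
    have he : (B u - (lam : 𝕜) • u + f) - (B v - (lam : 𝕜) • v + f)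
        = (B u - B v) - (lam : 𝕜) • (u - v) := by rw [smul_sub]; abel
    rw [he]
    have hexp : ‖(B u - B v) - (lam : 𝕜) • (u - v)‖ ^ 2
        = ‖B u - B v‖ ^ 2 - 2 * (lam * re (inner 𝕜 (B u - B v) (u - v) : 𝕜))
          + lam ^ 2 * ‖u - v‖ ^ 2 := by
      rw [norm_sub_sq (𝕜 := 𝕜), inner_smul_right, norm_smul, RCLike.norm_ofReal,
        abs_of_pos hlam, mul_pow]
      have : re ((lam : 𝕜) * (inner 𝕜 (B u - B v) (u - v) : 𝕜))
          = lam * re (inner 𝕜 (B u - B v) (u - v) : 𝕜) := by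
        rw [RCLike.re_ofReal_mul]
      rw [this]
    have h1 := hBcoer u v
    have h2 := hBlip u v
    have hsq : ‖(B u - B v) - (lam : 𝕜) • (u - v)‖ ^ 2 ≤ (κ * ‖u - v‖) ^ 2 := by
      have hκz : (κ * ‖u - v‖) ^ 2 = (lam ^ 2 - MB ^ 2) * ‖u - v‖ ^ 2 := by
        rw [mul_pow, hκsq]
      rw [hexp, hκz]
      nlinarith [norm_nonneg (B u - B v), norm_nonneg (u - v),
        mul_le_mul_of_nonneg_left h1 hlam.le]
    nlinarith [norm_nonneg ((B u - B v) - (lam : 𝕜) • (u - v)),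
      mul_nonneg hκ0 (norm_nonneg (u - v))]
  obtain ⟨u, y, hy, h⟩ := aux_fixed A hdiss hlam (aux_res_all A hdiss hsurj lam hlam)
    (fun u => B u - (lam : 𝕜) • u + f) hκ0 hκlt hGlip
  have hy2 : y = B u + f := by
    have : y = (lam : 𝕜) • u + (B u - (lam : 𝕜) • u + f) := by rw [← h]; abel
    rw [this]; abel
  refine ⟨B u, y, ?_, ?_⟩
  · rwa [hB]
  · rw [hy2]; abel
end

section
/- Let m ∈ ℕ, let φ : ℝ^m → Set (ℝ^m) be an m-monotone set-valued map, and let B be a real m × m matrix whose symmetric part is positive definite, i.e. there is m₀ > 0 with ⟨B z, z⟩ ≥ m₀ |z|² for all z ∈ ℝ^m. Then for every g ∈ ℝ^m there exists a unique y ∈ D(φ) such that g − B y ∈ φ(y); in other words, the set-valued map y ↦ B y + φ(y) is surjective and injective on ℝ^m. -/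
open scoped Matrix RealInnerProductSpace

namespace Stmt5Aux
variable {m : ℕ}

lemma inner_eq_dot (x y : EuclideanSpace ℝ (Fin m)) : ⟪x, y⟫ = x ⬝ᵥ y := by
  simp [PiLp.inner_apply, RCLike.inner_apply, dotProduct, mul_comm]

lemma resolvent_nonexpansive (φ : (Fin m → ℝ) → Set (Fin m → ℝ))
    (hmono : ∀ v v' w w', w ∈ φ v → w' ∈ φ v' → 0 ≤ (w - w') ⬝ᵥ (v - v'))
    {lam : ℝ} (hlam : 0 ≤ lam) {v v' w w' : EuclideanSpace ℝ (Fin m)}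
    (hw : w.ofLp ∈ φ v.ofLp) (hw' : w'.ofLp ∈ φ v'.ofLp) :
    ‖v - v'‖ ≤ ‖(v + lam • w) - (v' + lam • w')‖ := by
  have h1 : (v + lam • w) - (v' + lam • w') = (v - v') + lam • (w - w') := by
    module
  rw [h1]
  have h2 : 0 ≤ ⟪v - v', lam • (w - w')⟫ := by
    rw [real_inner_smul_right]
    refine mul_nonneg hlam ?_
    rw [real_inner_comm, inner_eq_dot]
    simpa only [WithLp.ofLp_sub] using hmono v v' w w' hw hw'
  have hsq : ‖v - v'‖ ^ 2 ≤ ‖(v - v') + lam • (w - w')‖ ^ 2 := by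
    rw [norm_add_sq_real]
    nlinarith [sq_nonneg ‖lam • (w - w')‖]
  nlinarith [norm_nonneg (v - v'), norm_nonneg ((v - v') + lam • (w - w'))]

end Stmt5Aux

namespace Stmt5Aux

def Sur (m : ℕ) (φ : (Fin m → ℝ) → Set (Fin m → ℝ)) (lam : ℝ) : Prop :=
  ∀ f : EuclideanSpace ℝ (Fin m), ∃ v w : EuclideanSpace ℝ (Fin m),
    w.ofLp ∈ φ v.ofLp ∧ v + lam • w = f

lemma sur_step (φ : (Fin m → ℝ) → Set (Fin m → ℝ))
    (hmono : ∀ v v' w w', w ∈ φ v → w' ∈ φ v' → 0 ≤ (w - w') ⬝ᵥ (v - v'))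
    {lam mu : ℝ} (hlam : 0 < lam) (hmu : lam / 2 < mu) (hS : Sur m φ lam) :
    Sur m φ mu := by
  have hmu0 : 0 < mu := lt_trans (by linarith) hmu
  intro f
  set r : ℝ := lam / mu with hr
  have hr0 : 0 < r := div_pos hlam hmu0
  have hr2 : r < 2 := by
    rw [hr, div_lt_iff₀ hmu0]; linarith
  set k : ℝ := |1 - r| with hkdef
  have hk0 : 0 ≤ k := abs_nonneg _
  have hk1 : k < 1 := by
    rw [hkdef, abs_lt]; constructor <;> linarith
  let T : EuclideanSpace ℝ (Fin m) → EuclideanSpace ℝ (Fin m) :=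
    fun v => (hS ((1 - r) • v + r • f)).choose
  have hT : ∀ v, ∃ w : EuclideanSpace ℝ (Fin m), w.ofLp ∈ φ (T v).ofLp ∧ T v + lam • w = (1 - r) • v + r • f :=
    fun v => (hS ((1 - r) • v + r • f)).choose_spec
  have hLip : ∀ v v', ‖T v - T v'‖ ≤ k * ‖v - v'‖ := by
    intro v v'
    obtain ⟨w, hw, he⟩ := hT v
    obtain ⟨w', hw', he'⟩ := hT v'
    have h := resolvent_nonexpansive φ hmono hlam.le hw hw'
    rw [he, he'] at h
    calc ‖T v - T v'‖ ≤ ‖((1 - r) • v + r • f) - ((1 - r) • v' + r • f)‖ := h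
      _ = ‖(1 - r) • (v - v')‖ := by congr 1; module
      _ = k * ‖v - v'‖ := by rw [norm_smul, Real.norm_eq_abs]
  have hcontr : ContractingWith k.toNNReal T := by
    constructor
    · exact_mod_cast (by rwa [Real.coe_toNNReal _ hk0] :
        ((k.toNNReal : ℝ)) < 1)
    · refine LipschitzWith.of_dist_le_mul fun x y => ?_
      rw [dist_eq_norm, dist_eq_norm, Real.coe_toNNReal _ hk0]
      exact hLip x y
  obtain ⟨v, hv, -⟩ := hcontr.exists_fixedPoint 0 (edist_ne_top _ _)
  obtain ⟨w, hw, he⟩ := hT v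
  rw [hv] at he hw
  have h1 : lam • w = r • (f - v) := by
    have h2 : lam • w = ((1 - r) • v + r • f) - v := by
      rw [← he]; module
    rw [h2]; module
  have h3 : mu • w = f - v := by
    have h4 := congrArg (fun x : EuclideanSpace ℝ (Fin m) => (mu / lam) • x) h1
    simp only [smul_smul] at h4
    rw [div_mul_cancel₀ _ hlam.ne'] at h4
    have : mu / lam * r = 1 := by rw [hr]; field_simp
    rw [this, one_smul] at h4
    exact h4
  exact ⟨v, w, hw, by rw [h3]; module⟩

lemma sur_all (φ : (Fin m → ℝ) → Set (Fin m → ℝ))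
    (hmono : ∀ v v' w w', w ∈ φ v → w' ∈ φ v' → 0 ≤ (w - w') ⬝ᵥ (v - v'))
    (h1 : Sur m φ 1) {lam : ℝ} (hlam : 0 < lam) : Sur m φ lam := by
  have key : ∀ n : ℕ, ∀ mu : ℝ, (1 / 2 : ℝ) ^ n < mu → Sur m φ mu := by
    intro n
    induction n with
    | zero =>
      intro mu hmu
      simp only [pow_zero] at hmu
      exact sur_step φ hmono one_pos (by linarith) h1
    | succ n ih =>
      intro mu hmu
      have hpow : (0:ℝ) < (1/2:ℝ) ^ n := by positivity
      rw [pow_succ] at hmu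
      set lam' : ℝ := ((1/2:ℝ) ^ n + 2 * mu) / 2 with hl'
      have h1' : (1/2:ℝ) ^ n < lam' := by rw [hl']; nlinarith
      have h2' : lam' / 2 < mu := by rw [hl']; nlinarith
      exact sur_step φ hmono (lt_trans hpow h1') h2' (ih _ h1')
  obtain ⟨n, hn⟩ := exists_pow_lt_of_lt_one hlam (by norm_num : (1/2:ℝ) < 1)
  exact key n lam hn

end Stmt5Aux

open Stmt5Aux

/-- finite-dimensional solvability step in the proof of Theorem 4.2.
If `φ : ℝ^m ⇉ ℝ^m` is m-monotone and `B` is a real `m × m` matrix whose symmetric part is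
positive definite, then for every `g ∈ ℝ^m` there is a unique `y` with `g - B y ∈ φ y`. -/
theorem stmt_5 (m : ℕ)
    (φ : (Fin m → ℝ) → Set (Fin m → ℝ))
    (hmono : ∀ v v' w w', w ∈ φ v → w' ∈ φ v' → 0 ≤ (w - w') ⬝ᵥ (v - v'))
    (hran : ∀ f : Fin m → ℝ, ∃ v w, w ∈ φ v ∧ v + w = f)
    (B : Matrix (Fin m) (Fin m) ℝ)
    (m₀ : ℝ) (hm₀ : 0 < m₀)
    (hB : ∀ z : Fin m → ℝ, m₀ * (z ⬝ᵥ z) ≤ (B *ᵥ z) ⬝ᵥ z) :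
    ∀ g : Fin m → ℝ, ∃! y : Fin m → ℝ, g - B *ᵥ y ∈ φ y := by
  classical
  intro g
  -- uniqueness
  have huniq : ∀ y y' : Fin m → ℝ, g - B *ᵥ y ∈ φ y → g - B *ᵥ y' ∈ φ y' → y = y' := by
    intro y y' hy hy'
    have h := hmono y y' _ _ hy hy'
    set z : Fin m → ℝ := y - y' with hz
    have h2 : (g - B *ᵥ y) - (g - B *ᵥ y') = -(B *ᵥ z) := by
      rw [hz, Matrix.mulVec_sub]; module
    rw [h2, neg_dotProduct] at h
    have h4 := hB z
    have h5 : 0 ≤ z ⬝ᵥ z := Finset.sum_nonneg fun i _ => mul_self_nonneg _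
    have h6 : z ⬝ᵥ z = 0 := le_antisymm (by nlinarith) h5
    have h7 : z = 0 := by rwa [dotProduct_self_eq_zero] at h6
    exact sub_eq_zero.mp h7
  -- existence
  let gE : EuclideanSpace ℝ (Fin m) := WithLp.toLp 2 g
  let L : EuclideanSpace ℝ (Fin m) →ₗ[ℝ] EuclideanSpace ℝ (Fin m) :=
    { toFun := fun z => WithLp.toLp 2 (B *ᵥ z.ofLp)
      map_add' := fun x y => by simp [Matrix.mulVec_add]
      map_smul' := fun c x => by simp [Matrix.mulVec_smul] }
  let Lc := LinearMap.toContinuousLinearMap L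
  have hLcz : ∀ z : EuclideanSpace ℝ (Fin m), Lc z = B *ᵥ z := fun _ => rfl
  set C : ℝ := ‖Lc‖ with hC
  have hC0 : 0 ≤ C := norm_nonneg _
  have hCb : ∀ z : EuclideanSpace ℝ (Fin m), ‖Lc z‖ ≤ C * ‖z‖ := fun z => Lc.le_opNorm z
  set lam : ℝ := m₀ / (C ^ 2 + 1) with hlamdef
  have hlam : 0 < lam := by positivity
  have hlameq : lam * (C ^ 2 + 1) = m₀ := by
    rw [hlamdef]; field_simp
  set K : ℝ := 1 - 2 * lam * m₀ + lam ^ 2 * C ^ 2 with hK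
  have hK1 : K < 1 := by
    have h1 : lam * C ^ 2 ≤ m₀ := by nlinarith
    rw [hK]; nlinarith
  set k : ℝ := Real.sqrt (max K 0) with hk
  have hk0 : 0 ≤ k := Real.sqrt_nonneg _
  have hk1 : k < 1 := by
    have := Real.sqrt_lt_sqrt (le_max_right K 0) (max_lt hK1 one_pos)
    rwa [Real.sqrt_one] at this
  have hksq : k ^ 2 = max K 0 := Real.sq_sqrt (le_max_right K 0)
  have hknorm : ∀ z : EuclideanSpace ℝ (Fin m), ‖z - lam • Lc z‖ ≤ k * ‖z‖ := by
    intro z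
    have hcsq : ‖z - lam • Lc z‖ ^ 2 ≤ K * ‖z‖ ^ 2 := by
      rw [norm_sub_sq_real]
      have e1 : ⟪z, lam • Lc z⟫ = lam * ((B *ᵥ z) ⬝ᵥ z) := by
        rw [real_inner_smul_right, real_inner_comm, inner_eq_dot, hLcz]
      have e2 : z ⬝ᵥ z = ‖z‖ ^ 2 := by
        rw [← real_inner_self_eq_norm_sq, inner_eq_dot]
      have e3 : ‖lam • Lc z‖ ^ 2 ≤ lam ^ 2 * C ^ 2 * ‖z‖ ^ 2 := by
        rw [norm_smul, Real.norm_eq_abs, mul_pow, sq_abs]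
        have h5 := hCb z
        have h6 := mul_le_mul h5 h5 (norm_nonneg (Lc z)) (mul_nonneg hC0 (norm_nonneg z))
        nlinarith [sq_nonneg lam, h6]
      have h4 := hB z
      rw [e1]
      rw [e2] at h4
      rw [hK]; nlinarith
    have hKle : K * ‖z‖ ^ 2 ≤ (k * ‖z‖) ^ 2 := by
      rw [mul_pow, hksq]
      nlinarith [sq_nonneg ‖z‖, le_max_left K 0]
    nlinarith [norm_nonneg (z - lam • Lc z), mul_nonneg hk0 (norm_nonneg z)]
  have hS1 : Sur m φ 1 := by
    intro f
    obtain ⟨v, w, hw, he⟩ := hran f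
    exact ⟨WithLp.toLp 2 v, WithLp.toLp 2 w, hw, by rw [one_smul]; exact congrArg (WithLp.toLp 2) he⟩
  have hS := sur_all φ hmono hS1 hlam
  let T : EuclideanSpace ℝ (Fin m) → EuclideanSpace ℝ (Fin m) :=
    fun y => (hS (y + lam • (gE - Lc y))).choose
  have hT : ∀ y, ∃ w : EuclideanSpace ℝ (Fin m), w.ofLp ∈ φ (T y).ofLp ∧
      T y + lam • w = y + lam • (gE - Lc y) :=
    fun y => (hS (y + lam • (gE - Lc y))).choose_spec
  have hLip : ∀ y y', ‖T y - T y'‖ ≤ k * ‖y - y'‖ := by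
    intro y y'
    obtain ⟨w, hw, he⟩ := hT y
    obtain ⟨w', hw', he'⟩ := hT y'
    have h := resolvent_nonexpansive φ hmono hlam.le hw hw'
    rw [he, he'] at h
    have heq : (y + lam • (gE - Lc y)) - (y' + lam • (gE - Lc y'))
        = (y - y') - lam • Lc (y - y') := by
      rw [map_sub]; module
    rw [heq] at h
    exact le_trans h (hknorm (y - y'))
  have hcontr : ContractingWith k.toNNReal T := by
    constructor
    · exact_mod_cast (by rwa [Real.coe_toNNReal _ hk0] : ((k.toNNReal : ℝ)) < 1)
    · refine LipschitzWith.of_dist_le_mul fun x y => ?_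
      rw [dist_eq_norm, dist_eq_norm, Real.coe_toNNReal _ hk0]
      exact hLip x y
  obtain ⟨y, hy, -⟩ := hcontr.exists_fixedPoint 0 (edist_ne_top _ _)
  obtain ⟨w, hw, he⟩ := hT y
  rw [hy] at he hw
  have hweq : w = gE - Lc y := by
    have h0 := add_left_cancel he
    exact smul_right_injective (EuclideanSpace ℝ (Fin m)) hlam.ne' h0
  rw [hweq] at hw
  have hgoal : g - B *ᵥ y ∈ φ y := hw
  exact ⟨y.ofLp, hgoal, fun y' h' => huniq y' y.ofLp h' hgoal⟩
end

section
/- Let X_c and U be real or complex Hilbert spaces, let A_c : X_c → Set X_c be an m-dissipative set-valued map, let D_c : U → Set U be a set-valued map with domain all of U such that −D_c (the map u ↦ {−w : w ∈ D_c(u)}) is m-dissipative, and let B_c : U → X_c be a bounded linear operator with Hilbert-space adjoint B_c* : X_c → U. Define M_c : X_c × U → Set (X_c × U) by M_c(x_c, u) := { (z + B_c u, −B_c* x_c − w) : z ∈ A_c(x_c), w ∈ D_c(u) }, with domain D(A_c) × U. Then M_c is m-dissipative on the product Hilbert space X_c × U. -/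
section AbstractMDiss

variable {𝕜 : Type*} [RCLike 𝕜] {H : Type*} [NormedAddCommGroup H] [InnerProductSpace 𝕜 H]

local notation "⟪" x ", " y "⟫" => @inner 𝕜 _ _ x y

/-- Dissipativity of a set-valued map. -/
def SVDiss (𝕜 : Type*) [RCLike 𝕜] {H : Type*} [NormedAddCommGroup H] [InnerProductSpace 𝕜 H]
    (M : H → Set H) : Prop :=
  ∀ x x' y y' : H, y ∈ M x → y' ∈ M x' → RCLike.re (inner 𝕜 (y - y') (x - x') : 𝕜) ≤ 0

/-- `ran (I - t M) = H`. -/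
def SVRan (𝕜 : Type*) [RCLike 𝕜] {H : Type*} [NormedAddCommGroup H] [InnerProductSpace 𝕜 H]
    (M : H → Set H) (t : ℝ) : Prop :=
  ∀ f : H, ∃ x y : H, y ∈ M x ∧ x - ((t : ℝ) : 𝕜) • y = f

lemma svdiss_nonexp {M : H → Set H} (hM : SVDiss 𝕜 M)
    {t : ℝ} (ht : 0 ≤ t) {x x' y y' : H} (hy : y ∈ M x) (hy' : y' ∈ M x') :
    ‖x - x'‖ ≤ ‖(x - ((t : ℝ) : 𝕜) • y) - (x' - ((t : ℝ) : 𝕜) • y')‖ := by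
  have hd : RCLike.re ⟪y - y', x - x'⟫ ≤ 0 := hM x x' y y' hy hy'
  have hv : (x - ((t : ℝ) : 𝕜) • y) - (x' - ((t : ℝ) : 𝕜) • y')
      = (x - x') - ((t : ℝ) : 𝕜) • (y - y') := by
    rw [smul_sub]; abel
  rw [hv]
  have hre : RCLike.re ⟪x - x', y - y'⟫ ≤ 0 := by
    rw [inner_re_symm]; exact hd
  have h1 : ‖(x - x') - ((t : ℝ) : 𝕜) • (y - y')‖ ^ 2
      = ‖x - x'‖ ^ 2 - 2 * (t * RCLike.re ⟪x - x', y - y'⟫) + (t * ‖y - y'‖) ^ 2 := by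
    rw [norm_sub_sq (𝕜 := 𝕜), inner_smul_right, RCLike.re_ofReal_mul, norm_smul,
      RCLike.norm_ofReal, abs_of_nonneg ht]
  nlinarith [norm_nonneg ((x - x') - ((t : ℝ) : 𝕜) • (y - y')), norm_nonneg (x - x'),
    mul_nonneg ht (neg_nonneg.2 hre), sq_nonneg (t * ‖y - y'‖)]

variable [CompleteSpace H]

lemma svran_shift {M : H → Set H} (hM : SVDiss 𝕜 M)
    {a b : ℝ} (ha : 0 < a) (hb : 0 < b) (hab : a < 2 * b)
    (hr : SVRan 𝕜 M a) : SVRan 𝕜 M b := by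
  haveI : Nonempty H := ⟨0⟩
  intro f
  set t : ℝ := a / b with htdef
  have ht0 : 0 < t := div_pos ha hb
  have ht2 : t < 2 := (div_lt_iff₀ hb).2 (by linarith)
  choose J Y hY hJ using hr
  have hJne : ∀ u v : H, ‖J u - J v‖ ≤ ‖u - v‖ := by
    intro u v
    have h := svdiss_nonexp hM ha.le (hY u) (hY v)
    rwa [hJ u, hJ v] at h
  set g : H → H := fun x => J (((t : ℝ) : 𝕜) • f + (((1 - t : ℝ)) : 𝕜) • x) with hg
  have habs : |1 - t| < 1 := abs_lt.2 ⟨by linarith, by linarith⟩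
  have hlip : LipschitzWith (Real.toNNReal |1 - t|) g := by
    apply LipschitzWith.of_dist_le_mul
    intro x y
    rw [dist_eq_norm, dist_eq_norm]
    have h1 : ‖g x - g y‖ ≤ ‖(((t : ℝ) : 𝕜) • f + (((1 - t : ℝ)) : 𝕜) • x)
        - (((t : ℝ) : 𝕜) • f + (((1 - t : ℝ)) : 𝕜) • y)‖ := hJne _ _
    have h2 : (((t : ℝ) : 𝕜) • f + (((1 - t : ℝ)) : 𝕜) • x)
        - (((t : ℝ) : 𝕜) • f + (((1 - t : ℝ)) : 𝕜) • y) = (((1 - t : ℝ)) : 𝕜) • (x - y) := by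
      rw [smul_sub]; abel
    rw [h2, norm_smul, RCLike.norm_ofReal] at h1
    calc ‖g x - g y‖ ≤ |1 - t| * ‖x - y‖ := h1
      _ = (Real.toNNReal |1 - t| : ℝ) * ‖x - y‖ := by
          rw [Real.coe_toNNReal _ (abs_nonneg _)]
  have hK : Real.toNNReal |1 - t| < 1 := by
    rw [← Real.toNNReal_one]
    exact (Real.toNNReal_lt_toNNReal_iff one_pos).2 habs
  have hC : ContractingWith (Real.toNNReal |1 - t|) g := ⟨hK, hlip⟩
  set x := ContractingWith.fixedPoint g hC with hxdef
  have hx : g x = x := hC.fixedPoint_isFixedPt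
  set u : H := ((t : ℝ) : 𝕜) • f + (((1 - t : ℝ)) : 𝕜) • x with hu
  have hJu : J u = x := hx
  refine ⟨x, Y u, ?_, ?_⟩
  · have h := hY u; rwa [hJu] at h
  · have he : x - ((a : ℝ) : 𝕜) • Y u = u := by rw [← hJu]; exact hJ u
    have ht' : ((t : ℝ) : 𝕜) ≠ 0 := by
      simp only [ne_eq, RCLike.ofReal_eq_zero]; exact ne_of_gt ht0
    have ha' : ((a : ℝ) : 𝕜) ≠ 0 := by
      simp only [ne_eq, RCLike.ofReal_eq_zero]; exact ne_of_gt ha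
    have hb' : ((b : ℝ) : 𝕜) ≠ 0 := by
      simp only [ne_eq, RCLike.ofReal_eq_zero]; exact ne_of_gt hb
    have hf1 : ((t : ℝ) : 𝕜) • f = (x - ((a : ℝ) : 𝕜) • Y u) - (((1 - t : ℝ)) : 𝕜) • x := by
      rw [he, hu]; abel
    have hf2 : f = (((t : ℝ) : 𝕜))⁻¹ • ((x - ((a : ℝ) : 𝕜) • Y u) - (((1 - t : ℝ)) : 𝕜) • x) := by
      rw [← hf1, smul_smul, inv_mul_cancel₀ ht', one_smul]
    rw [hf2]
    have htk : ((t : ℝ) : 𝕜) = ((a : ℝ) : 𝕜) / ((b : ℝ) : 𝕜) := by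
      rw [htdef]; push_cast; ring
    have htk1 : (((1 - t : ℝ)) : 𝕜) = 1 - ((a : ℝ) : 𝕜) / ((b : ℝ) : 𝕜) := by
      rw [htdef]; push_cast; ring
    rw [htk, htk1]
    match_scalars <;> field_simp <;> ring
  
lemma svran_all {M : H → Set H} (hM : SVDiss 𝕜 M) (h1 : SVRan 𝕜 M 1) :
    ∀ t : ℝ, 0 < t → SVRan 𝕜 M t := by
  have key : ∀ n : ℕ, ∀ t : ℝ, (2 / 3 : ℝ) ^ n ≤ t → SVRan 𝕜 M t := by
    intro n
    induction n with
    | zero =>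
      intro t ht
      rw [pow_zero] at ht
      exact svran_shift hM one_pos (lt_of_lt_of_le one_pos ht) (by linarith) h1
    | succ n ih =>
      intro t ht
      have hp : (0 : ℝ) < (2 / 3 : ℝ) ^ (n + 1) := by positivity
      have ht0 : 0 < t := lt_of_lt_of_le hp ht
      have hih : (2 / 3 : ℝ) ^ n ≤ 3 / 2 * t := by
        rw [pow_succ] at ht; nlinarith
      exact svran_shift hM (by linarith : (0:ℝ) < 3 / 2 * t) ht0 (by linarith)
        (ih (3 / 2 * t) hih)
  intro t ht
  obtain ⟨n, hn⟩ := exists_pow_lt_of_lt_one ht (by norm_num : (2 / 3 : ℝ) < 1)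
  exact key n t hn.le

/-- Perturbation of an m-dissipative map by a dissipative Lipschitz (single-valued) map. -/
lemma svran_perturb {M : H → Set H} (hM : SVDiss 𝕜 M) (h1 : SVRan 𝕜 M 1)
    (L : H → H) (c : ℝ) (hc : 0 ≤ c)
    (hL0 : ∀ p p' : H, RCLike.re ⟪L p - L p', p - p'⟫ ≤ 0)
    (hLl : ∀ p p' : H, ‖L p - L p'‖ ≤ c * ‖p - p'‖) :
    ∀ f : H, ∃ p q : H, (∃ y ∈ M p, q = y + L p) ∧ p - q = f := by
  haveI : Nonempty H := ⟨0⟩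
  set M' : H → Set H := fun p => {q | ∃ y ∈ M p, q = y + L p} with hM'def
  have hM'd : SVDiss 𝕜 M' := by
    intro p p' q q' hq hq'
    obtain ⟨y, hy, rfl⟩ := hq
    obtain ⟨y', hy', rfl⟩ := hq'
    have hsplit : (y + L p) - (y' + L p') = (y - y') + (L p - L p') := by abel
    rw [hsplit, inner_add_left, map_add]
    have h1' := hM p p' y y' hy hy'
    have h2' := hL0 p p'
    linarith
  set l : ℝ := 1 / (2 * (c + 1)) with hldef
  have hl0 : 0 < l := by rw [hldef]; positivity
  have hl2 : l < 2 := by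
    rw [hldef]
    rw [div_lt_iff₀ (by positivity)]
    nlinarith
  have hlc : l * c ≤ 1 / 2 := by
    rw [hldef, div_mul_eq_mul_div, one_mul, div_le_div_iff₀ (by positivity) (by norm_num)]
    nlinarith
  have hrl : SVRan 𝕜 M l := svran_all hM h1 l hl0
  have hr' : SVRan 𝕜 M' l := by
    intro f
    choose J Y hY hJ using hrl
    have hJne : ∀ u v : H, ‖J u - J v‖ ≤ ‖u - v‖ := by
      intro u v
      have h := svdiss_nonexp hM hl0.le (hY u) (hY v)
      rwa [hJ u, hJ v] at h
    set g : H → H := fun x => J (f + ((l : ℝ) : 𝕜) • L x) with hg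
    have hlip : LipschitzWith (1 / 2 : NNReal) g := by
      apply LipschitzWith.of_dist_le_mul
      intro x y
      rw [dist_eq_norm, dist_eq_norm]
      have h1' : ‖g x - g y‖ ≤ ‖(f + ((l : ℝ) : 𝕜) • L x) - (f + ((l : ℝ) : 𝕜) • L y)‖ :=
        hJne _ _
      have h2' : (f + ((l : ℝ) : 𝕜) • L x) - (f + ((l : ℝ) : 𝕜) • L y)
          = ((l : ℝ) : 𝕜) • (L x - L y) := by rw [smul_sub]; abel
      rw [h2', norm_smul, RCLike.norm_ofReal, abs_of_pos hl0] at h1'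
      have h3' : l * ‖L x - L y‖ ≤ l * (c * ‖x - y‖) :=
        mul_le_mul_of_nonneg_left (hLl x y) hl0.le
      have h4' : l * (c * ‖x - y‖) ≤ 1 / 2 * ‖x - y‖ := by
        have := norm_nonneg (x - y)
        nlinarith
      have : ‖g x - g y‖ ≤ 1 / 2 * ‖x - y‖ := by linarith
      calc ‖g x - g y‖ ≤ 1 / 2 * ‖x - y‖ := this
        _ = ((1 / 2 : NNReal) : ℝ) * ‖x - y‖ := by norm_num
    have hC : ContractingWith (1 / 2 : NNReal) g := ⟨by rw [← NNReal.coe_lt_coe]; norm_num, hlip⟩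
    set x := ContractingWith.fixedPoint g hC with hxdef
    have hx : g x = x := hC.fixedPoint_isFixedPt
    set u : H := f + ((l : ℝ) : 𝕜) • L x with hu
    have hJu : J u = x := hx
    refine ⟨x, Y u + L x, ⟨Y u, ?_, rfl⟩, ?_⟩
    · have h := hY u; rwa [hJu] at h
    · have he : x - ((l : ℝ) : 𝕜) • Y u = u := by
        rw [← hJu]; exact hJ u
      rw [smul_add]
      have h5 : x - (((l : ℝ) : 𝕜) • Y u + ((l : ℝ) : 𝕜) • L x)
          = (x - ((l : ℝ) : 𝕜) • Y u) - ((l : ℝ) : 𝕜) • L x := by abel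
      rw [h5, he, hu, add_sub_cancel_right]
  have hfin : SVRan 𝕜 M' 1 := svran_shift hM'd hl0 one_pos (by linarith) hr'
  intro f
  obtain ⟨p, q, hq, hpq⟩ := hfin f
  refine ⟨p, q, hq, ?_⟩
  rw [← hpq]
  norm_num

end AbstractMDiss

/-- collocated controller construction, Example 6.1.
If `A_c` is m-dissipative, `-D_c` is m-dissipative with `D(D_c) = U`, and `B_c` is a bounded
linear operator with adjoint `B_c*`, then
`M_c(x_c, u) = {(z + B_c u, -B_c* x_c - w) : z ∈ A_c x_c, w ∈ D_c u}` is m-dissipative on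
the product Hilbert space `X_c × U`. -/
theorem stmt_8 {𝕜 : Type*} [RCLike 𝕜]
    {Xc U : Type*} [NormedAddCommGroup Xc] [InnerProductSpace 𝕜 Xc] [CompleteSpace Xc]
    [NormedAddCommGroup U] [InnerProductSpace 𝕜 U] [CompleteSpace U]
    (Ac : Xc → Set Xc)
    (hAc_diss : ∀ x x' z z', z ∈ Ac x → z' ∈ Ac x' →
      RCLike.re (inner 𝕜 (z - z') (x - x') : 𝕜) ≤ 0)
    (hAc_ran : ∀ f : Xc, ∃ x z, z ∈ Ac x ∧ x - z = f)
    (Dc : U → Set U)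
    (hDc_dom : ∀ u : U, (Dc u).Nonempty)
    (hDc_diss : ∀ u u' w w', w ∈ Dc u → w' ∈ Dc u' →
      RCLike.re (inner 𝕜 ((-w) - (-w')) (u - u') : 𝕜) ≤ 0)
    (hDc_ran : ∀ f : U, ∃ u w, w ∈ Dc u ∧ u + w = f)
    (Bc : U →L[𝕜] Xc)
    (Mc : Xc × U → Set (Xc × U))
    (hMc : ∀ p : Xc × U, Mc p =
      {q : Xc × U | ∃ z ∈ Ac p.1, ∃ w ∈ Dc p.2,
        q = (z + Bc p.2, -(ContinuousLinearMap.adjoint Bc) p.1 - w)}) :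
    (∀ (p p' q q' : Xc × U), q ∈ Mc p → q' ∈ Mc p' →
      RCLike.re (inner 𝕜 (q.1 - q'.1) (p.1 - p'.1) : 𝕜)
        + RCLike.re (inner 𝕜 (q.2 - q'.2) (p.2 - p'.2) : 𝕜) ≤ 0) ∧
    (∀ f : Xc × U, ∃ p q : Xc × U, q ∈ Mc p ∧ p - q = f) := by
  classical
  set B' := ContinuousLinearMap.adjoint Bc with hB'
  constructor
  · -- dissipativity
    intro p p' q q' hq hq'
    rw [hMc] at hq hq'
    obtain ⟨z, hz, w, hw, rfl⟩ := hq
    obtain ⟨z', hz', w', hw', rfl⟩ := hq'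
    simp only
    have e1 : (z + Bc p.2) - (z' + Bc p'.2) = (z - z') + Bc (p.2 - p'.2) := by
      rw [map_sub]; abel
    have e2 : (-B' p.1 - w) - (-B' p'.1 - w') = ((-w) - (-w')) + (-(B' (p.1 - p'.1))) := by
      rw [map_sub]; abel
    rw [e1, e2, inner_add_left, inner_add_left, map_add, map_add]
    have hA := hAc_diss _ _ _ _ hz hz'
    have hD := hDc_diss _ _ _ _ hw hw'
    have hcancel : RCLike.re (inner 𝕜 (Bc (p.2 - p'.2)) (p.1 - p'.1) : 𝕜)
        + RCLike.re (inner 𝕜 (-(B' (p.1 - p'.1))) (p.2 - p'.2) : 𝕜) = 0 := by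
      rw [inner_neg_left, map_neg, hB', ContinuousLinearMap.adjoint_inner_left,
        inner_re_symm]
      ring
    linarith
  · -- range condition
    set H := WithLp 2 (Xc × U)
    set M : H → Set H := fun p => {q : H | q.fst ∈ Ac p.fst ∧ -q.snd ∈ Dc p.snd} with hMdef
    set L : H → H := fun p => WithLp.toLp 2 ((Bc p.snd, -B' p.fst) : Xc × U) with hLdef
    have hMd : SVDiss 𝕜 M := by
      intro x x' y y' hy hy'
      have hAd := hAc_diss _ _ _ _ hy.1 hy'.1
      have hDd := hDc_diss _ _ _ _ hy.2 hy'.2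
      rw [neg_neg, neg_neg] at hDd
      calc RCLike.re (inner 𝕜 (y - y') (x - x') : 𝕜)
          = RCLike.re (inner 𝕜 (y.fst - y'.fst) (x.fst - x'.fst) : 𝕜)
            + RCLike.re (inner 𝕜 (y.snd - y'.snd) (x.snd - x'.snd) : 𝕜) := by
            rw [WithLp.prod_inner_apply, WithLp.ofLp_fst, WithLp.ofLp_snd, WithLp.ofLp_fst,
              WithLp.ofLp_snd, map_add, WithLp.sub_fst, WithLp.sub_snd,
              WithLp.sub_fst, WithLp.sub_snd]
        _ ≤ 0 := by linarith
    have hM1 : SVRan 𝕜 M 1 := by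
      intro f
      obtain ⟨x, z, hz, hxz⟩ := hAc_ran f.fst
      obtain ⟨u, w, hw, huw⟩ := hDc_ran f.snd
      refine ⟨WithLp.toLp 2 ((x, u) : Xc × U), WithLp.toLp 2 ((z, -w) : Xc × U), ⟨hz, by simpa using hw⟩, ?_⟩
      have h1 : (((1 : ℝ)) : 𝕜) = (1 : 𝕜) := by norm_num
      rw [h1, one_smul]
      have : WithLp.toLp 2 ((x, u) : Xc × U) - WithLp.toLp 2 ((z, -w) : Xc × U)
          = WithLp.toLp 2 ((x - z, u + w) : Xc × U) := by
        rw [← WithLp.toLp_sub, Prod.mk_sub_mk, sub_neg_eq_add]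
      rw [this, hxz, huw]
      rfl
    have hL0 : ∀ p p' : H, RCLike.re (inner 𝕜 (L p - L p') (p - p') : 𝕜) ≤ 0 := by
      intro p p'
      have hfst : (L p - L p').fst = Bc (p.snd - p'.snd) := by
        rw [WithLp.sub_fst, map_sub]; rfl
      have hsnd : (L p - L p').snd = -(B' (p.fst - p'.fst)) := by
        rw [WithLp.sub_snd, map_sub]
        show -B' p.fst - -B' p'.fst = _
        abel
      rw [WithLp.prod_inner_apply, WithLp.ofLp_fst, WithLp.ofLp_snd, WithLp.ofLp_fst,
        WithLp.ofLp_snd, map_add, hfst, hsnd, WithLp.sub_fst, WithLp.sub_snd,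
        inner_neg_left, map_neg, hB', ContinuousLinearMap.adjoint_inner_left, inner_re_symm]
      simp
    have hLl : ∀ p p' : H, ‖L p - L p'‖ ≤ ‖Bc‖ * ‖p - p'‖ := by
      intro p p'
      have hfst : (L p - L p').fst = Bc (p.snd - p'.snd) := by
        rw [WithLp.sub_fst, map_sub]; rfl
      have hsnd : (L p - L p').snd = -(B' (p.fst - p'.fst)) := by
        rw [WithLp.sub_snd, map_sub]
        show -B' p.fst - -B' p'.fst = _
        abel
      have h1 : ‖L p - L p'‖ ^ 2 = ‖Bc (p.snd - p'.snd)‖ ^ 2 + ‖B' (p.fst - p'.fst)‖ ^ 2 := by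
        rw [WithLp.prod_norm_sq_eq_of_L2, hfst, hsnd, norm_neg]
      have h2 : ‖p - p'‖ ^ 2 = ‖p.fst - p'.fst‖ ^ 2 + ‖p.snd - p'.snd‖ ^ 2 := by
        rw [WithLp.prod_norm_sq_eq_of_L2, WithLp.sub_fst, WithLp.sub_snd]
      have hb1 : ‖Bc (p.snd - p'.snd)‖ ≤ ‖Bc‖ * ‖p.snd - p'.snd‖ := Bc.le_opNorm _
      have hb2 : ‖B' (p.fst - p'.fst)‖ ≤ ‖Bc‖ * ‖p.fst - p'.fst‖ := by
        have hn : ‖B'‖ = ‖Bc‖ := by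
          rw [hB']; exact (ContinuousLinearMap.adjoint : (U →L[𝕜] Xc) ≃ₗᵢ⋆[𝕜] _).norm_map Bc
        rw [← hn]; exact B'.le_opNorm _
      have hb1sq := pow_le_pow_left₀ (norm_nonneg _) hb1 2
      have hb2sq := pow_le_pow_left₀ (norm_nonneg _) hb2 2
      rw [mul_pow] at hb1sq hb2sq
      have hfinal : ‖L p - L p'‖ ^ 2 ≤ (‖Bc‖ * ‖p - p'‖) ^ 2 := by
        have e : (‖Bc‖ * ‖p - p'‖) ^ 2
            = ‖Bc‖ ^ 2 * ‖p.fst - p'.fst‖ ^ 2 + ‖Bc‖ ^ 2 * ‖p.snd - p'.snd‖ ^ 2 := by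
          rw [mul_pow, h2]; ring
        rw [h1, e]; linarith
      nlinarith [hfinal, norm_nonneg (L p - L p'),
        mul_nonneg (norm_nonneg Bc) (norm_nonneg (p - p'))]
    have main := svran_perturb hMd hM1 L ‖Bc‖ (norm_nonneg _) hL0 hLl
    intro f
    obtain ⟨p, q, ⟨y, hy, rfl⟩, hpq⟩ := main (WithLp.toLp 2 f)
    refine ⟨((p.fst, p.snd) : Xc × U), ((y.fst + Bc p.snd, -B' p.fst - (-y.snd)) : Xc × U), ?_, ?_⟩
    · rw [hMc]
      exact ⟨y.fst, hy.1, -y.snd, hy.2, rfl⟩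
    · have h1 : (y + L p).fst = y.fst + Bc p.snd := by
        rw [WithLp.add_fst]; rfl
      have h2 : (y + L p).snd = -B' p.fst - (-y.snd) := by
        rw [WithLp.add_snd]
        show y.snd + -B' p.fst = _
        abel
      have hc1 : p.fst - (y + L p).fst = f.1 := by
        have := congrArg WithLp.fst hpq
        rwa [WithLp.sub_fst, WithLp.toLp_fst] at this
      have hc2 : p.snd - (y + L p).snd = f.2 := by
        have := congrArg WithLp.snd hpq
        rwa [WithLp.sub_snd, WithLp.toLp_snd] at this
      rw [h1] at hc1
      rw [h2] at hc2
      exact Prod.ext hc1 hc2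
end

section
/- Let d ∈ ℕ, let P₁ be an invertible symmetric real d × d matrix, let P₀ be a real d × d matrix, and let ℋ : [0,1] → Matrix (Fin d) (Fin d) ℝ be continuously differentiable with ℋ(ζ) symmetric and m₀ I ≤ ℋ(ζ) ≤ M₀ I for some 0 < m₀ ≤ M₀ and all ζ ∈ [0,1]. Let κ > 0. Then there exist M ≥ 1 and ω < 0, depending only on P₁, P₀, ℋ and κ, such that the following holds: for every continuously differentiable function x : [0,∞) × [0,1] → ℝ^d satisfying the partial differential equation ∂x/∂t (t,ζ) = P₁ ∂(ℋx)/∂ζ (t,ζ) + P₀ ℋ(ζ) x(t,ζ) on [0,∞) × [0,1] and satisfying the boundary dissipation estimate (d/dt) (1/2)∫₀¹ x(t,ζ)ᵀ ℋ(ζ) x(t,ζ) dζ ≤ −κ · x(t,1)ᵀ ℋ(1) x(t,1) for all t ≥ 0, one has ∫₀¹ x(t,ζ)ᵀ ℋ(ζ) x(t,ζ) dζ ≤ M e^{ωt} ∫₀¹ x(0,ζ)ᵀ ℋ(ζ) x(0,ζ) dζ for all t ≥ 0. -/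
open scoped Matrix
open MeasureTheory Set

namespace Stmt9Aux

variable {d : ℕ}

/-- Product rule for dot products of curves. -/
lemma hasDerivWithinAt_dot {u v : ℝ → Fin d → ℝ} {u' v' : Fin d → ℝ} {s : Set ℝ} {z : ℝ}
    (hu : ∀ i, HasDerivWithinAt (fun z => u z i) (u' i) s z)
    (hv : ∀ i, HasDerivWithinAt (fun z => v z i) (v' i) s z) :
    HasDerivWithinAt (fun z => u z ⬝ᵥ v z) (u' ⬝ᵥ v z + u z ⬝ᵥ v') s z := by
  have h : HasDerivWithinAt (fun z => ∑ i, u z i * v z i)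
      (∑ i, (u' i * v z i + u z i * v' i)) s z :=
    HasDerivWithinAt.fun_sum (fun i _ => (hu i).mul (hv i))
  simpa [dotProduct, Finset.sum_add_distrib] using h

lemma abs_le_sqrt_dot (v : Fin d → ℝ) (j : Fin d) : |v j| ≤ Real.sqrt (v ⬝ᵥ v) := by
  have h1 : v j ^ 2 ≤ v ⬝ᵥ v := by
    have : v ⬝ᵥ v = ∑ i, v i * v i := rfl
    rw [this]
    have h2 := Finset.single_le_sum (f := fun i => v i * v i)
      (fun i _ => mul_self_nonneg (v i)) (Finset.mem_univ j)
    simpa [sq] using h2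
  calc |v j| = Real.sqrt (v j ^ 2) := (Real.sqrt_sq_eq_abs _).symm
  _ ≤ Real.sqrt (v ⬝ᵥ v) := Real.sqrt_le_sqrt h1

lemma dot_self_nonneg (v : Fin d → ℝ) : 0 ≤ v ⬝ᵥ v :=
  Finset.sum_nonneg fun i _ => mul_self_nonneg (v i)

/-- Crude bound `|(A v) ⬝ u| ≤ (∑ |Aᵢⱼ|) √(v⬝v) √(u⬝u)`. -/
lemma abs_mulVec_dot_le (A : Matrix (Fin d) (Fin d) ℝ) (v u : Fin d → ℝ) :
    |(A *ᵥ v) ⬝ᵥ u| ≤ (∑ i, ∑ j, |A i j|) * (Real.sqrt (v ⬝ᵥ v) * Real.sqrt (u ⬝ᵥ u)) := by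
  have hexp : (A *ᵥ v) ⬝ᵥ u = ∑ i, ∑ j, A i j * v j * u i := by
    simp [dotProduct, Matrix.mulVec, Finset.sum_mul]
  rw [hexp]
  calc |∑ i, ∑ j, A i j * v j * u i| ≤ ∑ i, ∑ j, |A i j * v j * u i| := by
        refine (Finset.abs_sum_le_sum_abs _ _).trans ?_
        exact Finset.sum_le_sum fun i _ => Finset.abs_sum_le_sum_abs _ _
  _ ≤ ∑ i, ∑ j, |A i j| * (Real.sqrt (v ⬝ᵥ v) * Real.sqrt (u ⬝ᵥ u)) := by
        refine Finset.sum_le_sum fun i _ => Finset.sum_le_sum fun j _ => ?_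
        rw [abs_mul, abs_mul]
        have h1 := abs_le_sqrt_dot v j
        have h2 := abs_le_sqrt_dot u i
        have := mul_le_mul (mul_le_mul_of_nonneg_left h1 (abs_nonneg (A i j))) h2
          (abs_nonneg _) (by positivity)
        calc |A i j| * |v j| * |u i| ≤ |A i j| * Real.sqrt (v ⬝ᵥ v) * Real.sqrt (u ⬝ᵥ u) := this
        _ = |A i j| * (Real.sqrt (v ⬝ᵥ v) * Real.sqrt (u ⬝ᵥ u)) := by ring
  _ = (∑ i, ∑ j, |A i j|) * (Real.sqrt (v ⬝ᵥ v) * Real.sqrt (u ⬝ᵥ u)) := by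
        rw [Finset.sum_mul]
        exact Finset.sum_congr rfl fun i _ => (Finset.sum_mul _ _ _).symm

/-- `(Av)⬝(Av) ≤ (∑|Aᵢⱼ|)² (v⬝v)`. -/
lemma mulVec_dot_self_le (A : Matrix (Fin d) (Fin d) ℝ) (v : Fin d → ℝ) :
    (A *ᵥ v) ⬝ᵥ (A *ᵥ v) ≤ (∑ i, ∑ j, |A i j|)^2 * (v ⬝ᵥ v) := by
  have h := abs_mulVec_dot_le A v (A *ᵥ v)
  set N := ∑ i, ∑ j, |A i j| with hN
  have hN0 : 0 ≤ N := Finset.sum_nonneg fun i _ => Finset.sum_nonneg fun j _ => abs_nonneg _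
  set a := Real.sqrt ((A *ᵥ v) ⬝ᵥ (A *ᵥ v)) with ha
  set b := Real.sqrt (v ⬝ᵥ v) with hb
  have ha2 : a^2 = (A *ᵥ v) ⬝ᵥ (A *ᵥ v) := Real.sq_sqrt (dot_self_nonneg _)
  have hb2 : b^2 = v ⬝ᵥ v := Real.sq_sqrt (dot_self_nonneg _)
  have ha0 : 0 ≤ a := Real.sqrt_nonneg _
  have hb0 : 0 ≤ b := Real.sqrt_nonneg _
  have key : a^2 ≤ N * (b * a) := by
    rw [ha2]
    calc (A *ᵥ v) ⬝ᵥ (A *ᵥ v) ≤ |(A *ᵥ v) ⬝ᵥ (A *ᵥ v)| := le_abs_self _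
    _ ≤ N * (b * a) := h
  have : a ≤ N * b := by
    rcases eq_or_lt_of_le ha0 with h0 | h0
    · rw [← h0]; positivity
    · nlinarith
  calc (A *ᵥ v) ⬝ᵥ (A *ᵥ v) = a^2 := ha2.symm
  _ ≤ (N*b)^2 := by nlinarith
  _ = N^2 * (v ⬝ᵥ v) := by rw [mul_pow, hb2]

/-- `ContDiffOn` of the determinant of a matrix of `ContDiffOn` entries. -/
lemma contDiffOn_det {A : ℝ → Matrix (Fin d) (Fin d) ℝ} {s : Set ℝ}
    (h : ∀ i j, ContDiffOn ℝ 1 (fun z => A z i j) s) :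
    ContDiffOn ℝ 1 (fun z => (A z).det) s := by
  have hdet : ∀ z, (A z).det
      = ∑ σ : Equiv.Perm (Fin d), ((Equiv.Perm.sign σ : ℤ) : ℝ) * ∏ i, A z (σ i) i := by
    intro z
    rw [Matrix.det_apply]
    congr 1
    ext σ
    rw [Units.smul_def, zsmul_eq_mul]
  simp only [hdet]
  refine ContDiffOn.sum fun σ _ => ContDiffOn.mul contDiffOn_const ?_
  exact contDiffOn_prod fun i _ => h (σ i) i

/-- `ContDiffOn` of the entries of the inverse of a matrix of `ContDiffOn` entries. -/
lemma contDiffOn_inv_entry {A : ℝ → Matrix (Fin d) (Fin d) ℝ} {s : Set ℝ}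
    (h : ∀ i j, ContDiffOn ℝ 1 (fun z => A z i j) s)
    (hdet : ∀ z ∈ s, (A z).det ≠ 0) (i j : Fin d) :
    ContDiffOn ℝ 1 (fun z => (A z)⁻¹ i j) s := by
  have hentry : ∀ z, (A z)⁻¹ i j = ((A z).det)⁻¹ * (A z).adjugate i j := by
    intro z
    rw [Matrix.inv_def, Matrix.smul_apply, Ring.inverse_eq_inv', smul_eq_mul]
  simp only [hentry]
  refine ContDiffOn.mul ((contDiffOn_det h).inv hdet) ?_
  have hadj : ∀ z, (A z).adjugate i j = ((A z).updateRow j (Pi.single i 1)).det := by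
    intro z; rw [Matrix.adjugate_apply]
  simp only [hadj]
  refine contDiffOn_det fun i' j' => ?_
  by_cases hij : i' = j
  · subst hij
    simp only [Matrix.updateRow_self]
    exact contDiffOn_const
  · simp only [Matrix.updateRow_apply, if_neg hij]
    exact h i' j'


lemma contOn_dot {α : Type} [TopologicalSpace α] {s : Set α} {u v : α → Fin d → ℝ}
    (hu : ∀ i, ContinuousOn (fun a => u a i) s) (hv : ∀ i, ContinuousOn (fun a => v a i) s) :
    ContinuousOn (fun a => u a ⬝ᵥ v a) s := by
  have h : ∀ a, u a ⬝ᵥ v a = ∑ i, u a i * v a i := fun a => rfl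
  simp only [h]
  exact continuousOn_finset_sum _ fun i _ => (hu i).mul (hv i)

lemma det_ne_zero_of_posdef {A : Matrix (Fin d) (Fin d) ℝ} {m₀ : ℝ} (hm₀ : 0 < m₀)
    (h : ∀ v : Fin d → ℝ, m₀ * (v ⬝ᵥ v) ≤ v ⬝ᵥ (A *ᵥ v)) : A.det ≠ 0 := by
  intro h0
  obtain ⟨v, hv0, hAv⟩ := Matrix.exists_mulVec_eq_zero_iff.2 h0
  have h1 := h v
  rw [hAv] at h1
  have h2 : v ⬝ᵥ (0 : Fin d → ℝ) = 0 := dotProduct_zero v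
  rw [h2] at h1
  have hvv : 0 < v ⬝ᵥ v := by
    rcases eq_or_lt_of_le (dot_self_nonneg v) with h3 | h3
    · exact absurd (dotProduct_self_eq_zero.mp h3.symm) hv0
    · exact h3
  nlinarith

lemma antitoneOn_of_hasDerivAt_nonpos {f f' : ℝ → ℝ} {s : Set ℝ} (hs : Convex ℝ s)
    (hc : ContinuousOn f s) (hd : ∀ t ∈ interior s, HasDerivAt f (f' t) t)
    (h0 : ∀ t ∈ interior s, f' t ≤ 0) : AntitoneOn f s := by
  refine antitoneOn_of_deriv_nonpos hs hc
    (fun t ht => (hd t ht).differentiableAt.differentiableWithinAt) (fun t ht => ?_)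
  rw [(hd t ht).deriv]; exact h0 t ht

lemma monotoneOn_of_hasDerivAt_nonneg {f f' : ℝ → ℝ} {s : Set ℝ} (hs : Convex ℝ s)
    (hc : ContinuousOn f s) (hd : ∀ t ∈ interior s, HasDerivAt f (f' t) t)
    (h0 : ∀ t ∈ interior s, 0 ≤ f' t) : MonotoneOn f s := by
  refine monotoneOn_of_deriv_nonneg hs hc
    (fun t ht => (hd t ht).differentiableAt.differentiableWithinAt) (fun t ht => ?_)
  rw [(hd t ht).deriv]; exact h0 t ht

/-- Continuity of a parametric interval integral of a jointly continuous function. -/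
lemma contOn_param {f : ℝ → ℝ → ℝ} {a b c e : ℝ} (hab : a ≤ b)
    (hf : ContinuousOn (fun p : ℝ × ℝ => f p.1 p.2) (Icc a b ×ˢ Icc c e)) :
    ContinuousOn (fun ζ => ∫ t in a..b, f t ζ) (Icc c e) := by
  obtain ⟨Cb, hCb⟩ := (IsCompact.prod isCompact_Icc isCompact_Icc).exists_bound_of_continuousOn hf
  intro ζ₀ hζ₀
  have hIoc : uIoc a b = Ioc a b := uIoc_of_le hab
  refine intervalIntegral.continuousWithinAt_of_dominated_interval
    (bound := fun _ => Cb) ?_ ?_ intervalIntegrable_const ?_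
  · filter_upwards [self_mem_nhdsWithin] with ζ hζ
    rw [hIoc]
    refine ContinuousOn.aestronglyMeasurable ?_ measurableSet_Ioc
    intro t ht
    have : ContinuousWithinAt (fun p : ℝ × ℝ => f p.1 p.2) (Icc a b ×ˢ Icc c e) (t, ζ) :=
      hf (t, ζ) ⟨Ioc_subset_Icc_self ht, hζ⟩
    have hmap : ContinuousWithinAt (fun t' : ℝ => ((t', ζ) : ℝ × ℝ)) (Ioc a b) t :=
      (continuous_id.prodMk continuous_const).continuousWithinAt
    exact ContinuousWithinAt.comp (f := fun t' : ℝ => ((t', ζ) : ℝ × ℝ)) this hmap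
      (fun y hy => ⟨Ioc_subset_Icc_self hy, hζ⟩)
  · filter_upwards [self_mem_nhdsWithin] with ζ hζ
    filter_upwards with t
    intro ht
    rw [hIoc] at ht
    exact hCb (t, ζ) ⟨Ioc_subset_Icc_self ht, hζ⟩
  · filter_upwards with t
    intro ht
    rw [hIoc] at ht
    have : ContinuousWithinAt (fun p : ℝ × ℝ => f p.1 p.2) (Icc a b ×ˢ Icc c e) (t, ζ₀) :=
      hf (t, ζ₀) ⟨Ioc_subset_Icc_self ht, hζ₀⟩
    have hmap : ContinuousWithinAt (fun ζ' : ℝ => ((t, ζ') : ℝ × ℝ)) (Icc c e) ζ₀ :=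
      (continuous_const.prodMk continuous_id).continuousWithinAt
    exact ContinuousWithinAt.comp (f := fun ζ' : ℝ => ((t, ζ') : ℝ × ℝ)) this hmap
      (fun y hy => ⟨Ioc_subset_Icc_self ht, hy⟩)

/-- Fubini for a jointly continuous function on a rectangle. -/
lemma fubini_param {f : ℝ → ℝ → ℝ} {a b c e : ℝ} (hab : a ≤ b) (hce : c ≤ e)
    (hf : ContinuousOn (fun p : ℝ × ℝ => f p.1 p.2) (Icc a b ×ˢ Icc c e)) :
    ∫ ζ in c..e, (∫ t in a..b, f t ζ) = ∫ t in a..b, (∫ ζ in c..e, f t ζ) := by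
  have hint : IntegrableOn (fun p : ℝ × ℝ => f p.2 p.1) (Ioc c e ×ˢ Ioc a b) volume := by
    have hcont : ContinuousOn (fun p : ℝ × ℝ => f p.2 p.1) (Icc c e ×ˢ Icc a b) := by
      have hswap : ContinuousOn (fun p : ℝ × ℝ => (p.2, p.1))
          ((Icc c e ×ˢ Icc a b : Set (ℝ × ℝ))) := (continuous_swap).continuousOn
      exact hf.comp hswap (fun p hp => ⟨hp.2, hp.1⟩)
    exact (hcont.integrableOn_compact (IsCompact.prod isCompact_Icc isCompact_Icc)).mono_set
      (prod_mono Ioc_subset_Icc_self Ioc_subset_Icc_self)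
  have hswap := MeasureTheory.integral_integral_swap (μ := volume.restrict (Ioc c e))
    (ν := volume.restrict (Ioc a b)) (f := fun ζ t => f t ζ) ?_
  · rw [intervalIntegral.integral_of_le hce, intervalIntegral.integral_of_le hab]
    calc ∫ ζ in Ioc c e, (∫ t in a..b, f t ζ)
        = ∫ ζ in Ioc c e, (∫ t in Ioc a b, f t ζ) := by
          refine setIntegral_congr_fun measurableSet_Ioc (fun ζ _ => ?_)
          rw [intervalIntegral.integral_of_le hab]
      _ = ∫ t in Ioc a b, (∫ ζ in Ioc c e, f t ζ) := hswap
      _ = ∫ t in Ioc a b, (∫ ζ in c..e, f t ζ) := by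
          refine setIntegral_congr_fun measurableSet_Ioc (fun t _ => ?_)
          rw [intervalIntegral.integral_of_le hce]
  · rw [Measure.prod_restrict, ← Measure.volume_eq_prod]
    exact hint




noncomputable section Defs

variable (d : ℕ) (P₁ : Matrix (Fin d) (Fin d) ℝ) (H K' : ℝ → Matrix (Fin d) (Fin d) ℝ)
  (x xt Hx' : ℝ → ℝ → Fin d → ℝ) (γ τ : ℝ)

/-- the energy density -/
def Q (t ζ : ℝ) : ℝ := x t ζ ⬝ᵥ (H ζ *ᵥ x t ζ)

/-- `w = ℋ x` -/
def W (t ζ : ℝ) : Fin d → ℝ := H ζ *ᵥ x t ζ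

/-- the spatial derivative of `x` -/
def XZ (t ζ : ℝ) : Fin d → ℝ := K' ζ *ᵥ W d H x t ζ + (H ζ)⁻¹ *ᵥ Hx' t ζ

/-- the spatial derivative of `Q` -/
def QZ (t ζ : ℝ) : ℝ := XZ d H K' x Hx' t ζ ⬝ᵥ W d H x t ζ + x t ζ ⬝ᵥ Hx' t ζ

/-- the auxiliary quadratic form `r = x ⬝ P₁⁻¹ x` -/
def Rr (t ζ : ℝ) : ℝ := x t ζ ⬝ᵥ (P₁⁻¹ *ᵥ x t ζ)

/-- the time derivative of `Rr` -/
def Rt (t ζ : ℝ) : ℝ := xt t ζ ⬝ᵥ (P₁⁻¹ *ᵥ x t ζ) + x t ζ ⬝ᵥ (P₁⁻¹ *ᵥ xt t ζ)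

/-- the energy -/
def Efun (t : ℝ) : ℝ := ∫ ζ in (0:ℝ)..1, Q d H x t ζ

/-- the time-integrated energy density -/
def Ff (ζ : ℝ) : ℝ := ∫ t in (0:ℝ)..τ, Q d H x t ζ

/-- the boundary inhomogeneity -/
def Bb (ζ : ℝ) : ℝ := γ * (Q d H x τ ζ + Q d H x 0 ζ)

end Defs


lemma key_step (d : ℕ)
    (P₁ P₀ : Matrix (Fin d) (Fin d) ℝ)
    (hP₁sym : P₁.transpose = P₁) (hP₁inv : IsUnit P₁.det)
    (H : ℝ → Matrix (Fin d) (Fin d) ℝ)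
    (hHsmooth : ∀ i j, ContDiffOn ℝ 1 (fun ζ => H ζ i j) (Icc (0:ℝ) 1))
    (hHsym : ∀ ζ ∈ Icc (0:ℝ) 1, (H ζ).transpose = H ζ)
    (m₀ : ℝ) (hm₀ : 0 < m₀)
    (hHbnd : ∀ ζ ∈ Icc (0:ℝ) 1, ∀ v : Fin d → ℝ, m₀ * (v ⬝ᵥ v) ≤ v ⬝ᵥ (H ζ *ᵥ v))
    (κ : ℝ) (hκ : 0 < κ)
    (K' : ℝ → Matrix (Fin d) (Fin d) ℝ)
    (hK'deriv : ∀ ζ ∈ Icc (0:ℝ) 1, ∀ i j,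
      HasDerivWithinAt (fun z => (H z)⁻¹ i j) (K' ζ i j) (Icc 0 1) ζ)
    (hK'cont : ∀ i j, ContinuousOn (fun ζ => K' ζ i j) (Icc (0:ℝ) 1))
    (γ c₂ τ : ℝ) (hγ0 : 0 ≤ γ) (hc₂0 : 0 ≤ c₂)
    (hγq : ∀ ζ ∈ Icc (0:ℝ) 1, ∀ v : Fin d → ℝ,
      |v ⬝ᵥ (P₁⁻¹ *ᵥ v)| ≤ γ * (v ⬝ᵥ (H ζ *ᵥ v)))
    (hc₂q : ∀ ζ ∈ Icc (0:ℝ) 1, ∀ v : Fin d → ℝ,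
      |(K' ζ *ᵥ (H ζ *ᵥ v)) ⬝ᵥ (H ζ *ᵥ v)
        - 2*(v ⬝ᵥ (P₁⁻¹ *ᵥ (P₀ *ᵥ (H ζ *ᵥ v))))| ≤ c₂ * (v ⬝ᵥ (H ζ *ᵥ v)))
    (hτ : 2*(Real.exp c₂ * (1/(2*κ) + 2*γ)) + 1 ≤ τ)
    (x xt Hx' : ℝ → ℝ → Fin d → ℝ)
    (hxc : ContinuousOn (fun p : ℝ × ℝ => x p.1 p.2) (Ici 0 ×ˢ Icc 0 1))
    (hxtc : ContinuousOn (fun p : ℝ × ℝ => xt p.1 p.2) (Ici 0 ×ˢ Icc 0 1))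
    (hHx'c : ContinuousOn (fun p : ℝ × ℝ => Hx' p.1 p.2) (Ici 0 ×ˢ Icc 0 1))
    (hxt : ∀ t ∈ Ici (0:ℝ), ∀ ζ ∈ Icc (0:ℝ) 1,
      HasDerivWithinAt (fun s => x s ζ) (xt t ζ) (Ici 0) t)
    (hwz : ∀ t ∈ Ici (0:ℝ), ∀ ζ ∈ Icc (0:ℝ) 1,
      HasDerivWithinAt (fun z => H z *ᵥ x t z) (Hx' t ζ) (Icc 0 1) ζ)
    (hPDE : ∀ t ∈ Ici (0:ℝ), ∀ ζ ∈ Icc (0:ℝ) 1,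
      xt t ζ = P₁ *ᵥ Hx' t ζ + P₀ *ᵥ (H ζ *ᵥ x t ζ))
    (hdiss : ∀ t ∈ Ici (0:ℝ), ∃ e : ℝ,
      HasDerivWithinAt
        (fun s => (1/2) * ∫ ζ in (0:ℝ)..1, x s ζ ⬝ᵥ (H ζ *ᵥ x s ζ)) e (Ici 0) t ∧
      e ≤ -κ * (x t 1 ⬝ᵥ (H 1 *ᵥ x t 1))) :
    Efun d H x τ ≤ (1/2) * Efun d H x 0 := by
  have h01 : (0:ℝ) ≤ 1 := zero_le_one
  have hexp_pos : 0 < Real.exp c₂ := Real.exp_pos _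
  have hC0 : 0 ≤ Real.exp c₂ * (1/(2*κ) + 2*γ) := by positivity
  have hτ1 : (1:ℝ) ≤ τ := by linarith
  have hτ0 : (0:ℝ) ≤ τ := by linarith
  have hτmem : τ ∈ Ici (0:ℝ) := hτ0
  have h0mem : (0:ℝ) ∈ Ici (0:ℝ) := Set.self_mem_Ici
  have h1mem : (1:ℝ) ∈ Icc (0:ℝ) 1 := ⟨h01, le_refl 1⟩
  -- nonnegativity of the energy density
  have hq0 : ∀ (t : ℝ), ∀ ζ ∈ Icc (0:ℝ) 1, 0 ≤ Q d H x t ζ := by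
    intro t ζ hζ
    have h1 := hHbnd ζ hζ (x t ζ)
    have h2 : 0 ≤ m₀ * (x t ζ ⬝ᵥ x t ζ) := mul_nonneg hm₀.le (dot_self_nonneg _)
    exact le_trans h2 h1
  -- continuity of the entries
  have hxci : ∀ i, ContinuousOn (fun p : ℝ × ℝ => x p.1 p.2 i) (Ici 0 ×ˢ Icc 0 1) :=
    fun i => (continuous_apply i).comp_continuousOn hxc
  have hxtci : ∀ i, ContinuousOn (fun p : ℝ × ℝ => xt p.1 p.2 i) (Ici 0 ×ˢ Icc 0 1) :=
    fun i => (continuous_apply i).comp_continuousOn hxtc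
  have hHx'ci : ∀ i, ContinuousOn (fun p : ℝ × ℝ => Hx' p.1 p.2 i) (Ici 0 ×ˢ Icc 0 1) :=
    fun i => (continuous_apply i).comp_continuousOn hHx'c
  have hHcont : ∀ i j, ContinuousOn (fun ζ => H ζ i j) (Icc (0:ℝ) 1) :=
    fun i j => (hHsmooth i j).continuousOn
  have hdet : ∀ ζ ∈ Icc (0:ℝ) 1, (H ζ).det ≠ 0 :=
    fun ζ hζ => det_ne_zero_of_posdef hm₀ (hHbnd ζ hζ)
  have hdetU : ∀ ζ ∈ Icc (0:ℝ) 1, IsUnit (H ζ).det :=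
    fun ζ hζ => isUnit_iff_ne_zero.mpr (hdet ζ hζ)
  have hKcont : ∀ i j, ContinuousOn (fun ζ => (H ζ)⁻¹ i j) (Icc (0:ℝ) 1) :=
    fun i j => (contDiffOn_inv_entry hHsmooth hdet i j).continuousOn
  -- lift ζ-continuity to the product
  have hlift : ∀ {g : ℝ → ℝ}, ContinuousOn g (Icc (0:ℝ) 1) →
      ContinuousOn (fun p : ℝ × ℝ => g p.2) (Ici 0 ×ˢ Icc 0 1) := by
    intro g hg
    exact ContinuousOn.comp (f := fun p : ℝ × ℝ => p.2) hg
      continuous_snd.continuousOn (fun p hp => hp.2)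
  -- basic matrix facts
  have hKw : ∀ (t : ℝ), ∀ ζ ∈ Icc (0:ℝ) 1, (H ζ)⁻¹ *ᵥ W d H x t ζ = x t ζ := by
    intro t ζ hζ
    show (H ζ)⁻¹ *ᵥ (H ζ *ᵥ x t ζ) = x t ζ
    rw [Matrix.mulVec_mulVec, Matrix.nonsing_inv_mul _ (hdetU ζ hζ), Matrix.one_mulVec]
  have hKsym : ∀ ζ ∈ Icc (0:ℝ) 1, ((H ζ)⁻¹)ᵀ = (H ζ)⁻¹ := by
    intro ζ hζ
    rw [Matrix.transpose_nonsing_inv, hHsym ζ hζ]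
  have hP₁invsym : (P₁⁻¹)ᵀ = P₁⁻¹ := by rw [Matrix.transpose_nonsing_inv, hP₁sym]
  -- componentwise continuity of W
  have hwci : ∀ i, ContinuousOn (fun p : ℝ × ℝ => W d H x p.1 p.2 i) (Ici 0 ×ˢ Icc 0 1) := by
    intro i
    have heq : (fun p : ℝ × ℝ => W d H x p.1 p.2 i)
        = fun p : ℝ × ℝ => ∑ j, H p.2 i j * x p.1 p.2 j := rfl
    rw [heq]
    exact continuousOn_finset_sum _ fun j _ => (hlift (hHcont i j)).mul (hxci j)
  have hqc : ContinuousOn (fun p : ℝ × ℝ => Q d H x p.1 p.2) (Ici 0 ×ˢ Icc 0 1) :=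
    contOn_dot (u := fun p : ℝ × ℝ => x p.1 p.2) (v := fun p : ℝ × ℝ => W d H x p.1 p.2)
      hxci hwci
  have hxzci : ∀ i, ContinuousOn (fun p : ℝ × ℝ => XZ d H K' x Hx' p.1 p.2 i)
      (Ici 0 ×ˢ Icc 0 1) := by
    intro i
    have heq : (fun p : ℝ × ℝ => XZ d H K' x Hx' p.1 p.2 i)
        = fun p : ℝ × ℝ => (∑ j, K' p.2 i j * W d H x p.1 p.2 j)
          + ∑ j, (H p.2)⁻¹ i j * Hx' p.1 p.2 j := rfl
    rw [heq]
    exact (continuousOn_finset_sum _ fun j _ => (hlift (hK'cont i j)).mul (hwci j)).add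
      (continuousOn_finset_sum _ fun j _ => (hlift (hKcont i j)).mul (hHx'ci j))
  have hqzc : ContinuousOn (fun p : ℝ × ℝ => QZ d H K' x Hx' p.1 p.2) (Ici 0 ×ˢ Icc 0 1) :=
    (contOn_dot (u := fun p : ℝ × ℝ => XZ d H K' x Hx' p.1 p.2)
        (v := fun p : ℝ × ℝ => W d H x p.1 p.2) hxzci hwci).add
      (contOn_dot (u := fun p : ℝ × ℝ => x p.1 p.2)
        (v := fun p : ℝ × ℝ => Hx' p.1 p.2) hxci hHx'ci)
  have hPxci : ∀ i, ContinuousOn (fun p : ℝ × ℝ => (P₁⁻¹ *ᵥ x p.1 p.2) i) (Ici 0 ×ˢ Icc 0 1) := by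
    intro i
    have heq : (fun p : ℝ × ℝ => (P₁⁻¹ *ᵥ x p.1 p.2) i)
        = fun p : ℝ × ℝ => ∑ j, P₁⁻¹ i j * x p.1 p.2 j := rfl
    rw [heq]
    exact continuousOn_finset_sum _ fun j _ => continuousOn_const.mul (hxci j)
  have hPxtci : ∀ i, ContinuousOn (fun p : ℝ × ℝ => (P₁⁻¹ *ᵥ xt p.1 p.2) i)
      (Ici 0 ×ˢ Icc 0 1) := by
    intro i
    have heq : (fun p : ℝ × ℝ => (P₁⁻¹ *ᵥ xt p.1 p.2) i)
        = fun p : ℝ × ℝ => ∑ j, P₁⁻¹ i j * xt p.1 p.2 j := rfl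
    rw [heq]
    exact continuousOn_finset_sum _ fun j _ => continuousOn_const.mul (hxtci j)
  have hrc : ContinuousOn (fun p : ℝ × ℝ => Rr d P₁ x p.1 p.2) (Ici 0 ×ˢ Icc 0 1) :=
    contOn_dot (u := fun p : ℝ × ℝ => x p.1 p.2)
      (v := fun p : ℝ × ℝ => P₁⁻¹ *ᵥ x p.1 p.2) hxci hPxci
  have hrtc : ContinuousOn (fun p : ℝ × ℝ => Rt d P₁ x xt p.1 p.2) (Ici 0 ×ˢ Icc 0 1) :=
    (contOn_dot (u := fun p : ℝ × ℝ => xt p.1 p.2)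
        (v := fun p : ℝ × ℝ => P₁⁻¹ *ᵥ x p.1 p.2) hxtci hPxci).add
      (contOn_dot (u := fun p : ℝ × ℝ => x p.1 p.2)
        (v := fun p : ℝ × ℝ => P₁⁻¹ *ᵥ xt p.1 p.2) hxci hPxtci)
  -- slices
  have hsliceT : ∀ {g : ℝ × ℝ → ℝ}, ContinuousOn g (Ici 0 ×ˢ Icc 0 1) →
      ∀ ζ ∈ Icc (0:ℝ) 1, ContinuousOn (fun t => g (t, ζ)) (Ici 0) := by
    intro g hg ζ hζ
    exact ContinuousOn.comp (f := fun t : ℝ => ((t, ζ) : ℝ × ℝ)) hg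
      (continuous_id.prodMk continuous_const).continuousOn (fun t' ht' => ⟨ht', hζ⟩)
  have hsliceZ : ∀ {g : ℝ × ℝ → ℝ}, ContinuousOn g (Ici 0 ×ˢ Icc 0 1) →
      ∀ t ∈ Ici (0:ℝ), ContinuousOn (fun ζ => g (t, ζ)) (Icc (0:ℝ) 1) := by
    intro g hg t ht
    exact ContinuousOn.comp (f := fun ζ : ℝ => ((t, ζ) : ℝ × ℝ)) hg
      (continuous_const.prodMk continuous_id).continuousOn (fun ζ' hζ' => ⟨ht, hζ'⟩)
  -- componentwise derivatives
  have hxti : ∀ t ∈ Ici (0:ℝ), ∀ ζ ∈ Icc (0:ℝ) 1, ∀ i,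
      HasDerivWithinAt (fun s => x s ζ i) (xt t ζ i) (Ici 0) t :=
    fun t ht ζ hζ i => hasDerivWithinAt_pi.1 (hxt t ht ζ hζ) i
  have hwzi : ∀ t ∈ Ici (0:ℝ), ∀ ζ ∈ Icc (0:ℝ) 1, ∀ i,
      HasDerivWithinAt (fun z => W d H x t z i) (Hx' t ζ i) (Icc 0 1) ζ :=
    fun t ht ζ hζ i => hasDerivWithinAt_pi.1 (hwz t ht ζ hζ) i
  have hxzi : ∀ t ∈ Ici (0:ℝ), ∀ ζ ∈ Icc (0:ℝ) 1, ∀ i,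
      HasDerivWithinAt (fun z => x t z i) (XZ d H K' x Hx' t ζ i) (Icc 0 1) ζ := by
    intro t ht ζ hζ i
    have h1 : HasDerivWithinAt (fun z => (fun j => (H z)⁻¹ i j) ⬝ᵥ W d H x t z)
        ((fun j => K' ζ i j) ⬝ᵥ W d H x t ζ + (fun j => (H ζ)⁻¹ i j) ⬝ᵥ Hx' t ζ)
        (Icc 0 1) ζ :=
      hasDerivWithinAt_dot (u := fun z => fun j => (H z)⁻¹ i j)
        (v := fun z => W d H x t z) (fun j => hK'deriv ζ hζ i j) (fun j => hwzi t ht ζ hζ j)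
    have h2 : ∀ z ∈ Icc (0:ℝ) 1, x t z i = (fun j => (H z)⁻¹ i j) ⬝ᵥ W d H x t z := by
      intro z hz
      have := congrFun (hKw t z hz) i
      exact this.symm
    exact (h1.congr h2 (h2 ζ hζ))
  have hqzd : ∀ t ∈ Ici (0:ℝ), ∀ ζ ∈ Icc (0:ℝ) 1,
      HasDerivWithinAt (fun z => Q d H x t z) (QZ d H K' x Hx' t ζ) (Icc 0 1) ζ := by
    intro t ht ζ hζ
    exact hasDerivWithinAt_dot (u := fun z => x t z) (v := fun z => W d H x t z)
      (fun i => hxzi t ht ζ hζ i) (fun i => hwzi t ht ζ hζ i)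
  have hrtd : ∀ ζ ∈ Icc (0:ℝ) 1, ∀ t ∈ Ici (0:ℝ),
      HasDerivWithinAt (fun s => Rr d P₁ x s ζ) (Rt d P₁ x xt t ζ) (Ici 0) t := by
    intro ζ hζ t ht
    have hv : ∀ i, HasDerivWithinAt (fun s => (P₁⁻¹ *ᵥ x s ζ) i) ((P₁⁻¹ *ᵥ xt t ζ) i)
        (Ici 0) t := by
      intro i
      have h1 : HasDerivWithinAt (fun s => (fun j => P₁⁻¹ i j) ⬝ᵥ x s ζ)
          ((0 : Fin d → ℝ) ⬝ᵥ x t ζ + (fun j => P₁⁻¹ i j) ⬝ᵥ xt t ζ) (Ici 0) t :=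
        hasDerivWithinAt_dot (u := fun _ => fun j => P₁⁻¹ i j) (v := fun s => x s ζ)
          (fun j => hasDerivWithinAt_const t _ _) (fun j => hxti t ht ζ hζ j)
      simp only [zero_dotProduct, zero_add] at h1
      exact h1
    exact hasDerivWithinAt_dot (u := fun s => x s ζ) (v := fun s => P₁⁻¹ *ᵥ x s ζ)
      (fun i => hxti t ht ζ hζ i) hv
  -- the pointwise algebraic identity
  have hsplit : ∀ t ∈ Ici (0:ℝ), ∀ ζ ∈ Icc (0:ℝ) 1,
      QZ d H K' x Hx' t ζ = Rt d P₁ x xt t ζ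
        + ((K' ζ *ᵥ W d H x t ζ) ⬝ᵥ W d H x t ζ
          - 2*(x t ζ ⬝ᵥ (P₁⁻¹ *ᵥ (P₀ *ᵥ W d H x t ζ)))) := by
    intro t ht ζ hζ
    have hw' : Hx' t ζ = P₁⁻¹ *ᵥ xt t ζ - P₁⁻¹ *ᵥ (P₀ *ᵥ W d H x t ζ) := by
      have h1 := hPDE t ht ζ hζ
      have h2 : P₁⁻¹ *ᵥ xt t ζ = Hx' t ζ + P₁⁻¹ *ᵥ (P₀ *ᵥ W d H x t ζ) := by
        rw [h1, Matrix.mulVec_add, Matrix.mulVec_mulVec,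
          Matrix.nonsing_inv_mul _ hP₁inv, Matrix.one_mulVec]
        rfl
      rw [h2, add_sub_cancel_right]
    have hKdot : ((H ζ)⁻¹ *ᵥ Hx' t ζ) ⬝ᵥ W d H x t ζ = x t ζ ⬝ᵥ Hx' t ζ := by
      rw [dotProduct_comm, Matrix.dotProduct_mulVec, ← hKsym ζ hζ,
        Matrix.vecMul_transpose, hKw t ζ hζ]
    have hPdot : xt t ζ ⬝ᵥ (P₁⁻¹ *ᵥ x t ζ) = x t ζ ⬝ᵥ (P₁⁻¹ *ᵥ xt t ζ) := by
      rw [Matrix.dotProduct_mulVec]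
      nth_rewrite 1 [← hP₁invsym]
      rw [Matrix.vecMul_transpose, dotProduct_comm]
    have hx1 : x t ζ ⬝ᵥ Hx' t ζ = x t ζ ⬝ᵥ (P₁⁻¹ *ᵥ xt t ζ)
        - x t ζ ⬝ᵥ (P₁⁻¹ *ᵥ (P₀ *ᵥ W d H x t ζ)) := by
      rw [hw', dotProduct_sub]
    show (K' ζ *ᵥ W d H x t ζ + (H ζ)⁻¹ *ᵥ Hx' t ζ) ⬝ᵥ W d H x t ζ + x t ζ ⬝ᵥ Hx' t ζ = _
    rw [add_dotProduct, hKdot, hx1]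
    show _ = xt t ζ ⬝ᵥ (P₁⁻¹ *ᵥ x t ζ) + x t ζ ⬝ᵥ (P₁⁻¹ *ᵥ xt t ζ) + _
    rw [hPdot]
    ring
  -- the pointwise estimates
  have hRle : ∀ t ∈ Ici (0:ℝ), ∀ ζ ∈ Icc (0:ℝ) 1,
      |QZ d H K' x Hx' t ζ - Rt d P₁ x xt t ζ| ≤ c₂ * Q d H x t ζ := by
    intro t ht ζ hζ
    have h1 : QZ d H K' x Hx' t ζ - Rt d P₁ x xt t ζ
        = (K' ζ *ᵥ W d H x t ζ) ⬝ᵥ W d H x t ζ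
          - 2*(x t ζ ⬝ᵥ (P₁⁻¹ *ᵥ (P₀ *ᵥ W d H x t ζ))) := by
      rw [hsplit t ht ζ hζ]; ring
    rw [h1]
    exact hc₂q ζ hζ (x t ζ)
  have hrle : ∀ (t : ℝ), ∀ ζ ∈ Icc (0:ℝ) 1, |Rr d P₁ x t ζ| ≤ γ * Q d H x t ζ :=
    fun t ζ hζ => hγq ζ hζ (x t ζ)
  -- global bound for QZ on the compact rectangle
  have hSR : (Icc (0:ℝ) τ ×ˢ Icc (0:ℝ) 1 : Set (ℝ × ℝ)) ⊆ Ici 0 ×ˢ Icc 0 1 :=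
    prod_mono Icc_subset_Ici_self (subset_refl _)
  obtain ⟨Cb, hCb⟩ := (isCompact_Icc.prod isCompact_Icc).exists_bound_of_continuousOn
    (hqzc.mono hSR)
  have hIoc : uIoc (0:ℝ) τ = Ioc 0 τ := uIoc_of_le hτ0
  have hIocIci : Ioc (0:ℝ) τ ⊆ Ici 0 := fun t ht => le_of_lt ht.1
  have hIccIci : Icc (0:ℝ) τ ⊆ Ici 0 := fun t ht => ht.1
  have huIcc : uIcc (0:ℝ) τ = Icc 0 τ := uIcc_of_le hτ0
  -- Leibniz rule
  have hFd : ∀ ζ₀ ∈ Ioo (0:ℝ) 1,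
      HasDerivAt (Ff d H x τ) (∫ t in (0:ℝ)..τ, QZ d H K' x Hx' t ζ₀) ζ₀ := by
    intro ζ₀ hζ₀
    have hε : 0 < min ζ₀ (1 - ζ₀) := lt_min hζ₀.1 (by linarith [hζ₀.2])
    have hballo : Metric.ball ζ₀ (min ζ₀ (1 - ζ₀)) ⊆ Ioo (0:ℝ) 1 := by
      intro y hy
      rw [Metric.mem_ball, Real.dist_eq] at hy
      have h1 := abs_lt.1 hy
      have h2 := min_le_left ζ₀ (1 - ζ₀)
      have h3 := min_le_right ζ₀ (1 - ζ₀)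
      constructor <;> linarith [h1.1, h1.2]
    have hball : Metric.ball ζ₀ (min ζ₀ (1 - ζ₀)) ⊆ Icc (0:ℝ) 1 :=
      fun y hy => Ioo_subset_Icc_self (hballo hy)
    have h := intervalIntegral.hasDerivAt_integral_of_dominated_loc_of_deriv_le
      (F := fun ζ t => Q d H x t ζ) (F' := fun ζ t => QZ d H K' x Hx' t ζ) (x₀ := ζ₀)
      (a := 0) (b := τ) (μ := volume) (bound := fun _ => Cb) (Metric.ball_mem_nhds ζ₀ hε) ?_ ?_ ?_ ?_
      intervalIntegrable_const ?_
    · exact h.2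
    · filter_upwards [Metric.ball_mem_nhds ζ₀ hε] with ζ hζ
      rw [hIoc]
      exact (((hsliceT hqc ζ (hball hζ)).mono hIocIci)).aestronglyMeasurable measurableSet_Ioc
    · exact ((hsliceT hqc ζ₀ (Ioo_subset_Icc_self hζ₀)).mono
        (huIcc ▸ hIccIci)).intervalIntegrable
    · rw [hIoc]
      exact ((hsliceT hqzc ζ₀ (Ioo_subset_Icc_self hζ₀)).mono
        hIocIci).aestronglyMeasurable measurableSet_Ioc
    · refine Filter.Eventually.of_forall (fun t ht => ?_)
      intro ζ hζb
      rw [hIoc] at ht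
      exact hCb (t, ζ) ⟨Ioc_subset_Icc_self ht, hball hζb⟩
    · refine Filter.Eventually.of_forall (fun t ht => ?_)
      intro ζ hζ
      rw [hIoc] at ht
      exact (hqzd t (hIocIci ht) ζ (hball hζ)).hasDerivAt
        (Icc_mem_nhds (hballo hζ).1 (hballo hζ).2)
  -- continuity of F and related facts
  have hu2 : uIcc (0:ℝ) τ ⊆ Ici 0 := by rw [huIcc]; exact hIccIci
  have hu3 : uIcc (0:ℝ) 1 ⊆ Icc (0:ℝ) 1 := by rw [uIcc_of_le h01]
  have hintT : ∀ {g : ℝ × ℝ → ℝ}, ContinuousOn g (Ici 0 ×ˢ Icc 0 1) → ∀ ζ ∈ Icc (0:ℝ) 1,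
      IntervalIntegrable (fun t => g (t, ζ)) volume 0 τ :=
    fun {g} hg ζ hζ => ((hsliceT hg ζ hζ).mono hu2).intervalIntegrable
  have hFc : ContinuousOn (Ff d H x τ) (Icc 0 1) :=
    contOn_param (f := fun t ζ => Q d H x t ζ) hτ0 (hqc.mono hSR)
  have hF0 : ∀ ζ ∈ Icc (0:ℝ) 1, 0 ≤ Ff d H x τ ζ :=
    fun ζ hζ => intervalIntegral.integral_nonneg hτ0 (fun u _ => hq0 u ζ hζ)
  have hB0 : ∀ s ∈ Icc (0:ℝ) 1, 0 ≤ Bb d H x γ τ s :=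
    fun s hs => mul_nonneg hγ0 (add_nonneg (hq0 τ s hs) (hq0 0 s hs))
  have hBc : ContinuousOn (Bb d H x γ τ) (Icc 0 1) :=
    continuousOn_const.mul ((hsliceZ hqc τ hτmem).add (hsliceZ hqc 0 h0mem))
  -- FTC in time for Rr
  have hrtint : ∀ ζ ∈ Icc (0:ℝ) 1,
      ∫ t in (0:ℝ)..τ, Rt d P₁ x xt t ζ = Rr d P₁ x τ ζ - Rr d P₁ x 0 ζ := by
    intro ζ hζ
    refine intervalIntegral.integral_eq_sub_of_hasDeriv_right
      (f := fun t => Rr d P₁ x t ζ) (f' := fun t => Rt d P₁ x xt t ζ) ?_ ?_ ?_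
    · exact (hsliceT hrc ζ hζ).mono hu2
    · intro t ht
      have ht' : t ∈ Ioo 0 τ := by rwa [min_eq_left hτ0, max_eq_right hτ0] at ht
      exact ((hrtd ζ hζ t (le_of_lt ht'.1)).hasDerivAt (Ici_mem_nhds ht'.1)).hasDerivWithinAt
    · exact hintT hrtc ζ hζ
  -- lower bound for the spatial derivative of F
  have hGlow : ∀ ζ ∈ Icc (0:ℝ) 1,
      -(Bb d H x γ τ ζ) - c₂ * Ff d H x τ ζ ≤ ∫ t in (0:ℝ)..τ, QZ d H K' x Hx' t ζ := by
    intro ζ hζ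
    have hint_rt : IntervalIntegrable (fun t => Rt d P₁ x xt t ζ) volume 0 τ := hintT hrtc ζ hζ
    have hint_qz : IntervalIntegrable (fun t => QZ d H K' x Hx' t ζ) volume 0 τ := hintT hqzc ζ hζ
    have hint_q : IntervalIntegrable (fun t => Q d H x t ζ) volume 0 τ := hintT hqc ζ hζ
    have hint_diff : IntervalIntegrable (fun t => QZ d H K' x Hx' t ζ - Rt d P₁ x xt t ζ)
        volume 0 τ := hint_qz.sub hint_rt
    have hsplit2 : ∫ t in (0:ℝ)..τ, QZ d H K' x Hx' t ζ
        = (∫ t in (0:ℝ)..τ, Rt d P₁ x xt t ζ)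
          + ∫ t in (0:ℝ)..τ, (QZ d H K' x Hx' t ζ - Rt d P₁ x xt t ζ) := by
      rw [← intervalIntegral.integral_add hint_rt hint_diff]
      exact intervalIntegral.integral_congr (fun t _ => by ring)
    have hmono : ∫ t in (0:ℝ)..τ, (-(c₂ * Q d H x t ζ))
        ≤ ∫ t in (0:ℝ)..τ, (QZ d H K' x Hx' t ζ - Rt d P₁ x xt t ζ) := by
      refine intervalIntegral.integral_mono_on hτ0 ((hint_q.const_mul c₂).neg) hint_diff ?_
      intro t ht
      have h1 := abs_le.1 (hRle t (hIccIci ht) ζ hζ)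
      linarith [h1.1]
    have hconst : ∫ t in (0:ℝ)..τ, (-(c₂ * Q d H x t ζ)) = -(c₂ * Ff d H x τ ζ) := by
      rw [intervalIntegral.integral_neg, intervalIntegral.integral_const_mul]
      rfl
    have hr1 := abs_le.1 (hrle τ ζ hζ)
    have hr0 := abs_le.1 (hrle 0 ζ hζ)
    have hBexp : Bb d H x γ τ ζ = γ * Q d H x τ ζ + γ * Q d H x 0 ζ := by
      show γ * (Q d H x τ ζ + Q d H x 0 ζ) = _
      ring
    rw [hsplit2, hrtint ζ hζ, hBexp]
    rw [hconst] at hmono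
    linarith [hr1.1, hr0.2, hmono]
  -- the primitive of B is continuous
  have hprim_cont : ContinuousOn (fun ζ => ∫ s in (0:ℝ)..ζ, Bb d H x γ τ s) (Icc 0 1) := by
    have hint : IntegrableOn (Bb d H x γ τ) (uIcc (0:ℝ) 1) volume := by
      rw [uIcc_of_le h01]
      exact hBc.integrableOn_compact isCompact_Icc
    have h := intervalIntegral.continuousOn_primitive_interval hint
    rwa [uIcc_of_le h01] at h
  -- the Lyapunov-type function is monotone
  have hΦmono : MonotoneOn (fun ζ => Real.exp (c₂*ζ) * Ff d H x τ ζ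
      + Real.exp c₂ * ∫ s in (0:ℝ)..ζ, Bb d H x γ τ s) (Icc 0 1) := by
    refine monotoneOn_of_hasDerivAt_nonneg (convex_Icc 0 1)
      (f' := fun ζ => ((Real.exp (c₂*ζ)*c₂) * Ff d H x τ ζ
        + Real.exp (c₂*ζ) * (∫ t in (0:ℝ)..τ, QZ d H K' x Hx' t ζ))
        + Real.exp c₂ * Bb d H x γ τ ζ)
      (((Real.continuous_exp.comp (continuous_const.mul continuous_id)).continuousOn.mul
        hFc).add (continuousOn_const.mul hprim_cont)) ?_ ?_
    · rw [interior_Icc]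
      intro ζ hζ
      have hexp : HasDerivAt (fun ζ => Real.exp (c₂*ζ)) (Real.exp (c₂*ζ)*c₂) ζ := by
        have h1 : HasDerivAt (fun ζ : ℝ => c₂*ζ) c₂ ζ := by
          simpa using (hasDerivAt_id ζ).const_mul c₂
        simpa using h1.exp
      have hprim : HasDerivAt (fun ζ => ∫ s in (0:ℝ)..ζ, Bb d H x γ τ s)
          (Bb d H x γ τ ζ) ζ := by
        refine intervalIntegral.integral_hasDerivAt_right ?_ ?_ ?_
        · refine (hBc.mono ?_).intervalIntegrable
          rw [uIcc_of_le hζ.1.le]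
          exact Icc_subset_Icc (le_refl 0) hζ.2.le
        · exact (hBc.mono Ioo_subset_Icc_self).stronglyMeasurableAtFilter isOpen_Ioo ζ hζ
        · exact (hBc ζ (Ioo_subset_Icc_self hζ)).continuousAt (Icc_mem_nhds hζ.1 hζ.2)
      exact (hexp.mul (hFd ζ hζ)).add (hprim.const_mul (Real.exp c₂))
    · rw [interior_Icc]
      intro ζ hζ
      have hζ' := Ioo_subset_Icc_self hζ
      have hG := hGlow ζ hζ'
      have hBnn := hB0 ζ hζ'
      have he1 : Real.exp (c₂*ζ) ≤ Real.exp c₂ := by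
        apply Real.exp_le_exp.2
        nlinarith [mul_le_mul_of_nonneg_left (le_of_lt hζ.2) hc₂0]
      have hep : (0:ℝ) < Real.exp (c₂*ζ) := Real.exp_pos _
      have h1 : Real.exp (c₂*ζ) * (-(Bb d H x γ τ ζ) - c₂ * Ff d H x τ ζ)
          ≤ Real.exp (c₂*ζ) * (∫ t in (0:ℝ)..τ, QZ d H K' x Hx' t ζ) :=
        mul_le_mul_of_nonneg_left hG hep.le
      beta_reduce
      nlinarith [h1, mul_nonneg (sub_nonneg.2 he1) hBnn]
  -- F is dominated by its boundary value
  have hFle : ∀ ζ ∈ Icc (0:ℝ) 1, Ff d H x τ ζ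
      ≤ Real.exp c₂ * Ff d H x τ 1
        + Real.exp c₂ * (γ * (Efun d H x τ + Efun d H x 0)) := by
    intro ζ hζ
    have h1 : Real.exp (c₂*ζ) * Ff d H x τ ζ
        + Real.exp c₂ * ∫ s in (0:ℝ)..ζ, Bb d H x γ τ s
        ≤ Real.exp (c₂*1) * Ff d H x τ 1
          + Real.exp c₂ * ∫ s in (0:ℝ)..1, Bb d H x γ τ s :=
      hΦmono hζ (right_mem_Icc.2 h01) hζ.2
    have h2 : 0 ≤ ∫ s in (0:ℝ)..ζ, Bb d H x γ τ s :=
      intervalIntegral.integral_nonneg hζ.1 (fun s hs => hB0 s ⟨hs.1, le_trans hs.2 hζ.2⟩)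
    have h3 : Ff d H x τ ζ ≤ Real.exp (c₂*ζ) * Ff d H x τ ζ := by
      nlinarith [hF0 ζ hζ, Real.one_le_exp (mul_nonneg hc₂0 hζ.1)]
    have h4 : ∫ s in (0:ℝ)..1, Bb d H x γ τ s = γ * (Efun d H x τ + Efun d H x 0) := by
      have hτint : IntervalIntegrable (fun s => Q d H x τ s) volume 0 1 :=
        ((hsliceZ hqc τ hτmem).mono hu3).intervalIntegrable
      have h0int : IntervalIntegrable (fun s => Q d H x 0 s) volume 0 1 :=
        ((hsliceZ hqc 0 h0mem).mono hu3).intervalIntegrable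
      calc ∫ s in (0:ℝ)..1, Bb d H x γ τ s
          = γ * ∫ s in (0:ℝ)..1, (Q d H x τ s + Q d H x 0 s) :=
            intervalIntegral.integral_const_mul γ _
        _ = γ * ((∫ s in (0:ℝ)..1, Q d H x τ s) + ∫ s in (0:ℝ)..1, Q d H x 0 s) := by
            rw [intervalIntegral.integral_add hτint h0int]
        _ = γ * (Efun d H x τ + Efun d H x 0) := rfl
    have h5 : Real.exp (c₂*1) = Real.exp c₂ := by norm_num
    rw [h5, h4] at h1
    linarith [h1, h3, mul_nonneg hexp_pos.le h2]
  -- energy facts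
  have hE0 : ∀ (t : ℝ), 0 ≤ Efun d H x t :=
    fun t => intervalIntegral.integral_nonneg h01 (fun u hu => hq0 t u hu)
  have hswapc : ContinuousOn (fun p : ℝ × ℝ => Q d H x p.2 p.1) (Icc 0 1 ×ˢ Icc 0 τ) := by
    refine ContinuousOn.comp (f := fun p : ℝ × ℝ => ((p.2, p.1) : ℝ × ℝ)) hqc
      (continuous_snd.prodMk continuous_fst).continuousOn ?_
    intro p hp
    exact ⟨hIccIci hp.2, hp.1⟩
  have hEc : ContinuousOn (Efun d H x) (Icc 0 τ) :=
    contOn_param (f := fun v u => Q d H x u v) h01 hswapc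
  choose! ed hed using hdiss
  have hEanti : AntitoneOn (Efun d H x) (Ici 0) := by
    have hhalf : AntitoneOn (fun t => (1/2) * Efun d H x t) (Ici 0) := by
      refine antitoneOn_of_hasDerivAt_nonpos (convex_Ici 0) (f' := fun t => ed t) ?_ ?_ ?_
      · intro t ht
        exact ((hed t ht).1).continuousWithinAt
      · rw [interior_Ici]
        intro t ht
        exact ((hed t (le_of_lt (mem_Ioi.1 ht))).1).hasDerivAt (Ici_mem_nhds ht)
      · rw [interior_Ici]
        intro t ht
        have h1 := (hed t (le_of_lt (mem_Ioi.1 ht))).2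
        have h3 : x t 1 ⬝ᵥ (H 1 *ᵥ x t 1) = Q d H x t 1 := rfl
        rw [h3] at h1
        nlinarith [hq0 t 1 h1mem]
    intro a ha b hb hab
    have h := hhalf ha hb hab
    linarith
  -- integrated dissipation estimate
  have hq1c : ContinuousOn (fun t => Q d H x t 1) (Ici 0) := hsliceT hqc 1 h1mem
  have hdissint : (1/2) * Efun d H x τ + κ * Ff d H x τ 1 ≤ (1/2) * Efun d H x 0 := by
    have hanti : AntitoneOn (fun t => (1/2) * Efun d H x t
        + κ * ∫ s in (0:ℝ)..t, Q d H x s 1) (Icc 0 τ) := by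
      refine antitoneOn_of_hasDerivAt_nonpos (convex_Icc 0 τ)
        (f' := fun t => ed t + κ * Q d H x t 1) ?_ ?_ ?_
      · refine ContinuousOn.add ?_ (continuousOn_const.mul ?_)
        · intro t ht
          exact (((hed t (hIccIci ht)).1).continuousWithinAt).mono hIccIci
        · have hint : IntegrableOn (fun t => Q d H x t 1) (uIcc (0:ℝ) τ) volume := by
            rw [huIcc]
            exact (hq1c.mono hIccIci).integrableOn_compact isCompact_Icc
          have h := intervalIntegral.continuousOn_primitive_interval hint
          rwa [huIcc] at h
      · rw [interior_Icc]
        intro t ht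
        refine HasDerivAt.add (((hed t ht.1.le).1).hasDerivAt (Ici_mem_nhds ht.1)) ?_
        refine HasDerivAt.const_mul κ ?_
        refine intervalIntegral.integral_hasDerivAt_right
          ((hq1c.mono ?_).intervalIntegrable) ?_ ?_
        · rw [uIcc_of_le ht.1.le]
          exact fun s hs => hs.1
        · exact (hq1c.mono (fun s (hs : s ∈ Ioi 0) => le_of_lt hs)).stronglyMeasurableAtFilter
            isOpen_Ioi t ht.1
        · exact (hq1c t ht.1.le).continuousAt (Ici_mem_nhds ht.1)
      · rw [interior_Icc]
        intro t ht
        have h1 := (hed t ht.1.le).2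
        have h3 : x t 1 ⬝ᵥ (H 1 *ᵥ x t 1) = Q d H x t 1 := rfl
        rw [h3] at h1
        beta_reduce
        linarith
    have h2 := hanti (left_mem_Icc.2 hτ0) (right_mem_Icc.2 hτ0) hτ0
    have h3 : Ff d H x τ 1 = ∫ s in (0:ℝ)..τ, Q d H x s 1 := rfl
    rw [h3]
    simpa using h2
  -- Fubini and the final chain of inequalities
  have hfub : ∫ ζ in (0:ℝ)..1, Ff d H x τ ζ = ∫ t in (0:ℝ)..τ, Efun d H x t :=
    fubini_param (f := fun t ζ => Q d H x t ζ) hτ0 h01 (hqc.mono hSR)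
  have hEmono_int : τ * Efun d H x τ ≤ ∫ t in (0:ℝ)..τ, Efun d H x t := by
    have h1 : ∫ t in (0:ℝ)..τ, Efun d H x τ ≤ ∫ t in (0:ℝ)..τ, Efun d H x t := by
      refine intervalIntegral.integral_mono_on hτ0 intervalIntegrable_const
        ((hEc.mono ?_).intervalIntegrable) ?_
      · rw [huIcc]
      · intro t ht
        exact hEanti (hIccIci ht) hτmem ht.2
    have h2 : ∫ t in (0:ℝ)..τ, (Efun d H x τ : ℝ) = τ * Efun d H x τ := by
      rw [intervalIntegral.integral_const]
      simp [smul_eq_mul]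
    linarith
  have hFint : IntervalIntegrable (Ff d H x τ) volume 0 1 := (hFc.mono hu3).intervalIntegrable
  have hFub_le : ∫ ζ in (0:ℝ)..1, Ff d H x τ ζ
      ≤ Real.exp c₂ * Ff d H x τ 1
        + Real.exp c₂ * (γ * (Efun d H x τ + Efun d H x 0)) := by
    have h1 : ∫ ζ in (0:ℝ)..1, Ff d H x τ ζ ≤ ∫ _ζ in (0:ℝ)..1,
        (Real.exp c₂ * Ff d H x τ 1
          + Real.exp c₂ * (γ * (Efun d H x τ + Efun d H x 0))) :=
      intervalIntegral.integral_mono_on h01 hFint intervalIntegrable_const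
        (fun ζ hζ => hFle ζ hζ)
    have h2 : ∫ _ζ in (0:ℝ)..1, (Real.exp c₂ * Ff d H x τ 1
        + Real.exp c₂ * (γ * (Efun d H x τ + Efun d H x 0)))
        = Real.exp c₂ * Ff d H x τ 1
          + Real.exp c₂ * (γ * (Efun d H x τ + Efun d H x 0)) := by
      rw [intervalIntegral.integral_const]
      simp
    linarith
  have hF1nn : 0 ≤ Ff d H x τ 1 := hF0 1 h1mem
  have hF1le : κ * Ff d H x τ 1 ≤ (1/2) * Efun d H x 0 := by
    have := hE0 τ
    linarith
  have hchain : τ * Efun d H x τ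
      ≤ Real.exp c₂ * ((1/(2*κ)) * Efun d H x 0)
        + Real.exp c₂ * (γ * (Efun d H x τ + Efun d H x 0)) := by
    have h1 : Ff d H x τ 1 ≤ (1/(2*κ)) * Efun d H x 0 := by
      rw [div_mul_eq_mul_div, le_div_iff₀ (by positivity)]
      nlinarith [hF1le]
    have h2 : Real.exp c₂ * Ff d H x τ 1 ≤ Real.exp c₂ * ((1/(2*κ)) * Efun d H x 0) :=
      mul_le_mul_of_nonneg_left h1 hexp_pos.le
    linarith [hEmono_int, hfub ▸ hFub_le]
  have hEτE0 : Efun d H x τ ≤ Efun d H x 0 := hEanti h0mem hτmem hτ0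
  -- final arithmetic
  have hstep1 : (2*(Real.exp c₂ * (1/(2*κ) + 2*γ)) + 1) * Efun d H x τ
      ≤ (Real.exp c₂ * (1/(2*κ) + 2*γ)) * Efun d H x 0 := by
    have h1 : (2*(Real.exp c₂ * (1/(2*κ) + 2*γ)) + 1) * Efun d H x τ ≤ τ * Efun d H x τ :=
      mul_le_mul_of_nonneg_right hτ (hE0 τ)
    have h2 : Real.exp c₂ * (γ * (Efun d H x τ + Efun d H x 0))
        ≤ Real.exp c₂ * (γ * (2 * Efun d H x 0)) := by
      refine mul_le_mul_of_nonneg_left ?_ hexp_pos.le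
      refine mul_le_mul_of_nonneg_left ?_ hγ0
      linarith
    calc (2*(Real.exp c₂ * (1/(2*κ) + 2*γ)) + 1) * Efun d H x τ
        ≤ τ * Efun d H x τ := h1
      _ ≤ Real.exp c₂ * ((1/(2*κ)) * Efun d H x 0)
          + Real.exp c₂ * (γ * (Efun d H x τ + Efun d H x 0)) := hchain
      _ ≤ Real.exp c₂ * ((1/(2*κ)) * Efun d H x 0)
          + Real.exp c₂ * (γ * (2 * Efun d H x 0)) := by linarith [h2]
      _ = (Real.exp c₂ * (1/(2*κ) + 2*γ)) * Efun d H x 0 := by ring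
  nlinarith [hstep1, hE0 0, hE0 τ, hC0]


end Stmt9Aux

open Stmt9Aux


set_option maxHeartbeats 1000000 in
/-- Theorem 5.1 of the paper, for classical solutions.
Uniform exponential decay of the energy of a first-order port-Hamiltonian system
`∂x/∂t = P₁ ∂(ℋx)/∂ζ + P₀ ℋ x` whose energy satisfies the boundary dissipation estimate
`(d/dt) (1/2)∫₀¹ xᵀ ℋ x ≤ -κ (xᵀ ℋ x)(1)`. -/
theorem stmt_9 (d : ℕ)
    (P₁ P₀ : Matrix (Fin d) (Fin d) ℝ)
    (hP₁sym : P₁.transpose = P₁) (hP₁inv : IsUnit P₁.det)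
    (H : ℝ → Matrix (Fin d) (Fin d) ℝ)
    (hHsmooth : ∀ i j, ContDiffOn ℝ 1 (fun ζ => H ζ i j) (Icc (0:ℝ) 1))
    (hHsym : ∀ ζ ∈ Icc (0:ℝ) 1, (H ζ).transpose = H ζ)
    (m₀ M₀ : ℝ) (hm₀ : 0 < m₀) (hm₀M₀ : m₀ ≤ M₀)
    (hHbnd : ∀ ζ ∈ Icc (0:ℝ) 1, ∀ v : Fin d → ℝ,
      m₀ * (v ⬝ᵥ v) ≤ v ⬝ᵥ (H ζ *ᵥ v) ∧ v ⬝ᵥ (H ζ *ᵥ v) ≤ M₀ * (v ⬝ᵥ v))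
    (κ : ℝ) (hκ : 0 < κ) :
    ∃ M ω : ℝ, 1 ≤ M ∧ ω < 0 ∧
      ∀ x xt Hx' : ℝ → ℝ → Fin d → ℝ,
        -- `x` is continuously differentiable on `[0,∞) × [0,1]`:
        ContinuousOn (fun p : ℝ × ℝ => x p.1 p.2) (Ici 0 ×ˢ Icc 0 1) →
        ContinuousOn (fun p : ℝ × ℝ => xt p.1 p.2) (Ici 0 ×ˢ Icc 0 1) →
        ContinuousOn (fun p : ℝ × ℝ => Hx' p.1 p.2) (Ici 0 ×ˢ Icc 0 1) →
        (∀ t ∈ Ici (0:ℝ), ∀ ζ ∈ Icc (0:ℝ) 1,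
          HasDerivWithinAt (fun s => x s ζ) (xt t ζ) (Ici 0) t) →
        (∀ t ∈ Ici (0:ℝ), ∀ ζ ∈ Icc (0:ℝ) 1,
          HasDerivWithinAt (fun z => H z *ᵥ x t z) (Hx' t ζ) (Icc 0 1) ζ) →
        -- the PDE `∂x/∂t = P₁ ∂(ℋx)/∂ζ + P₀ ℋ x`:
        (∀ t ∈ Ici (0:ℝ), ∀ ζ ∈ Icc (0:ℝ) 1,
          xt t ζ = P₁ *ᵥ Hx' t ζ + P₀ *ᵥ (H ζ *ᵥ x t ζ)) →
        -- the boundary dissipation estimate: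
        (∀ t ∈ Ici (0:ℝ), ∃ e : ℝ,
          HasDerivWithinAt
            (fun s => (1/2) * ∫ ζ in (0:ℝ)..1, x s ζ ⬝ᵥ (H ζ *ᵥ x s ζ)) e (Ici 0) t ∧
          e ≤ -κ * (x t 1 ⬝ᵥ (H 1 *ᵥ x t 1))) →
        ∀ t ∈ Ici (0:ℝ),
          (∫ ζ in (0:ℝ)..1, x t ζ ⬝ᵥ (H ζ *ᵥ x t ζ))
            ≤ M * Real.exp (ω * t) * ∫ ζ in (0:ℝ)..1, x 0 ζ ⬝ᵥ (H ζ *ᵥ x 0 ζ) := by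
  classical
  have h01 : (0:ℝ) ≤ 1 := zero_le_one
  have h0mem : (0:ℝ) ∈ Icc (0:ℝ) 1 := ⟨le_refl 0, h01⟩
  have h1mem : (1:ℝ) ∈ Icc (0:ℝ) 1 := ⟨h01, le_refl 1⟩
  have hHbnd' : ∀ ζ ∈ Icc (0:ℝ) 1, ∀ v : Fin d → ℝ, m₀ * (v ⬝ᵥ v) ≤ v ⬝ᵥ (H ζ *ᵥ v) :=
    fun ζ hζ v => (hHbnd ζ hζ v).1
  have hdet : ∀ ζ ∈ Icc (0:ℝ) 1, (H ζ).det ≠ 0 :=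
    fun ζ hζ => det_ne_zero_of_posdef hm₀ (hHbnd' ζ hζ)
  have hKsmooth : ∀ i j, ContDiffOn ℝ 1 (fun ζ => (H ζ)⁻¹ i j) (Icc (0:ℝ) 1) :=
    contDiffOn_inv_entry hHsmooth hdet
  set K' : ℝ → Matrix (Fin d) (Fin d) ℝ :=
    fun ζ i j => derivWithin (fun z => (H z)⁻¹ i j) (Icc 0 1) ζ with hK'def
  have hK'deriv : ∀ ζ ∈ Icc (0:ℝ) 1, ∀ i j,
      HasDerivWithinAt (fun z => (H z)⁻¹ i j) (K' ζ i j) (Icc 0 1) ζ :=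
    fun ζ hζ i j => ((hKsmooth i j).differentiableOn one_ne_zero ζ hζ).hasDerivWithinAt
  have hK'cont : ∀ i j, ContinuousOn (fun ζ => K' ζ i j) (Icc (0:ℝ) 1) := by
    intro i j
    exact (hKsmooth i j).continuousOn_derivWithin (uniqueDiffOn_Icc one_pos) le_rfl
  -- uniform bounds
  have hNHc : ContinuousOn (fun ζ => ∑ i, ∑ j, |H ζ i j|) (Icc (0:ℝ) 1) :=
    continuousOn_finset_sum _ fun i _ =>
      continuousOn_finset_sum _ fun j _ => (hHsmooth i j).continuousOn.abs
  have hNKc : ContinuousOn (fun ζ => ∑ i, ∑ j, |K' ζ i j|) (Icc (0:ℝ) 1) :=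
    continuousOn_finset_sum _ fun i _ =>
      continuousOn_finset_sum _ fun j _ => (hK'cont i j).abs
  obtain ⟨CH, hCH⟩ := isCompact_Icc.exists_bound_of_continuousOn hNHc
  obtain ⟨CK, hCK⟩ := isCompact_Icc.exists_bound_of_continuousOn hNKc
  have hCH' : ∀ ζ ∈ Icc (0:ℝ) 1, (∑ i, ∑ j, |H ζ i j|) ≤ CH :=
    fun ζ hζ => le_trans (le_abs_self _) (by simpa [Real.norm_eq_abs] using hCH ζ hζ)
  have hCK' : ∀ ζ ∈ Icc (0:ℝ) 1, (∑ i, ∑ j, |K' ζ i j|) ≤ CK :=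
    fun ζ hζ => le_trans (le_abs_self _) (by simpa [Real.norm_eq_abs] using hCK ζ hζ)
  have habs0 : ∀ (A : Matrix (Fin d) (Fin d) ℝ), 0 ≤ ∑ i, ∑ j, |A i j| :=
    fun A => Finset.sum_nonneg fun i _ => Finset.sum_nonneg fun j _ => abs_nonneg _
  have hCH0 : 0 ≤ CH := le_trans (habs0 (H 0)) (hCH' 0 h0mem)
  have hCK0 : 0 ≤ CK := le_trans (habs0 (K' 0)) (hCK' 0 h0mem)
  set CP : ℝ := ∑ i, ∑ j, |P₁⁻¹ i j| with hCPdef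
  set CQ : ℝ := ∑ i, ∑ j, |(P₁⁻¹ * P₀) i j| with hCQdef
  have hCP0 : 0 ≤ CP := habs0 _
  have hCQ0 : 0 ≤ CQ := habs0 _
  set γ : ℝ := CP/m₀ + 1 with hγdef
  set c₂ : ℝ := (CK*CH^2 + 2*CQ*CH)/m₀ + 1 with hc₂def
  have hγ0 : 0 ≤ γ := by positivity
  have hc₂0 : 0 ≤ c₂ := by positivity
  -- pointwise quadratic-form estimates
  have hγq : ∀ ζ ∈ Icc (0:ℝ) 1, ∀ v : Fin d → ℝ,
      |v ⬝ᵥ (P₁⁻¹ *ᵥ v)| ≤ γ * (v ⬝ᵥ (H ζ *ᵥ v)) := by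
    intro ζ hζ v
    have hS0 : 0 ≤ v ⬝ᵥ v := dot_self_nonneg v
    have hT : m₀ * (v ⬝ᵥ v) ≤ v ⬝ᵥ (H ζ *ᵥ v) := hHbnd' ζ hζ v
    have hT0 : 0 ≤ v ⬝ᵥ (H ζ *ᵥ v) := le_trans (by positivity) hT
    have hA : |v ⬝ᵥ (P₁⁻¹ *ᵥ v)| ≤ CP * (v ⬝ᵥ v) := by
      rw [dotProduct_comm]
      have h2 := abs_mulVec_dot_le P₁⁻¹ v v
      rwa [Real.mul_self_sqrt hS0] at h2
    have hγm : γ * m₀ = CP + m₀ := by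
      rw [hγdef, add_mul, div_mul_cancel₀ _ hm₀.ne', one_mul]
    have key : m₀ * |v ⬝ᵥ (P₁⁻¹ *ᵥ v)| ≤ m₀ * (γ * (v ⬝ᵥ (H ζ *ᵥ v))) := by
      have e1 : m₀ * (γ * (v ⬝ᵥ (H ζ *ᵥ v))) = CP * (v ⬝ᵥ (H ζ *ᵥ v))
          + m₀ * (v ⬝ᵥ (H ζ *ᵥ v)) := by
        have : m₀ * (γ * (v ⬝ᵥ (H ζ *ᵥ v))) = (γ * m₀) * (v ⬝ᵥ (H ζ *ᵥ v)) := by ring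
        rw [this, hγm]
        ring
      calc m₀ * |v ⬝ᵥ (P₁⁻¹ *ᵥ v)| ≤ m₀ * (CP * (v ⬝ᵥ v)) :=
            mul_le_mul_of_nonneg_left hA hm₀.le
        _ = CP * (m₀ * (v ⬝ᵥ v)) := by ring
        _ ≤ CP * (v ⬝ᵥ (H ζ *ᵥ v)) := mul_le_mul_of_nonneg_left hT hCP0
        _ ≤ CP * (v ⬝ᵥ (H ζ *ᵥ v)) + m₀ * (v ⬝ᵥ (H ζ *ᵥ v)) :=
            le_add_of_nonneg_right (mul_nonneg hm₀.le hT0)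
        _ = m₀ * (γ * (v ⬝ᵥ (H ζ *ᵥ v))) := e1.symm
    exact le_of_mul_le_mul_left key hm₀
  have hc₂q : ∀ ζ ∈ Icc (0:ℝ) 1, ∀ v : Fin d → ℝ,
      |(K' ζ *ᵥ (H ζ *ᵥ v)) ⬝ᵥ (H ζ *ᵥ v)
        - 2*(v ⬝ᵥ (P₁⁻¹ *ᵥ (P₀ *ᵥ (H ζ *ᵥ v))))| ≤ c₂ * (v ⬝ᵥ (H ζ *ᵥ v)) := by
    intro ζ hζ v
    set u : Fin d → ℝ := H ζ *ᵥ v with hudef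
    have hS0 : 0 ≤ v ⬝ᵥ v := dot_self_nonneg v
    have hU0 : 0 ≤ u ⬝ᵥ u := dot_self_nonneg u
    have hT : m₀ * (v ⬝ᵥ v) ≤ v ⬝ᵥ u := hHbnd' ζ hζ v
    have hT0 : 0 ≤ v ⬝ᵥ u := le_trans (by positivity) hT
    -- bound on u⬝u
    have hUS : u ⬝ᵥ u ≤ CH^2 * (v ⬝ᵥ v) := by
      have h1 := mulVec_dot_self_le (H ζ) v
      have h2 : (∑ i, ∑ j, |H ζ i j|)^2 ≤ CH^2 := by
        have := hCH' ζ hζ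
        nlinarith [habs0 (H ζ)]
      calc u ⬝ᵥ u ≤ (∑ i, ∑ j, |H ζ i j|)^2 * (v ⬝ᵥ v) := h1
        _ ≤ CH^2 * (v ⬝ᵥ v) := mul_le_mul_of_nonneg_right h2 hS0
    have hsqrtU : Real.sqrt (u ⬝ᵥ u) ≤ CH * Real.sqrt (v ⬝ᵥ v) := by
      have h1 : Real.sqrt (u ⬝ᵥ u) ≤ Real.sqrt (CH^2 * (v ⬝ᵥ v)) := Real.sqrt_le_sqrt hUS
      rwa [Real.sqrt_mul (sq_nonneg CH), Real.sqrt_sq hCH0] at h1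
    have h1 : |(K' ζ *ᵥ u) ⬝ᵥ u| ≤ CK * (u ⬝ᵥ u) := by
      have h2 := abs_mulVec_dot_le (K' ζ) u u
      rw [Real.mul_self_sqrt hU0] at h2
      calc |(K' ζ *ᵥ u) ⬝ᵥ u| ≤ (∑ i, ∑ j, |K' ζ i j|) * (u ⬝ᵥ u) := h2
        _ ≤ CK * (u ⬝ᵥ u) := mul_le_mul_of_nonneg_right (hCK' ζ hζ) hU0
    have h3 : |v ⬝ᵥ (P₁⁻¹ *ᵥ (P₀ *ᵥ u))| ≤ CQ * (CH * (v ⬝ᵥ v)) := by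
      have h4 : v ⬝ᵥ (P₁⁻¹ *ᵥ (P₀ *ᵥ u)) = ((P₁⁻¹ * P₀) *ᵥ u) ⬝ᵥ v := by
        rw [Matrix.mulVec_mulVec, dotProduct_comm]
      rw [h4]
      have h5 := abs_mulVec_dot_le (P₁⁻¹ * P₀) u v
      have h6 : Real.sqrt (u ⬝ᵥ u) * Real.sqrt (v ⬝ᵥ v)
          ≤ CH * (v ⬝ᵥ v) := by
        calc Real.sqrt (u ⬝ᵥ u) * Real.sqrt (v ⬝ᵥ v)
            ≤ (CH * Real.sqrt (v ⬝ᵥ v)) * Real.sqrt (v ⬝ᵥ v) :=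
              mul_le_mul_of_nonneg_right hsqrtU (Real.sqrt_nonneg _)
          _ = CH * (Real.sqrt (v ⬝ᵥ v) * Real.sqrt (v ⬝ᵥ v)) := by ring
          _ = CH * (v ⬝ᵥ v) := by rw [Real.mul_self_sqrt hS0]
      calc |((P₁⁻¹ * P₀) *ᵥ u) ⬝ᵥ v| ≤ CQ * (Real.sqrt (u ⬝ᵥ u) * Real.sqrt (v ⬝ᵥ v)) := h5
        _ ≤ CQ * (CH * (v ⬝ᵥ v)) := mul_le_mul_of_nonneg_left h6 hCQ0
    have htri : |(K' ζ *ᵥ u) ⬝ᵥ u - 2*(v ⬝ᵥ (P₁⁻¹ *ᵥ (P₀ *ᵥ u)))|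
        ≤ |(K' ζ *ᵥ u) ⬝ᵥ u| + 2*|v ⬝ᵥ (P₁⁻¹ *ᵥ (P₀ *ᵥ u))| := by
      calc |(K' ζ *ᵥ u) ⬝ᵥ u - 2*(v ⬝ᵥ (P₁⁻¹ *ᵥ (P₀ *ᵥ u)))|
          ≤ |(K' ζ *ᵥ u) ⬝ᵥ u| + |2*(v ⬝ᵥ (P₁⁻¹ *ᵥ (P₀ *ᵥ u)))| := abs_sub _ _
        _ = |(K' ζ *ᵥ u) ⬝ᵥ u| + 2*|v ⬝ᵥ (P₁⁻¹ *ᵥ (P₀ *ᵥ u))| := by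
            rw [abs_mul]
            norm_num
    have hAA : |(K' ζ *ᵥ u) ⬝ᵥ u - 2*(v ⬝ᵥ (P₁⁻¹ *ᵥ (P₀ *ᵥ u)))|
        ≤ (CK*CH^2 + 2*CQ*CH) * (v ⬝ᵥ v) := by
      have h7 : CK * (u ⬝ᵥ u) ≤ CK * (CH^2 * (v ⬝ᵥ v)) := mul_le_mul_of_nonneg_left hUS hCK0
      calc |(K' ζ *ᵥ u) ⬝ᵥ u - 2*(v ⬝ᵥ (P₁⁻¹ *ᵥ (P₀ *ᵥ u)))|
          ≤ |(K' ζ *ᵥ u) ⬝ᵥ u| + 2*|v ⬝ᵥ (P₁⁻¹ *ᵥ (P₀ *ᵥ u))| := htri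
        _ ≤ CK * (CH^2 * (v ⬝ᵥ v)) + 2*(CQ * (CH * (v ⬝ᵥ v))) := by
            have := mul_le_mul_of_nonneg_left h3 (by norm_num : (0:ℝ) ≤ 2)
            linarith [le_trans h1 h7]
        _ = (CK*CH^2 + 2*CQ*CH) * (v ⬝ᵥ v) := by ring
    have hc₂m : c₂ * m₀ = CK*CH^2 + 2*CQ*CH + m₀ := by
      rw [hc₂def, add_mul, div_mul_cancel₀ _ hm₀.ne', one_mul]
    have key : m₀ * |(K' ζ *ᵥ u) ⬝ᵥ u - 2*(v ⬝ᵥ (P₁⁻¹ *ᵥ (P₀ *ᵥ u)))|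
        ≤ m₀ * (c₂ * (v ⬝ᵥ u)) := by
      have hD0 : (0:ℝ) ≤ CK*CH^2 + 2*CQ*CH := by positivity
      have e1 : m₀ * (c₂ * (v ⬝ᵥ u)) = (CK*CH^2 + 2*CQ*CH) * (v ⬝ᵥ u)
          + m₀ * (v ⬝ᵥ u) := by
        have : m₀ * (c₂ * (v ⬝ᵥ u)) = (c₂ * m₀) * (v ⬝ᵥ u) := by ring
        rw [this, hc₂m]
        ring
      calc m₀ * |(K' ζ *ᵥ u) ⬝ᵥ u - 2*(v ⬝ᵥ (P₁⁻¹ *ᵥ (P₀ *ᵥ u)))|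
          ≤ m₀ * ((CK*CH^2 + 2*CQ*CH) * (v ⬝ᵥ v)) :=
            mul_le_mul_of_nonneg_left hAA hm₀.le
        _ = (CK*CH^2 + 2*CQ*CH) * (m₀ * (v ⬝ᵥ v)) := by ring
        _ ≤ (CK*CH^2 + 2*CQ*CH) * (v ⬝ᵥ u) := mul_le_mul_of_nonneg_left hT hD0
        _ ≤ (CK*CH^2 + 2*CQ*CH) * (v ⬝ᵥ u) + m₀ * (v ⬝ᵥ u) :=
            le_add_of_nonneg_right (mul_nonneg hm₀.le hT0)
        _ = m₀ * (c₂ * (v ⬝ᵥ u)) := e1.symm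
    exact le_of_mul_le_mul_left key hm₀
  -- the constants
  set τ : ℝ := 2*(Real.exp c₂ * (1/(2*κ) + 2*γ)) + 1 with hτdef
  have hexp_pos : 0 < Real.exp c₂ := Real.exp_pos _
  have hC0 : 0 ≤ Real.exp c₂ * (1/(2*κ) + 2*γ) := by positivity
  have hτpos : 0 < τ := by rw [hτdef]; linarith
  have hlog2 : 0 < Real.log 2 := Real.log_pos one_lt_two
  refine ⟨2, -Real.log 2 / τ, by norm_num, div_neg_of_neg_of_pos (by linarith) hτpos, ?_⟩
  intro x xt Hx' hxc hxtc hHx'c hxt hwz hPDE hdiss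
  -- energy nonnegativity and halving
  have hq0 : ∀ (t : ℝ), ∀ ζ ∈ Icc (0:ℝ) 1, 0 ≤ Q d H x t ζ := by
    intro t ζ hζ
    exact le_trans (mul_nonneg hm₀.le (dot_self_nonneg _)) (hHbnd' ζ hζ (x t ζ))
  have hE00 : ∀ (t : ℝ), 0 ≤ Efun d H x t :=
    fun t => intervalIntegral.integral_nonneg h01 (fun u hu => hq0 t u hu)
  have hkey : ∀ s ∈ Ici (0:ℝ), Efun d H x (s+τ) ≤ (1/2) * Efun d H x s := by
    intro s hs
    have hmap : Continuous (fun p : ℝ × ℝ => ((s + p.1, p.2) : ℝ × ℝ)) :=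
      (continuous_const.add continuous_fst).prodMk continuous_snd
    have hmapsTo : MapsTo (fun p : ℝ × ℝ => ((s + p.1, p.2) : ℝ × ℝ))
        (Ici 0 ×ˢ Icc 0 1) (Ici 0 ×ˢ Icc 0 1) :=
      fun p hp => ⟨(show s + p.1 ∈ Ici (0:ℝ) from mem_Ici.2 (add_nonneg (mem_Ici.1 hs) (mem_Ici.1 hp.1))), hp.2⟩
    have hshift : ∀ u ∈ Ici (0:ℝ), s + u ∈ Ici (0:ℝ) := fun u hu => mem_Ici.2 (add_nonneg (mem_Ici.1 hs) (mem_Ici.1 hu))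
    have hφ : ∀ u : ℝ, HasDerivWithinAt (fun u' : ℝ => s + u') 1 (Ici 0) u :=
      fun u => (hasDerivWithinAt_id u (Ici 0)).const_add s
    have hφmaps : MapsTo (fun u' : ℝ => s + u') (Ici 0) (Ici 0) :=
      fun y hy => mem_Ici.2 (add_nonneg (mem_Ici.1 hs) (mem_Ici.1 hy))
    have h := key_step d P₁ P₀ hP₁sym hP₁inv H hHsmooth hHsym m₀ hm₀ hHbnd' κ hκ
      K' hK'deriv hK'cont γ c₂ τ hγ0 hc₂0 hγq hc₂q le_rfl
      (fun u ζ => x (s+u) ζ) (fun u ζ => xt (s+u) ζ) (fun u ζ => Hx' (s+u) ζ)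
      (ContinuousOn.comp (f := fun p : ℝ × ℝ => ((s + p.1, p.2) : ℝ × ℝ)) hxc
        hmap.continuousOn hmapsTo)
      (ContinuousOn.comp (f := fun p : ℝ × ℝ => ((s + p.1, p.2) : ℝ × ℝ)) hxtc
        hmap.continuousOn hmapsTo)
      (ContinuousOn.comp (f := fun p : ℝ × ℝ => ((s + p.1, p.2) : ℝ × ℝ)) hHx'c
        hmap.continuousOn hmapsTo)
      ?_ ?_ ?_ ?_
    · have h2 : Efun d H (fun u ζ => x (s+u) ζ) τ = Efun d H x (s+τ) := rfl
      have h3 : Efun d H (fun u ζ => x (s+u) ζ) 0 = Efun d H x s := by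
        simp only [Efun, Q, add_zero]
      rw [h2, h3] at h
      exact h
    · intro u hu ζ hζ
      have h4 := hxt (s+u) (hshift u hu) ζ hζ
      have h5 := HasDerivWithinAt.scomp (t' := Ici 0) u h4 (hφ u) hφmaps
      simpa [one_smul, Function.comp_def] using h5
    · intro u hu ζ hζ
      exact hwz (s+u) (hshift u hu) ζ hζ
    · intro u hu ζ hζ
      exact hPDE (s+u) (hshift u hu) ζ hζ
    · intro u hu
      obtain ⟨e, he, hee⟩ := hdiss (s+u) (hshift u hu)
      refine ⟨e, ?_, hee⟩
      have h5 := HasDerivWithinAt.scomp (t' := Ici 0) u he (hφ u) hφmaps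
      simpa [one_smul, Function.comp_def] using h5
  -- energy is antitone
  have hEanti : AntitoneOn (Efun d H x) (Ici 0) := by
    choose! ed hed using hdiss
    have hhalf : AntitoneOn (fun t => (1/2) * Efun d H x t) (Ici 0) := by
      refine antitoneOn_of_hasDerivAt_nonpos (convex_Ici 0) (f' := fun t => ed t) ?_ ?_ ?_
      · intro t ht
        exact ((hed t ht).1).continuousWithinAt
      · rw [interior_Ici]
        intro t ht
        exact ((hed t (le_of_lt (mem_Ioi.1 ht))).1).hasDerivAt (Ici_mem_nhds ht)
      · rw [interior_Ici]
        intro t ht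
        have h1 := (hed t (le_of_lt (mem_Ioi.1 ht))).2
        have h3 : x t 1 ⬝ᵥ (H 1 *ᵥ x t 1) = Q d H x t 1 := rfl
        rw [h3] at h1
        beta_reduce
        nlinarith [hq0 t 1 h1mem]
    intro a ha b hb hab
    have h := hhalf ha hb hab
    linarith
  -- iterate the halving estimate
  have hiter : ∀ n : ℕ, Efun d H x (n*τ) ≤ (1/2)^n * Efun d H x 0 := by
    intro n
    induction n with
    | zero => simp
    | succ n ih =>
      have h1 := hkey ((n:ℝ)*τ) (mem_Ici.2 (mul_nonneg (Nat.cast_nonneg n) hτpos.le))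
      have h2 : (((n:ℕ)+1:ℕ):ℝ)*τ = (n:ℝ)*τ + τ := by push_cast; ring
      rw [h2, pow_succ]
      nlinarith [h1, ih]
  -- conclude
  intro t ht
  show Efun d H x t ≤ 2 * Real.exp (-Real.log 2 / τ * t) * Efun d H x 0
  set n : ℕ := ⌊t/τ⌋₊ with hndef
  have hnτ : (n:ℝ)*τ ≤ t := by
    have h1 : (n:ℝ) ≤ t/τ := Nat.floor_le (div_nonneg ht hτpos.le)
    calc (n:ℝ)*τ ≤ (t/τ)*τ := mul_le_mul_of_nonneg_right h1 hτpos.le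
      _ = t := div_mul_cancel₀ t (ne_of_gt hτpos)
  have h2 : Efun d H x t ≤ Efun d H x ((n:ℝ)*τ) :=
    hEanti (mem_Ici.2 (mul_nonneg (Nat.cast_nonneg n) hτpos.le)) ht hnτ
  have h3 := hiter n
  have h4 : ((1:ℝ)/2)^n ≤ 2 * Real.exp (-Real.log 2 / τ * t) := by
    have h5 : t/τ < (n:ℝ)+1 := Nat.lt_floor_add_one _
    have h6 : ((n:ℝ)+1)*(-Real.log 2) ≤ -Real.log 2 / τ * t := by
      have h7 : -Real.log 2 / τ * t = (t/τ)*(-Real.log 2) := by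
        ring
      rw [h7]
      nlinarith [mul_le_mul_of_nonneg_right (le_of_lt h5) hlog2.le]
    have h7 := Real.exp_le_exp.2 h6
    have h8 : Real.exp (((n:ℝ)+1)*(-Real.log 2)) = (1/2:ℝ)^(n+1) := by
      have h9 : ((n:ℝ)+1)*(-Real.log 2) = ((n+1:ℕ):ℝ) * Real.log (1/2) := by
        have hl : Real.log (1/2 : ℝ) = -Real.log 2 := by rw [one_div, Real.log_inv]
        rw [hl]
        push_cast
        ring
      rw [h9, Real.exp_nat_mul, Real.exp_log (by norm_num : (0:ℝ) < 1/2)]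
    rw [h8] at h7
    calc ((1:ℝ)/2)^n = 2*(1/2:ℝ)^(n+1) := by ring
      _ ≤ 2 * Real.exp (-Real.log 2 / τ * t) := by linarith
  calc Efun d H x t ≤ ((1:ℝ)/2)^n * Efun d H x 0 := le_trans h2 h3
    _ ≤ (2 * Real.exp (-Real.log 2 / τ * t)) * Efun d H x 0 :=
        mul_le_mul_of_nonneg_right h4 (hE00 0)
    _ = 2 * Real.exp (-Real.log 2 / τ * t) * Efun d H x 0 := by ring
end

section
/- Let ρ, EI : [0,1] → ℝ be continuously differentiable with ρ(ζ) ≥ ρ₀ > 0 and EI(ζ) ≥ e₀ > 0 for all ζ, let κ ≥ 1, and let g : ℝ → ℝ be a nondecreasing function with g(0) = 0 and κ⁻¹|v| ≤ |g(v)| ≤ κ|v| for all v ∈ ℝ. Then there exist M ≥ 1 and ω < 0, depending only on ρ, EI and κ, such that every twice continuously differentiable function w : [0,∞) × [0,1] → ℝ satisfying the wave equation ρ(ζ) ∂²w/∂t²(t,ζ) = ∂/∂ζ( EI(ζ) ∂w/∂ζ )(t,ζ) on [0,∞) × [0,1], the left boundary condition ∂w/∂t(t,0) = 0 for all t ≥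 0, and the damping boundary condition EI(1) ∂w/∂ζ(t,1) = −g( ∂w/∂t(t,1) ) for all t ≥ 0, has exponentially decaying energy: E(t) ≤ M e^{ωt} E(0) for all t ≥ 0, where E(t) := (1/2)∫₀¹ ρ(ζ)|∂w/∂t(t,ζ)|² + EI(ζ)|∂w/∂ζ(t,ζ)|² dζ. -/
open MeasureTheory Set

open intervalIntegral

set_option maxHeartbeats 1000000

section stmt10helpers

lemma stmt10_sliceZ {h : ℝ → ℝ → ℝ}
    (hc : ContinuousOn (fun p : ℝ × ℝ => h p.1 p.2) (Ici 0 ×ˢ Icc 0 1))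
    {t : ℝ} (ht : t ∈ Ici (0:ℝ)) : ContinuousOn (fun z => h t z) (Icc (0:ℝ) 1) :=
  hc.comp ((continuous_const.prodMk continuous_id).continuousOn) (fun z hz => ⟨ht, hz⟩)

lemma stmt10_sliceT {h : ℝ → ℝ → ℝ}
    (hc : ContinuousOn (fun p : ℝ × ℝ => h p.1 p.2) (Ici 0 ×ˢ Icc 0 1))
    {ζ : ℝ} (hζ : ζ ∈ Icc (0:ℝ) 1) : ContinuousOn (fun s => h s ζ) (Ici (0:ℝ)) :=
  hc.comp ((continuous_id.prodMk continuous_const).continuousOn) (fun s hs => ⟨hs, hζ⟩)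

lemma stmt10_intg {h : ℝ → ℝ → ℝ}
    (hc : ContinuousOn (fun p : ℝ × ℝ => h p.1 p.2) (Ici 0 ×ˢ Icc 0 1))
    {t : ℝ} (ht : t ∈ Ici (0:ℝ)) : IntervalIntegrable (fun z => h t z) volume 0 1 := by
  apply ContinuousOn.intervalIntegrable
  rw [uIcc_of_le (zero_le_one)]
  exact stmt10_sliceZ hc ht

lemma stmt10_meas {h : ℝ → ℝ → ℝ}
    (hc : ContinuousOn (fun p : ℝ × ℝ => h p.1 p.2) (Ici 0 ×ˢ Icc 0 1))
    {t : ℝ} (ht : t ∈ Ici (0:ℝ)) :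
    AEStronglyMeasurable (fun z => h t z) (volume.restrict (Set.uIoc (0:ℝ) 1)) := by
  rw [uIoc_of_le (zero_le_one)]
  exact ((stmt10_sliceZ hc ht).mono Ioc_subset_Icc_self).aestronglyMeasurable measurableSet_Ioc

lemma stmt10_param_deriv (h D : ℝ → ℝ → ℝ)
    (hc : ContinuousOn (fun p : ℝ × ℝ => h p.1 p.2) (Ici 0 ×ˢ Icc 0 1))
    (hDc : ContinuousOn (fun p : ℝ × ℝ => D p.1 p.2) (Ici 0 ×ˢ Icc 0 1))
    (hd : ∀ x ∈ Ioi (0:ℝ), ∀ ζ ∈ Icc (0:ℝ) 1, HasDerivAt (fun s => h s ζ) (D x ζ) x)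
    {t₀ : ℝ} (ht₀ : 0 < t₀) :
    HasDerivAt (fun t => ∫ ζ in (0:ℝ)..1, h t ζ) (∫ ζ in (0:ℝ)..1, D t₀ ζ) t₀ := by
  have hKsub : (Icc (t₀/2) (t₀+t₀) ×ˢ Icc (0:ℝ) 1 : Set (ℝ × ℝ)) ⊆ Ici 0 ×ˢ Icc 0 1 := by
    refine prod_mono ?_ subset_rfl
    exact fun x hx => le_trans (by positivity) hx.1
  obtain ⟨C, hC⟩ := (isCompact_Icc.prod isCompact_Icc).exists_bound_of_continuousOn
    (hDc.mono hKsub)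
  have hball : Metric.ball t₀ (t₀/2) ⊆ Icc (t₀/2) (t₀+t₀) := by
    intro x hx
    rw [Metric.mem_ball, Real.dist_eq, abs_sub_lt_iff] at hx
    constructor <;> linarith [hx.1, hx.2]
  have key := intervalIntegral.hasDerivAt_integral_of_dominated_loc_of_deriv_le
    (F := fun x ζ => h x ζ) (F' := fun x ζ => D x ζ) (x₀ := t₀) (a := (0:ℝ)) (b := 1)
    (bound := fun _ => C) (Metric.ball_mem_nhds t₀ (half_pos ht₀))
    ?_ (stmt10_intg hc (le_of_lt ht₀)) (stmt10_meas hDc (le_of_lt ht₀)) ?_ ?_ ?_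
  · exact key.2
  · filter_upwards [eventually_gt_nhds ht₀] with x hx
    exact stmt10_meas hc (le_of_lt hx)
  · refine Filter.Eventually.of_forall (fun ζ => fun hζ x hx => ?_)
    have hζ' : ζ ∈ Icc (0:ℝ) 1 := Ioc_subset_Icc_self (by rwa [uIoc_of_le zero_le_one] at hζ)
    exact hC (x, ζ) ⟨hball hx, hζ'⟩
  · exact intervalIntegrable_const
  · refine Filter.Eventually.of_forall (fun ζ => fun hζ x hx => ?_)
    have hζ' : ζ ∈ Icc (0:ℝ) 1 := Ioc_subset_Icc_self (by rwa [uIoc_of_le zero_le_one] at hζ)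
    have hx' : 0 < x := lt_of_lt_of_le (half_pos ht₀) (hball hx).1
    exact hd x hx' ζ hζ'

lemma stmt10_param_cont (h : ℝ → ℝ → ℝ)
    (hc : ContinuousOn (fun p : ℝ × ℝ => h p.1 p.2) (Ici 0 ×ˢ Icc 0 1)) :
    ContinuousOn (fun t => ∫ ζ in (0:ℝ)..1, h t ζ) (Ici (0:ℝ)) := by
  intro t₀ ht₀
  obtain ⟨C, hC⟩ := (isCompact_Icc.prod isCompact_Icc).exists_bound_of_continuousOn
    (hc.mono (prod_mono (Icc_subset_Ici_self : Icc (0:ℝ) (t₀+1) ⊆ Ici 0) subset_rfl))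
  have hev : ∀ᶠ x in nhdsWithin t₀ (Ici 0), x ∈ Icc (0:ℝ) (t₀+1) := by
    filter_upwards [self_mem_nhdsWithin,
      eventually_nhdsWithin_of_eventually_nhds (eventually_lt_nhds (by linarith : t₀ < t₀+1))]
      with x h1 h2
    exact ⟨h1, le_of_lt h2⟩
  apply intervalIntegral.continuousWithinAt_of_dominated_interval
    (bound := fun _ => C) ?_ ?_ intervalIntegrable_const ?_
  · filter_upwards [hev] with x hx
    exact stmt10_meas hc hx.1
  · filter_upwards [hev] with x hx
    refine Filter.Eventually.of_forall (fun ζ hζ => ?_)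
    have hζ' : ζ ∈ Icc (0:ℝ) 1 := Ioc_subset_Icc_self (by rwa [uIoc_of_le zero_le_one] at hζ)
    exact hC (x, ζ) ⟨⟨hx.1, hx.2⟩, hζ'⟩
  · refine Filter.Eventually.of_forall (fun ζ hζ => ?_)
    have hζ' : ζ ∈ Icc (0:ℝ) 1 := Ioc_subset_Icc_self (by rwa [uIoc_of_le zero_le_one] at hζ)
    exact ((stmt10_sliceT hc hζ').continuousWithinAt ht₀)

lemma stmt10_ftc (Φ Φ' : ℝ → ℝ)
    (hcont : ContinuousOn Φ (Icc 0 1))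
    (hderiv : ∀ ζ ∈ Ioo (0:ℝ) 1, HasDerivAt Φ (Φ' ζ) ζ)
    (hint : IntervalIntegrable Φ' volume 0 1) :
    ∫ ζ in (0:ℝ)..1, Φ' ζ = Φ 1 - Φ 0 :=
  intervalIntegral.integral_eq_sub_of_hasDeriv_right_of_le zero_le_one hcont
    (fun ζ hζ => (hderiv ζ hζ).hasDerivWithinAt) hint

lemma stmt10_mixed (w wt wz : ℝ → ℝ → ℝ)
    (hw : ContDiffOn ℝ 2 (fun p : ℝ × ℝ => w p.1 p.2) (Ici 0 ×ˢ Icc 0 1))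
    (hwt : ∀ t ∈ Ici (0:ℝ), ∀ ζ ∈ Icc (0:ℝ) 1,
      HasDerivWithinAt (fun s => w s ζ) (wt t ζ) (Ici 0) t)
    (hwz : ∀ t ∈ Ici (0:ℝ), ∀ ζ ∈ Icc (0:ℝ) 1,
      HasDerivWithinAt (fun z => w t z) (wz t ζ) (Icc 0 1) ζ) :
    ∃ m : ℝ → ℝ → ℝ,
      ContinuousOn (fun p : ℝ × ℝ => m p.1 p.2) (Ici 0 ×ˢ Icc 0 1) ∧
      (∀ t ∈ Ici (0:ℝ), ∀ ζ ∈ Icc (0:ℝ) 1,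
        HasDerivWithinAt (fun z => wt t z) (m t ζ) (Icc 0 1) ζ) ∧
      (∀ t ∈ Ici (0:ℝ), ∀ ζ ∈ Icc (0:ℝ) 1,
        HasDerivWithinAt (fun s => wz s ζ) (m t ζ) (Ici 0) t) := by
  set S : Set (ℝ × ℝ) := Ici 0 ×ˢ Icc 0 1 with hSdef
  have hS : UniqueDiffOn ℝ S := (uniqueDiffOn_Ici 0).prod uniqueDiffOn_Icc_zero_one
  set W : ℝ × ℝ → ℝ := fun p => w p.1 p.2 with hWdef
  set f : ℝ × ℝ → (ℝ × ℝ) →L[ℝ] ℝ := fderivWithin ℝ W S with hfdef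
  set f' : ℝ × ℝ → (ℝ × ℝ) →L[ℝ] (ℝ × ℝ) →L[ℝ] ℝ := fderivWithin ℝ f S with hf'def
  have hfC1 : ContDiffOn ℝ 1 f S := hw.fderivWithin hS (by norm_num)
  have hf'C0 : ContinuousOn f' S := (hfC1.fderivWithin (m := 0) hS (by norm_num)).continuousOn
  have hfd : ∀ p ∈ S, HasFDerivWithinAt W (f p) S p := fun p hp =>
    ((hw p hp).differentiableWithinAt (by norm_num)).hasFDerivWithinAt
  have hf'd : ∀ p ∈ S, HasFDerivWithinAt f (f' p) S p := fun p hp =>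
    ((hfC1 p hp).differentiableWithinAt one_ne_zero).hasFDerivWithinAt
  -- membership
  have hmem : ∀ {t ζ : ℝ}, t ∈ Ici (0:ℝ) → ζ ∈ Icc (0:ℝ) 1 → (t, ζ) ∈ S := fun ht hζ =>
    ⟨ht, hζ⟩
  -- inner curves
  have hcurveT : ∀ (ζ : ℝ) (t : ℝ), HasDerivWithinAt (fun s : ℝ => (s, ζ)) ((1:ℝ), (0:ℝ)) (Ici 0) t :=
    fun ζ t => ((hasDerivAt_id t).prodMk (hasDerivAt_const t ζ)).hasDerivWithinAt
  have hcurveZ : ∀ (t : ℝ) (ζ : ℝ), HasDerivWithinAt (fun z : ℝ => (t, z)) ((0:ℝ), (1:ℝ)) (Icc 0 1) ζ :=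
    fun t ζ => ((hasDerivAt_const ζ t).prodMk (hasDerivAt_id ζ)).hasDerivWithinAt
  have hmapT : ∀ {ζ : ℝ}, ζ ∈ Icc (0:ℝ) 1 → MapsTo (fun s : ℝ => (s, ζ)) (Ici 0) S :=
    fun hζ s hs => ⟨hs, hζ⟩
  have hmapZ : ∀ {t : ℝ}, t ∈ Ici (0:ℝ) → MapsTo (fun z : ℝ => (t, z)) (Icc 0 1) S :=
    fun ht z hz => ⟨ht, hz⟩
  -- identification of wt and wz
  have hwt_eq : ∀ t ∈ Ici (0:ℝ), ∀ ζ ∈ Icc (0:ℝ) 1, wt t ζ = f (t, ζ) (1, 0) := by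
    intro t ht ζ hζ
    have h1 : HasDerivWithinAt (fun s => w s ζ) (f (t, ζ) ((1:ℝ), (0:ℝ))) (Ici 0) t :=
      ((hfd _ (hmem ht hζ)).comp_hasDerivWithinAt t (hcurveT ζ t) (hmapT hζ) :)
    have := (hwt t ht ζ hζ).derivWithin (uniqueDiffOn_Ici 0 t ht)
    rw [← this, h1.derivWithin (uniqueDiffOn_Ici 0 t ht)]
  have hwz_eq : ∀ t ∈ Ici (0:ℝ), ∀ ζ ∈ Icc (0:ℝ) 1, wz t ζ = f (t, ζ) (0, 1) := by
    intro t ht ζ hζ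
    have h1 : HasDerivWithinAt (fun z => w t z) (f (t, ζ) ((0:ℝ), (1:ℝ))) (Icc 0 1) ζ :=
      (hfd _ (hmem ht hζ)).comp_hasDerivWithinAt ζ (hcurveZ t ζ) (hmapZ ht)
    have := (hwz t ht ζ hζ).derivWithin (uniqueDiffOn_Icc_zero_one ζ hζ)
    rw [← this, h1.derivWithin (uniqueDiffOn_Icc_zero_one ζ hζ)]
  -- symmetry
  have hsymm : ∀ t ∈ Ici (0:ℝ), ∀ ζ ∈ Icc (0:ℝ) 1,
      f' (t, ζ) (0, 1) (1, 0) = f' (t, ζ) (1, 0) (0, 1) := by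
    intro t ht ζ hζ
    have hcl : (t, ζ) ∈ closure (interior S) := by
      rw [hSdef, interior_prod_eq, interior_Ici, interior_Icc, closure_prod_eq,
        closure_Ioi, closure_Ioo one_ne_zero.symm]
      exact ⟨ht, hζ⟩
    exact ((hw (t, ζ) (hmem ht hζ)).isSymmSndFDerivWithinAt (by simp) hS hcl (hmem ht hζ))
      (0, 1) (1, 0)
  refine ⟨fun t ζ => f' (t, ζ) (1, 0) (0, 1), ?_, ?_, ?_⟩
  · exact (hf'C0.clm_apply continuousOn_const).clm_apply continuousOn_const
  · intro t ht ζ hζ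
    have h1 : HasDerivWithinAt (fun z => f (t, z)) (f' (t, ζ) ((0:ℝ), (1:ℝ))) (Icc 0 1) ζ :=
      (hf'd _ (hmem ht hζ)).comp_hasDerivWithinAt ζ (hcurveZ t ζ) (hmapZ ht)
    have h2 : HasDerivWithinAt (fun z => f (t, z) ((1:ℝ), (0:ℝ)))
        (f' (t, ζ) (0, 1) (1, 0)) (Icc 0 1) ζ := by
      have := h1.clm_apply (hasDerivWithinAt_const ζ (Icc (0:ℝ) 1) ((1:ℝ), (0:ℝ)))
      simpa using this
    rw [hsymm t ht ζ hζ] at h2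
    exact h2.congr (fun z hz => hwt_eq t ht z hz) (hwt_eq t ht ζ hζ)
  · intro t ht ζ hζ
    have h1 : HasDerivWithinAt (fun s => f (s, ζ)) (f' (t, ζ) ((1:ℝ), (0:ℝ))) (Ici 0) t :=
      (hf'd _ (hmem ht hζ)).comp_hasDerivWithinAt t (hcurveT ζ t) (hmapT hζ)
    have h2 : HasDerivWithinAt (fun s => f (s, ζ) ((0:ℝ), (1:ℝ)))
        (f' (t, ζ) (1, 0) (0, 1)) (Ici 0) t := by
      have := h1.clm_apply (hasDerivWithinAt_const t (Ici (0:ℝ)) ((0:ℝ), (1:ℝ)))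
      simpa using this
    exact h2.congr (fun s hs => hwz_eq s hs ζ hζ) (hwz_eq t ht ζ hζ)

lemma stmt10_sign (v gv : ℝ) (h : v ≤ 0) (h2 : gv ≤ 0) : 0 ≤ v * gv := by nlinarith

lemma stmt10_gsq (κ b gb : ℝ) (habs : b * gb = |b| * |gb|) (h2 : |gb| ≤ κ * |b|) :
    gb ^ 2 ≤ κ * (b * gb) := by
  have h1 : |gb| * |gb| ≤ κ * |b| * |gb| := mul_le_mul_of_nonneg_right h2 (abs_nonneg _)
  rw [habs]
  nlinarith [sq_abs gb]

lemma stmt10_bsq (κ b gb : ℝ) (hκ : 1 ≤ κ) (habs : b * gb = |b| * |gb|)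
    (h1 : κ⁻¹ * |b| ≤ |gb|) : b ^ 2 ≤ κ * (b * gb) := by
  have h1' : |b| ≤ κ * |gb| := by
    have h2 := mul_le_mul_of_nonneg_left h1 (by linarith : (0:ℝ) ≤ κ)
    rwa [← mul_assoc, mul_inv_cancel₀ (by linarith : κ ≠ 0), one_mul] at h2
  have h2 : |b| * |b| ≤ κ * |gb| * |b| := mul_le_mul_of_nonneg_right h1' (abs_nonneg _)
  rw [habs]
  nlinarith [sq_abs b]

lemma stmt10_psi1 (q p x y c : ℝ) (hq : 0 ≤ q) (hp : 0 ≤ p) (hx : x ≤ c) (hy : y ≤ c) :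
    1/2 * (q * x + p * y) ≤ (q + p) / 2 * c := by
  nlinarith [mul_le_mul_of_nonneg_left hx hq, mul_le_mul_of_nonneg_left hy hp]

lemma stmt10_ptF (φv φ1 r ρv EIv a b : ℝ) (hφn : 0 ≤ φv) (hφm : φv ≤ φ1)
    (hρp : 0 ≤ ρv) (hEIp : 0 ≤ EIv) (hrE : ρv ≤ r * EIv) (hr0 : 0 ≤ r) (hφ1 : 0 ≤ φ1) :
    φv * ρv * a * b ≤ φ1 * (1 + r) / 2 * (ρv * a ^ 2 + EIv * b ^ 2) ∧
    -(φ1 * (1 + r) / 2) * (ρv * a ^ 2 + EIv * b ^ 2) ≤ φv * ρv * a * b := by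
  constructor
  · nlinarith [mul_nonneg (mul_nonneg hρp hφn) (sq_nonneg (a - b)),
      mul_le_mul_of_nonneg_right (mul_le_mul hφm hrE hρp hφ1) (sq_nonneg b),
      mul_le_mul_of_nonneg_right (mul_le_mul_of_nonneg_right hφm hρp) (sq_nonneg a),
      mul_nonneg (mul_nonneg hφ1 hr0) (mul_nonneg hρp (sq_nonneg a)),
      mul_nonneg hφ1 (mul_nonneg hEIp (sq_nonneg b))]
  · nlinarith [mul_nonneg (mul_nonneg hρp hφn) (sq_nonneg (a + b)),
      mul_le_mul_of_nonneg_right (mul_le_mul hφm hrE hρp hφ1) (sq_nonneg b),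
      mul_le_mul_of_nonneg_right (mul_le_mul_of_nonneg_right hφm hρp) (sq_nonneg a),
      mul_nonneg (mul_nonneg hφ1 hr0) (mul_nonneg hρp (sq_nonneg a)),
      mul_nonneg hφ1 (mul_nonneg hEIp (sq_nonneg b))]

lemma stmt10_halves (X1 X2 Y1 Y2 : ℝ) (h : X2 ≤ Y1) (h' : X1 ≤ Y2) :
    1/2 * (X1 + X2) ≤ 1/2 * (Y1 + Y2) := by linarith

lemma stmt10_double (a b : ℝ) (h : 1/2 * a ≤ b) : a ≤ 2 * b := by linarith

lemma stmt10_Vle (E F ε lam : ℝ) (h1 : F ≤ lam * E) (hE : 0 ≤ E) (hεl : ε * lam ≤ 1/2)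
    (hε : 0 ≤ ε) : E + ε * F ≤ 3/2 * E := by
  nlinarith [mul_le_mul_of_nonneg_left h1 hε, mul_le_mul_of_nonneg_right hεl hE]

lemma stmt10_Vge (E F ε lam : ℝ) (h1 : -(lam * E) ≤ F) (hE : 0 ≤ E) (hεl : ε * lam ≤ 1/2)
    (hε : 0 ≤ ε) : 1/2 * E ≤ E + ε * F := by
  nlinarith [mul_le_mul_of_nonneg_left h1 hε, mul_le_mul_of_nonneg_right hεl hE]

lemma stmt10_Vd (Bv I E ε c₁ : ℝ) (hI : I ≤ c₁ * Bv - E) (hB : 0 ≤ Bv)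
    (hεc : ε * c₁ ≤ 1) (hε : 0 ≤ ε) : -Bv + ε * I ≤ -(ε * E) := by
  nlinarith [mul_le_mul_of_nonneg_left hI hε, mul_le_mul_of_nonneg_right hεc hB]

lemma stmt10_Gd (e ω V d : ℝ) (he : 0 ≤ e) (hd : d ≤ ω * V) : e * -ω * V + e * d ≤ 0 := by
  nlinarith [mul_le_mul_of_nonneg_left hd he]

lemma stmt10_fin (Et Vt e V0 E0 : ℝ) (h1 : Et ≤ 2 * Vt) (h2 : Vt ≤ e * V0)
    (h3 : e * V0 ≤ e * (3/2 * E0)) : Et ≤ 3 * e * E0 := by nlinarith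

end stmt10helpers

/-- Example 5.9 of the paper.
Exponential energy decay for the one-dimensional wave equation
`ρ w_tt = (EI w_ζ)_ζ` with `w_t(t,0) = 0` and a nonlinear monotone damper
`(EI w_ζ)(t,1) = -g(w_t(t,1))` of linear growth, for classical solutions. -/
theorem stmt_10 (ρ EI : ℝ → ℝ)
    (hρ : ContDiffOn ℝ 1 ρ (Icc (0:ℝ) 1)) (hEI : ContDiffOn ℝ 1 EI (Icc (0:ℝ) 1))
    (ρ₀ e₀ : ℝ) (hρ₀ : 0 < ρ₀) (he₀ : 0 < e₀)
    (hρb : ∀ ζ ∈ Icc (0:ℝ) 1, ρ₀ ≤ ρ ζ) (hEIb : ∀ ζ ∈ Icc (0:ℝ) 1, e₀ ≤ EI ζ)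
    (κ : ℝ) (hκ : 1 ≤ κ) :
    ∃ M ω : ℝ, 1 ≤ M ∧ ω < 0 ∧
      ∀ g : ℝ → ℝ, Monotone g → g 0 = 0 →
        (∀ v : ℝ, κ⁻¹ * |v| ≤ |g v| ∧ |g v| ≤ κ * |v|) →
        ∀ w wt wz wtt vz : ℝ → ℝ → ℝ,
          -- `w` is twice continuously differentiable on `[0,∞) × [0,1]`:
          ContDiffOn ℝ 2 (fun p : ℝ × ℝ => w p.1 p.2) (Ici 0 ×ˢ Icc 0 1) →
          ContinuousOn (fun p : ℝ × ℝ => wt p.1 p.2) (Ici 0 ×ˢ Icc 0 1) →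
          ContinuousOn (fun p : ℝ × ℝ => wz p.1 p.2) (Ici 0 ×ˢ Icc 0 1) →
          ContinuousOn (fun p : ℝ × ℝ => wtt p.1 p.2) (Ici 0 ×ˢ Icc 0 1) →
          ContinuousOn (fun p : ℝ × ℝ => vz p.1 p.2) (Ici 0 ×ˢ Icc 0 1) →
          (∀ t ∈ Ici (0:ℝ), ∀ ζ ∈ Icc (0:ℝ) 1,
            HasDerivWithinAt (fun s => w s ζ) (wt t ζ) (Ici 0) t) →
          (∀ t ∈ Ici (0:ℝ), ∀ ζ ∈ Icc (0:ℝ) 1,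
            HasDerivWithinAt (fun s => wt s ζ) (wtt t ζ) (Ici 0) t) →
          (∀ t ∈ Ici (0:ℝ), ∀ ζ ∈ Icc (0:ℝ) 1,
            HasDerivWithinAt (fun z => w t z) (wz t ζ) (Icc 0 1) ζ) →
          (∀ t ∈ Ici (0:ℝ), ∀ ζ ∈ Icc (0:ℝ) 1,
            HasDerivWithinAt (fun z => EI z * wz t z) (vz t ζ) (Icc 0 1) ζ) →
          -- the wave equation:
          (∀ t ∈ Ici (0:ℝ), ∀ ζ ∈ Icc (0:ℝ) 1, ρ ζ * wtt t ζ = vz t ζ) →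
          -- the boundary conditions:
          (∀ t ∈ Ici (0:ℝ), wt t 0 = 0) →
          (∀ t ∈ Ici (0:ℝ), EI 1 * wz t 1 = -g (wt t 1)) →
          -- exponential decay of the energy:
          ∀ t ∈ Ici (0:ℝ),
            (1/2) * (∫ ζ in (0:ℝ)..1, ρ ζ * (wt t ζ) ^ 2 + EI ζ * (wz t ζ) ^ 2)
              ≤ M * Real.exp (ω * t) *
                ((1/2) * ∫ ζ in (0:ℝ)..1, ρ ζ * (wt 0 ζ) ^ 2 + EI ζ * (wz 0 ζ) ^ 2) := by
  have hUD : UniqueDiffOn ℝ (Icc (0:ℝ) 1) := uniqueDiffOn_Icc_zero_one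
  have h01 : (0:ℝ) ∈ Icc (0:ℝ) 1 := ⟨le_refl 0, zero_le_one⟩
  have h11 : (1:ℝ) ∈ Icc (0:ℝ) 1 := ⟨zero_le_one, le_refl 1⟩
  set ρ' : ℝ → ℝ := derivWithin ρ (Icc 0 1) with hρ'def
  set EI' : ℝ → ℝ := derivWithin EI (Icc 0 1) with hEI'def
  have hρ'd : ∀ ζ ∈ Icc (0:ℝ) 1, HasDerivWithinAt ρ (ρ' ζ) (Icc 0 1) ζ :=
    fun ζ hζ => ((hρ.differentiableOn one_ne_zero) ζ hζ).hasDerivWithinAt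
  have hEI'd : ∀ ζ ∈ Icc (0:ℝ) 1, HasDerivWithinAt EI (EI' ζ) (Icc 0 1) ζ :=
    fun ζ hζ => ((hEI.differentiableOn one_ne_zero) ζ hζ).hasDerivWithinAt
  have hρ'c : ContinuousOn ρ' (Icc (0:ℝ) 1) := hρ.continuousOn_derivWithin hUD le_rfl
  have hEI'c : ContinuousOn EI' (Icc (0:ℝ) 1) := hEI.continuousOn_derivWithin hUD le_rfl
  obtain ⟨Rρ, hRρ⟩ := isCompact_Icc.exists_bound_of_continuousOn hρ.continuousOn
  obtain ⟨Rρ', hRρ'⟩ := isCompact_Icc.exists_bound_of_continuousOn hρ'c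
  obtain ⟨Re, hRe⟩ := isCompact_Icc.exists_bound_of_continuousOn hEI.continuousOn
  obtain ⟨Re', hRe'⟩ := isCompact_Icc.exists_bound_of_continuousOn hEI'c
  have hRρ0 : 0 ≤ Rρ := le_trans (norm_nonneg _) (hRρ 0 h01)
  have hRρ'0 : 0 ≤ Rρ' := le_trans (norm_nonneg _) (hRρ' 0 h01)
  have hRe0 : 0 ≤ Re := le_trans (norm_nonneg _) (hRe 0 h01)
  have hRe'0 : 0 ≤ Re' := le_trans (norm_nonneg _) (hRe' 0 h01)
  have hEIpos : ∀ ζ ∈ Icc (0:ℝ) 1, 0 < EI ζ := fun ζ hζ => lt_of_lt_of_le he₀ (hEIb ζ hζ)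
  have hρpos : ∀ ζ ∈ Icc (0:ℝ) 1, 0 < ρ ζ := fun ζ hζ => lt_of_lt_of_le hρ₀ (hρb ζ hζ)
  set K : ℝ := 1 + (Rρ' + Rρ)/ρ₀ + (Re' + Re)/e₀ with hKdef
  have hK1 : 1 ≤ K := by
    have h1 : 0 ≤ (Rρ' + Rρ)/ρ₀ := by positivity
    have h2 : 0 ≤ (Re' + Re)/e₀ := by positivity
    simp only [hKdef]; linarith
  have hKρ : ρ₀ + Rρ' + Rρ ≤ K * ρ₀ := by
    have h1 : (Rρ' + Rρ)/ρ₀ * ρ₀ = Rρ' + Rρ := div_mul_cancel₀ _ (ne_of_gt hρ₀)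
    have h2 : 0 ≤ (Re' + Re)/e₀ * ρ₀ := by positivity
    simp only [hKdef]; nlinarith
  have hKe : e₀ + Re' + Re ≤ K * e₀ := by
    have h1 : (Re' + Re)/e₀ * e₀ = Re' + Re := div_mul_cancel₀ _ (ne_of_gt he₀)
    have h2 : 0 ≤ (Rρ' + Rρ)/ρ₀ * e₀ := by positivity
    simp only [hKdef]; nlinarith
  set φ : ℝ → ℝ := fun ζ => Real.exp (K*ζ) - 1 with hφdef
  set φ' : ℝ → ℝ := fun ζ => Real.exp (K*ζ) * K with hφ'def
  have hφd : ∀ ζ : ℝ, HasDerivAt φ (φ' ζ) ζ := by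
    intro ζ
    have h1 : HasDerivAt (fun z : ℝ => K * z) (K * 1) ζ := (hasDerivAt_id ζ).const_mul K
    have h2 := ((Real.hasDerivAt_exp (K*ζ)).comp ζ h1).sub_const 1
    simpa [hφdef, hφ'def, mul_comm] using h2
  have hφc : Continuous φ := by
    simp only [hφdef]; continuity
  have hexp1 : ∀ ζ ∈ Icc (0:ℝ) 1, 1 ≤ Real.exp (K*ζ) := by
    intro ζ hζ
    have : (0:ℝ) ≤ K * ζ := mul_nonneg (by linarith) hζ.1
    nlinarith [Real.add_one_le_exp (K*ζ)]
  have hφnn : ∀ ζ ∈ Icc (0:ℝ) 1, 0 ≤ φ ζ := fun ζ hζ => by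
    simp only [hφdef, sub_nonneg]; exact hexp1 ζ hζ
  have hφ1nn : 0 ≤ φ 1 := hφnn 1 h11
  have hφmono : ∀ ζ ∈ Icc (0:ℝ) 1, φ ζ ≤ φ 1 := by
    intro ζ hζ
    simp only [hφdef, sub_le_sub_iff_right, Real.exp_le_exp]
    nlinarith [hζ.1, hζ.2]
  set P : ℝ → ℝ := fun ζ => φ ζ * ρ ζ with hPdef
  set P' : ℝ → ℝ := fun ζ => φ' ζ * ρ ζ + φ ζ * ρ' ζ with hP'def
  set Q : ℝ → ℝ := fun ζ => φ ζ / EI ζ with hQdef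
  set Q' : ℝ → ℝ := fun ζ => (φ' ζ * EI ζ - φ ζ * EI' ζ) / EI ζ ^ 2 with hQ'def
  have hPd : ∀ ζ ∈ Icc (0:ℝ) 1, HasDerivWithinAt P (P' ζ) (Icc 0 1) ζ :=
    fun ζ hζ => (hφd ζ).hasDerivWithinAt.mul (hρ'd ζ hζ)
  have hQd : ∀ ζ ∈ Icc (0:ℝ) 1, HasDerivWithinAt Q (Q' ζ) (Icc 0 1) ζ :=
    fun ζ hζ => (hφd ζ).hasDerivWithinAt.div (hEI'd ζ hζ) (ne_of_gt (hEIpos ζ hζ))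
  have hPc : ContinuousOn P (Icc (0:ℝ) 1) := hφc.continuousOn.mul hρ.continuousOn
  have hQc : ContinuousOn Q (Icc (0:ℝ) 1) :=
    hφc.continuousOn.div hEI.continuousOn (fun ζ hζ => ne_of_gt (hEIpos ζ hζ))
  have hφ'c : Continuous φ' := by simp only [hφ'def]; continuity
  have hP'c : ContinuousOn P' (Icc (0:ℝ) 1) :=
    (hφ'c.continuousOn.mul hρ.continuousOn).add (hφc.continuousOn.mul hρ'c)
  have hQ'c : ContinuousOn Q' (Icc (0:ℝ) 1) :=
    ((hφ'c.continuousOn.mul hEI.continuousOn).sub (hφc.continuousOn.mul hEI'c)).div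
      (hEI.continuousOn.pow 2) (fun ζ hζ => pow_ne_zero 2 (ne_of_gt (hEIpos ζ hζ)))
  have hφ0 : φ 0 = 0 := by simp [hφdef]
  -- lower bounds on the derivative coefficients
  have hP'ge : ∀ ζ ∈ Icc (0:ℝ) 1, ρ ζ ≤ P' ζ := by
    intro ζ hζ
    have he1 : 1 ≤ Real.exp (K * ζ) := hexp1 ζ hζ
    have hρ'b : -Rρ' ≤ ρ' ζ ∧ ρ' ζ ≤ Rρ' := abs_le.mp (by rw [← Real.norm_eq_abs]; exact hRρ' ζ hζ)
    have hρub : ρ ζ ≤ Rρ := le_trans (le_abs_self _) (by rw [← Real.norm_eq_abs]; exact hRρ ζ hζ)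
    have hρlb : ρ₀ ≤ ρ ζ := hρb ζ hζ
    simp only [hP'def, hφ'def, hφdef]
    set e := Real.exp (K * ζ) with hedef
    -- goal : ρ ζ ≤ e * K * ρ ζ + (e - 1) * ρ' ζ
    have t1 : e * (ρ₀ + Rρ' + Rρ) ≤ e * (K * ρ₀) :=
      mul_le_mul_of_nonneg_left hKρ (by linarith)
    have t2 : e * (K * ρ₀) ≤ e * (K * ρ ζ) :=
      mul_le_mul_of_nonneg_left (mul_le_mul_of_nonneg_left hρlb (by linarith)) (by linarith)
    have t3 : (e - 1) * (-Rρ') ≤ (e - 1) * ρ' ζ :=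
      mul_le_mul_of_nonneg_left hρ'b.1 (by linarith)
    nlinarith [t1, t2, t3]
  have hQ'ge : ∀ ζ ∈ Icc (0:ℝ) 1, EI ζ ≤ φ' ζ * EI ζ - φ ζ * EI' ζ := by
    intro ζ hζ
    have he1 : 1 ≤ Real.exp (K * ζ) := hexp1 ζ hζ
    have hb : -Re' ≤ EI' ζ ∧ EI' ζ ≤ Re' := abs_le.mp (by rw [← Real.norm_eq_abs]; exact hRe' ζ hζ)
    have hub : EI ζ ≤ Re := le_trans (le_abs_self _) (by rw [← Real.norm_eq_abs]; exact hRe ζ hζ)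
    have hlb : e₀ ≤ EI ζ := hEIb ζ hζ
    simp only [hφ'def, hφdef]
    set e := Real.exp (K * ζ) with hedef
    have t1 : e * (e₀ + Re' + Re) ≤ e * (K * e₀) :=
      mul_le_mul_of_nonneg_left hKe (by linarith)
    have t2 : e * (K * e₀) ≤ e * (K * EI ζ) :=
      mul_le_mul_of_nonneg_left (mul_le_mul_of_nonneg_left hlb (by linarith)) (by linarith)
    have t3 : (e - 1) * EI' ζ ≤ (e - 1) * Re' :=
      mul_le_mul_of_nonneg_left hb.2 (by linarith)
    nlinarith [t1, t2, t3]
  clear_value K φ φ'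
  clear hKdef hφdef hφ'def hexp1
  -- the ratio r with ρ ≤ r * EI
  set r : ℝ := Rρ / e₀ with hrdef
  have hr0 : 0 ≤ r := by positivity
  have hrEI : ∀ ζ ∈ Icc (0:ℝ) 1, ρ ζ ≤ r * EI ζ := by
    intro ζ hζ
    have hρub : ρ ζ ≤ Rρ := le_trans (le_abs_self _) (by rw [← Real.norm_eq_abs]; exact hRρ ζ hζ)
    have : Rρ = r * e₀ := by rw [hrdef]; field_simp
    have h2 : r * e₀ ≤ r * EI ζ := mul_le_mul_of_nonneg_left (hEIb ζ hζ) hr0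
    linarith
  clear_value r
  set lam : ℝ := φ 1 * (1 + r) with hlamdef
  have hlam0 : 0 ≤ lam := by rw [hlamdef]; positivity
  clear_value lam
  set c₁ : ℝ := κ * (Q 1 + P 1) / 2 with hc₁def
  have hQ1nn : 0 ≤ Q 1 := by rw [hQdef]; exact div_nonneg hφ1nn (hEIpos 1 h11).le
  have hP1nn : 0 ≤ P 1 := by rw [hPdef]; exact mul_nonneg hφ1nn (hρpos 1 h11).le
  have hc₁0 : 0 ≤ c₁ := by rw [hc₁def]; positivity
  clear_value c₁
  set ε : ℝ := min (1/(c₁+1)) (1/(2*lam+2)) with hεdef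
  have hε : 0 < ε := by rw [hεdef]; apply lt_min <;> positivity
  have hεc₁ : ε * c₁ ≤ 1 := by
    have h1 : ε ≤ 1/(c₁+1) := by rw [hεdef]; exact min_le_left _ _
    have h2 : ε * (c₁+1) ≤ 1 := by
      rw [← le_div_iff₀ (by positivity : (0:ℝ) < c₁+1)] at *
      exact h1
    nlinarith
  have hεlam : ε * lam ≤ 1/2 := by
    have h1 : ε ≤ 1/(2*lam+2) := by rw [hεdef]; exact min_le_right _ _
    have h2 : ε * (2*lam+2) ≤ 1 := by
      rw [← le_div_iff₀ (by positivity : (0:ℝ) < 2*lam+2)] at *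
      exact h1
    nlinarith
  clear_value ε
  set ω : ℝ := -(2*ε/3) with hωdef
  have hωneg : ω < 0 := by rw [hωdef]; linarith
  refine ⟨3, ω, by norm_num, hωneg, ?_⟩
  intro g hgmono hg0 hgb w wt wz wtt vz hw hwtc hwzc hwttc hvzc hwt hwtt hwz hvz hwave hbc0 hbc1
  -- sign of v * g v
  have hsign : ∀ v : ℝ, 0 ≤ v * g v := by
    intro v
    rcases le_total 0 v with h | h
    · have h2 : g 0 ≤ g v := hgmono h
      exact mul_nonneg h (by rw [← hg0]; exact h2)
    · have h2 : g v ≤ g 0 := hgmono h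
      exact stmt10_sign _ _ h (by rw [← hg0]; exact h2)
  obtain ⟨m, hmc, hmz, hmt⟩ := stmt10_mixed w wt wz hw hwt hwz
  have intg0 : ∀ {f : ℝ → ℝ}, ContinuousOn f (Icc (0:ℝ) 1) → IntervalIntegrable f volume 0 1 :=
    fun hf => ContinuousOn.intervalIntegrable (by rw [uIcc_of_le zero_le_one]; exact hf)
  have hcoef : ∀ {c : ℝ → ℝ}, ContinuousOn c (Icc (0:ℝ) 1) →
      ContinuousOn (fun p : ℝ × ℝ => c p.2) (Ici 0 ×ˢ Icc 0 1) := fun hc =>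
    hc.comp continuous_snd.continuousOn (fun p hp => hp.2)
  have hwtAt : ∀ x ∈ Ioi (0:ℝ), ∀ ζ ∈ Icc (0:ℝ) 1, HasDerivAt (fun s => wt s ζ) (wtt x ζ) x :=
    fun x hx ζ hζ => (hwtt x (Ioi_subset_Ici_self hx) ζ hζ).hasDerivAt (Ici_mem_nhds hx)
  have hwzAt : ∀ x ∈ Ioi (0:ℝ), ∀ ζ ∈ Icc (0:ℝ) 1, HasDerivAt (fun s => wz s ζ) (m x ζ) x :=
    fun x hx ζ hζ => (hmt x (Ioi_subset_Ici_self hx) ζ hζ).hasDerivAt (Ici_mem_nhds hx)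
  have hmzAt : ∀ t ∈ Ici (0:ℝ), ∀ ζ ∈ Ioo (0:ℝ) 1, HasDerivAt (fun z => wt t z) (m t ζ) ζ :=
    fun t ht ζ hζ => (hmz t ht ζ (Ioo_subset_Icc_self hζ)).hasDerivAt (Icc_mem_nhds hζ.1 hζ.2)
  have hvzAt : ∀ t ∈ Ici (0:ℝ), ∀ ζ ∈ Ioo (0:ℝ) 1,
      HasDerivAt (fun z => EI z * wz t z) (vz t ζ) ζ :=
    fun t ht ζ hζ => (hvz t ht ζ (Ioo_subset_Icc_self hζ)).hasDerivAt (Icc_mem_nhds hζ.1 hζ.2)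
  set Eh : ℝ → ℝ → ℝ := fun t ζ => ρ ζ * wt t ζ ^ 2 + EI ζ * wz t ζ ^ 2 with hEhdef
  set Fh : ℝ → ℝ → ℝ := fun t ζ => φ ζ * ρ ζ * wt t ζ * wz t ζ with hFhdef
  set En : ℝ → ℝ := fun t => (1/2) * ∫ ζ in (0:ℝ)..1, Eh t ζ with hEndef
  set Fn : ℝ → ℝ := fun t => ∫ ζ in (0:ℝ)..1, Fh t ζ with hFndef
  set B : ℝ → ℝ := fun t => wt t 1 * g (wt t 1) with hBdef
  have hEhc : ContinuousOn (fun p : ℝ × ℝ => Eh p.1 p.2) (Ici 0 ×ˢ Icc 0 1) := by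
    simp only [hEhdef]
    exact ((hcoef hρ.continuousOn).mul (hwtc.pow 2)).add
      ((hcoef hEI.continuousOn).mul (hwzc.pow 2))
  have hFhc : ContinuousOn (fun p : ℝ × ℝ => Fh p.1 p.2) (Ici 0 ×ˢ Icc 0 1) := by
    simp only [hFhdef]
    exact (((hcoef hφc.continuousOn).mul (hcoef hρ.continuousOn)).mul hwtc).mul hwzc
  set DE : ℝ → ℝ → ℝ :=
    fun x ζ => ρ ζ * (2 * wt x ζ * wtt x ζ) + EI ζ * (2 * wz x ζ * m x ζ) with hDEdef
  set DF : ℝ → ℝ → ℝ :=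
    fun x ζ => φ ζ * ρ ζ * wtt x ζ * wz x ζ + φ ζ * ρ ζ * wt x ζ * m x ζ with hDFdef
  have hDEc : ContinuousOn (fun p : ℝ × ℝ => DE p.1 p.2) (Ici 0 ×ˢ Icc 0 1) := by
    simp only [hDEdef]
    exact ((hcoef hρ.continuousOn).mul ((continuousOn_const.mul hwtc).mul hwttc)).add
      ((hcoef hEI.continuousOn).mul ((continuousOn_const.mul hwzc).mul hmc))
  have hDFc : ContinuousOn (fun p : ℝ × ℝ => DF p.1 p.2) (Ici 0 ×ˢ Icc 0 1) := by
    simp only [hDFdef]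
    exact ((((hcoef hφc.continuousOn).mul (hcoef hρ.continuousOn)).mul hwttc).mul hwzc).add
      ((((hcoef hφc.continuousOn).mul (hcoef hρ.continuousOn)).mul hwtc).mul hmc)
  have hEnD : ∀ t₀ ∈ Ioi (0:ℝ),
      HasDerivAt (fun t => ∫ ζ in (0:ℝ)..1, Eh t ζ) (∫ ζ in (0:ℝ)..1, DE t₀ ζ) t₀ := by
    intro t₀ ht₀
    refine stmt10_param_deriv Eh DE hEhc hDEc ?_ ht₀
    intro x hx ζ hζ
    have h1 := ((hwtAt x hx ζ hζ).pow 2).const_mul (ρ ζ)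
    have h2 := ((hwzAt x hx ζ hζ).pow 2).const_mul (EI ζ)
    have h3 := h1.add h2
    simp only [hEhdef, hDEdef]
    convert h3 using 1 <;> norm_num <;> rfl
  have hFnD : ∀ t₀ ∈ Ioi (0:ℝ),
      HasDerivAt (fun t => ∫ ζ in (0:ℝ)..1, Fh t ζ) (∫ ζ in (0:ℝ)..1, DF t₀ ζ) t₀ := by
    intro t₀ ht₀
    refine stmt10_param_deriv Fh DF hFhc hDFc ?_ ht₀
    intro x hx ζ hζ
    have h1 := ((hwtAt x hx ζ hζ).const_mul (φ ζ * ρ ζ)).mul (hwzAt x hx ζ hζ)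
    simp only [hFhdef, hDFdef]
    exact h1
  have hBnn : ∀ t ∈ Ici (0:ℝ), 0 ≤ B t := fun t _ => by
    simp only [hBdef]; exact hsign (wt t 1)
  have hEDI : ∀ t₀ ∈ Ioi (0:ℝ), (∫ ζ in (0:ℝ)..1, DE t₀ ζ) = -(2 * B t₀) := by
    intro t₀ ht₀
    have ht₀' : t₀ ∈ Ici (0:ℝ) := Ioi_subset_Ici_self ht₀
    have hkey : ∀ ζ ∈ Icc (0:ℝ) 1,
        DE t₀ ζ = 2 * (m t₀ ζ * (EI ζ * wz t₀ ζ) + wt t₀ ζ * vz t₀ ζ) := by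
      intro ζ hζ
      have hwv := hwave t₀ ht₀' ζ hζ
      simp only [hDEdef]
      rw [← hwv]; ring
    have hΦc : ContinuousOn (fun z => wt t₀ z * (EI z * wz t₀ z)) (Icc (0:ℝ) 1) :=
      (stmt10_sliceZ hwtc ht₀').mul (hEI.continuousOn.mul (stmt10_sliceZ hwzc ht₀'))
    have hΦ'int : IntervalIntegrable
        (fun ζ => m t₀ ζ * (EI ζ * wz t₀ ζ) + wt t₀ ζ * vz t₀ ζ) volume 0 1 :=
      intg0 (((stmt10_sliceZ hmc ht₀').mul
        (hEI.continuousOn.mul (stmt10_sliceZ hwzc ht₀'))).add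
        ((stmt10_sliceZ hwtc ht₀').mul (stmt10_sliceZ hvzc ht₀')))
    have hftc := stmt10_ftc (fun z => wt t₀ z * (EI z * wz t₀ z))
      (fun ζ => m t₀ ζ * (EI ζ * wz t₀ ζ) + wt t₀ ζ * vz t₀ ζ) hΦc
      (fun ζ hζ => (hmzAt t₀ ht₀' ζ hζ).mul (hvzAt t₀ ht₀' ζ hζ)) hΦ'int
    calc (∫ ζ in (0:ℝ)..1, DE t₀ ζ)
        = ∫ ζ in (0:ℝ)..1, 2 * (m t₀ ζ * (EI ζ * wz t₀ ζ) + wt t₀ ζ * vz t₀ ζ) :=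
          intervalIntegral.integral_congr
            (fun ζ hζ => hkey ζ (by rwa [uIcc_of_le zero_le_one] at hζ))
      _ = 2 * ∫ ζ in (0:ℝ)..1, (m t₀ ζ * (EI ζ * wz t₀ ζ) + wt t₀ ζ * vz t₀ ζ) :=
          intervalIntegral.integral_const_mul _ _
      _ = 2 * (wt t₀ 1 * (EI 1 * wz t₀ 1) - wt t₀ 0 * (EI 0 * wz t₀ 0)) := by rw [hftc]
      _ = -(2 * B t₀) := by
          rw [hbc1 t₀ ht₀', hbc0 t₀ ht₀']
          simp only [hBdef]; ring
  have hEnD' : ∀ t₀ ∈ Ioi (0:ℝ), HasDerivAt En (-B t₀) t₀ := by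
    intro t₀ ht₀
    have h1 := (hEnD t₀ ht₀).const_mul (1/2 : ℝ)
    rw [hEDI t₀ ht₀] at h1
    simp only [hEndef]
    refine h1.congr_deriv ?_
    ring
  -- the derivative bound for Fn
  have hFDI : ∀ t₀ ∈ Ioi (0:ℝ), (∫ ζ in (0:ℝ)..1, DF t₀ ζ) ≤ c₁ * B t₀ - En t₀ := by
    intro t₀ ht₀
    have ht₀' : t₀ ∈ Ici (0:ℝ) := Ioi_subset_Ici_self ht₀
    set u : ℝ → ℝ := fun z => EI z * wz t₀ z with hudef
    set Ψ : ℝ → ℝ := fun z => (1/2) * (Q z * u z ^ 2 + P z * wt t₀ z ^ 2) with hΨdef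
    set Rn : ℝ → ℝ := fun z => (1/2) * (Q' z * u z ^ 2 + P' z * wt t₀ z ^ 2) with hRndef
    have huc : ContinuousOn u (Icc (0:ℝ) 1) := hEI.continuousOn.mul (stmt10_sliceZ hwzc ht₀')
    have hΨc : ContinuousOn Ψ (Icc (0:ℝ) 1) :=
      continuousOn_const.mul ((hQc.mul (huc.pow 2)).add
        (hPc.mul ((stmt10_sliceZ hwtc ht₀').pow 2)))
    have hRnc : ContinuousOn Rn (Icc (0:ℝ) 1) :=
      continuousOn_const.mul ((hQ'c.mul (huc.pow 2)).add
        (hP'c.mul ((stmt10_sliceZ hwtc ht₀').pow 2)))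
    have hRnint : IntervalIntegrable Rn volume 0 1 := intg0 hRnc
    have hDFint : IntervalIntegrable (fun ζ => DF t₀ ζ) volume 0 1 :=
      intg0 (stmt10_sliceZ hDFc ht₀')
    have hΨd : ∀ ζ ∈ Ioo (0:ℝ) 1, HasDerivAt Ψ (Rn ζ + DF t₀ ζ) ζ := by
      intro ζ hζ
      have hζ' : ζ ∈ Icc (0:ℝ) 1 := Ioo_subset_Icc_self hζ
      have hnhds : Icc (0:ℝ) 1 ∈ nhds ζ := Icc_mem_nhds hζ.1 hζ.2
      have hQAt : HasDerivAt Q (Q' ζ) ζ := (hQd ζ hζ').hasDerivAt hnhds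
      have hPAt : HasDerivAt P (P' ζ) ζ := (hPd ζ hζ').hasDerivAt hnhds
      have huAt : HasDerivAt u (vz t₀ ζ) ζ := by
        simp only [hudef]; exact hvzAt t₀ ht₀' ζ hζ
      have hwtA : HasDerivAt (fun z => wt t₀ z) (m t₀ ζ) ζ := hmzAt t₀ ht₀' ζ hζ
      have h1 := ((hQAt.mul (huAt.pow 2)).add (hPAt.mul (hwtA.pow 2))).const_mul (1/2 : ℝ)
      simp only [hΨdef]
      refine h1.congr_deriv ?_
      have hwv := hwave t₀ ht₀' ζ hζ'
      have hEIne : EI ζ ≠ 0 := ne_of_gt (hEIpos ζ hζ')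
      simp only [hRndef, hDFdef, hQdef, hQ'def, hPdef, hP'def, hudef]
      rw [← hwv]
      push_cast
      norm_num
      field_simp
      ring
    have hftc := stmt10_ftc Ψ (fun ζ => Rn ζ + DF t₀ ζ) hΨc hΨd (hRnint.add hDFint)
    have hΨ0 : Ψ 0 = 0 := by
      simp [hΨdef, hQdef, hPdef, hφ0]
    have hΨ1 : Ψ 1 ≤ c₁ * B t₀ := by
      have hb1 := hbc1 t₀ ht₀'
      have hu1 : u 1 = -g (wt t₀ 1) := by simp only [hudef]; rw [hb1]
      set b := wt t₀ 1 with hbdef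
      have habs : b * g b = |b| * |g b| := by
        rw [← abs_mul]; exact (abs_of_nonneg (hsign b)).symm
      have hg2 : g b ^ 2 ≤ κ * (b * g b) := stmt10_gsq κ b (g b) habs (hgb b).2
      have hb2 : b ^ 2 ≤ κ * (b * g b) := stmt10_bsq κ b (g b) hκ habs (hgb b).1
      have hBb : B t₀ = b * g b := by simp only [hBdef, hbdef]
      simp only [hΨdef]
      rw [hu1, hBb, hc₁def]
      have e1 : (-g (wt t₀ 1))^2 = g b ^ 2 := by rw [← hbdef]; ring
      rw [e1]
      have key := stmt10_psi1 (Q 1) (P 1) (g b ^ 2) (b ^ 2) (κ * (b * g b)) hQ1nn hP1nn hg2 hb2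
      calc 1/2 * (Q 1 * g b ^ 2 + P 1 * wt t₀ 1 ^ 2)
          = 1/2 * (Q 1 * g b ^ 2 + P 1 * b ^ 2) := by rw [← hbdef]
        _ ≤ (Q 1 + P 1) / 2 * (κ * (b * g b)) := key
        _ = κ * (Q 1 + P 1) / 2 * (b * g b) := by ring
    have hRnge : En t₀ ≤ ∫ ζ in (0:ℝ)..1, Rn ζ := by
      have hpt : ∀ ζ ∈ Icc (0:ℝ) 1, (1/2 : ℝ) * Eh t₀ ζ ≤ Rn ζ := by
        intro ζ hζ
        have hEIne : EI ζ ≠ 0 := ne_of_gt (hEIpos ζ hζ)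
        have h1 : Q' ζ * u ζ ^ 2 = (φ' ζ * EI ζ - φ ζ * EI' ζ) * wz t₀ ζ ^ 2 := by
          simp only [hQ'def, hudef]
          field_simp
        have h2 : EI ζ * wz t₀ ζ ^ 2 ≤ (φ' ζ * EI ζ - φ ζ * EI' ζ) * wz t₀ ζ ^ 2 :=
          mul_le_mul_of_nonneg_right (hQ'ge ζ hζ) (sq_nonneg _)
        have h3 : ρ ζ * wt t₀ ζ ^ 2 ≤ P' ζ * wt t₀ ζ ^ 2 :=
          mul_le_mul_of_nonneg_right (hP'ge ζ hζ) (sq_nonneg _)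
        simp only [hRndef, hEhdef]
        rw [h1]
        exact stmt10_halves _ _ _ _ h2 h3
      have h4 : (∫ ζ in (0:ℝ)..1, (1/2 : ℝ) * Eh t₀ ζ) ≤ ∫ ζ in (0:ℝ)..1, Rn ζ :=
        intervalIntegral.integral_mono_on zero_le_one
          ((intg0 (stmt10_sliceZ hEhc ht₀')).const_mul _) hRnint hpt
      rw [intervalIntegral.integral_const_mul] at h4
      simp only [hEndef]
      exact h4
    have hsplit : (∫ ζ in (0:ℝ)..1, Rn ζ) + (∫ ζ in (0:ℝ)..1, DF t₀ ζ) = Ψ 1 - Ψ 0 := by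
      rw [← intervalIntegral.integral_add hRnint hDFint]; exact hftc
    rw [hΨ0, sub_zero] at hsplit
    linarith
  -- nonnegativity and comparison of the functionals
  have hEnn : ∀ t ∈ Ici (0:ℝ), 0 ≤ En t := by
    intro t ht
    have h5 : 0 ≤ ∫ ζ in (0:ℝ)..1, Eh t ζ := by
      apply intervalIntegral.integral_nonneg zero_le_one
      intro ζ hζ
      have l1 := (hρpos ζ hζ).le
      have l2 := (hEIpos ζ hζ).le
      simp only [hEhdef]
      positivity
    simp only [hEndef]
    linarith
  have hptF : ∀ t ∈ Ici (0:ℝ), ∀ ζ ∈ Icc (0:ℝ) 1,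
      Fh t ζ ≤ (lam/2) * Eh t ζ ∧ (-(lam/2)) * Eh t ζ ≤ Fh t ζ := by
    intro t ht ζ hζ
    have hφn := hφnn ζ hζ
    have hφm := hφmono ζ hζ
    have hρp := (hρpos ζ hζ).le
    have hEIp := (hEIpos ζ hζ).le
    have hrE := hrEI ζ hζ
    have key := stmt10_ptF (φ ζ) (φ 1) r (ρ ζ) (EI ζ) (wt t ζ) (wz t ζ)
      hφn hφm hρp hEIp hrE hr0 hφ1nn
    simp only [hFhdef, hEhdef, hlamdef]
    exact key
  have hFle : ∀ t ∈ Ici (0:ℝ), Fn t ≤ lam * En t := by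
    intro t ht
    have h1 : (∫ ζ in (0:ℝ)..1, Fh t ζ) ≤ ∫ ζ in (0:ℝ)..1, (lam/2) * Eh t ζ :=
      intervalIntegral.integral_mono_on zero_le_one (intg0 (stmt10_sliceZ hFhc ht))
        ((intg0 (stmt10_sliceZ hEhc ht)).const_mul _) (fun ζ hζ => (hptF t ht ζ hζ).1)
    rw [intervalIntegral.integral_const_mul] at h1
    simp only [hFndef, hEndef]
    linarith
  have hFge : ∀ t ∈ Ici (0:ℝ), -(lam * En t) ≤ Fn t := by
    intro t ht
    have h1 : (∫ ζ in (0:ℝ)..1, (-(lam/2)) * Eh t ζ) ≤ ∫ ζ in (0:ℝ)..1, Fh t ζ :=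
      intervalIntegral.integral_mono_on zero_le_one
        ((intg0 (stmt10_sliceZ hEhc ht)).const_mul _) (intg0 (stmt10_sliceZ hFhc ht))
        (fun ζ hζ => (hptF t ht ζ hζ).2)
    rw [intervalIntegral.integral_const_mul] at h1
    simp only [hFndef, hEndef]
    linarith
  set V : ℝ → ℝ := fun t => En t + ε * Fn t with hVdef
  have hVle : ∀ t ∈ Ici (0:ℝ), V t ≤ (3/2) * En t := by
    intro t ht
    simp only [hVdef]
    exact stmt10_Vle (En t) (Fn t) ε lam (hFle t ht) (hEnn t ht) hεlam hε.le
  have hVge : ∀ t ∈ Ici (0:ℝ), (1/2) * En t ≤ V t := by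
    intro t ht
    simp only [hVdef]
    exact stmt10_Vge (En t) (Fn t) ε lam (hFge t ht) (hEnn t ht) hεlam hε.le
  have hVcont : ContinuousOn V (Ici (0:ℝ)) := by
    have h1 : ContinuousOn En (Ici (0:ℝ)) := by
      simp only [hEndef]
      exact continuousOn_const.mul (stmt10_param_cont Eh hEhc)
    have h2 : ContinuousOn Fn (Ici (0:ℝ)) := by
      simp only [hFndef]
      exact stmt10_param_cont Fh hFhc
    simp only [hVdef]
    exact h1.add (continuousOn_const.mul h2)
  have hVd : ∀ t₀ ∈ Ioi (0:ℝ), ∃ d, HasDerivAt V d t₀ ∧ d ≤ ω * V t₀ := by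
    intro t₀ ht₀
    have ht₀' : t₀ ∈ Ici (0:ℝ) := Ioi_subset_Ici_self ht₀
    refine ⟨-B t₀ + ε * ∫ ζ in (0:ℝ)..1, DF t₀ ζ, ?_, ?_⟩
    · have h1 := (hEnD' t₀ ht₀).add ((hFnD t₀ ht₀).const_mul ε)
      simp only [hVdef, hFndef]
      exact h1
    · have h3 : -B t₀ + ε * (∫ ζ in (0:ℝ)..1, DF t₀ ζ) ≤ -(ε * En t₀) :=
        stmt10_Vd (B t₀) _ (En t₀) ε c₁ (hFDI t₀ ht₀) (hBnn t₀ ht₀') hεc₁ hε.le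
      have h4 : V t₀ ≤ (3/2) * En t₀ := hVle t₀ ht₀'
      have h5 : ω * ((3/2) * En t₀) ≤ ω * V t₀ := mul_le_mul_of_nonpos_left h4 (le_of_lt hωneg)
      have h6 : ω * ((3/2) * En t₀) = -(ε * En t₀) := by rw [hωdef]; ring
      calc -B t₀ + ε * ∫ ζ in (0:ℝ)..1, DF t₀ ζ
          ≤ -(ε * En t₀) := h3
        _ = ω * ((3/2) * En t₀) := h6.symm
        _ ≤ ω * V t₀ := h5
  set G : ℝ → ℝ := fun t => Real.exp (-ω * t) * V t with hGdef
  have hGd : ∀ t₀ ∈ Ioi (0:ℝ), ∃ d, HasDerivAt G d t₀ ∧ d ≤ 0 := by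
    intro t₀ ht₀
    obtain ⟨d, hd, hdle⟩ := hVd t₀ ht₀
    have hexpd : HasDerivAt (fun t => Real.exp (-ω * t)) (Real.exp (-ω * t₀) * -ω) t₀ := by
      have h1 : HasDerivAt (fun t : ℝ => -ω * t) (-ω * 1) t₀ := (hasDerivAt_id t₀).const_mul (-ω)
      have h2 := h1.exp
      convert h2 using 1
      ring
    refine ⟨_, hexpd.mul hd, ?_⟩
    exact stmt10_Gd (Real.exp (-ω * t₀)) ω (V t₀) d (Real.exp_pos _).le hdle
  have hGc : ContinuousOn G (Ici (0:ℝ)) := by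
    simp only [hGdef]
    exact ((Real.continuous_exp.comp (continuous_const.mul continuous_id)).continuousOn).mul hVcont
  have hGanti : AntitoneOn G (Ici (0:ℝ)) := by
    apply antitoneOn_of_deriv_nonpos (convex_Ici 0) hGc
    · intro x hx
      rw [interior_Ici] at hx
      obtain ⟨d, hd, _⟩ := hGd x hx
      exact hd.differentiableAt.differentiableWithinAt
    · intro x hx
      rw [interior_Ici] at hx
      obtain ⟨d, hd, hdle⟩ := hGd x hx
      rw [hd.deriv]
      exact hdle
  intro t ht
  have hG0 : G t ≤ G 0 := hGanti self_mem_Ici ht ht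
  have hexppos : (0:ℝ) < Real.exp (ω * t) := Real.exp_pos _
  have hVt : V t ≤ Real.exp (ω * t) * V 0 := by
    have h1 : Real.exp (-ω * t) * V t ≤ Real.exp (-ω * 0) * V 0 := by
      simpa only [hGdef] using hG0
    rw [mul_zero, Real.exp_zero, one_mul] at h1
    have h2 : Real.exp (ω*t) * (Real.exp (-ω*t) * V t) ≤ Real.exp (ω*t) * V 0 :=
      mul_le_mul_of_nonneg_left h1 hexppos.le
    rwa [← mul_assoc, ← Real.exp_add, (by ring : ω*t + -ω*t = 0), Real.exp_zero, one_mul] at h2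
  have hEt : En t ≤ 2 * V t := stmt10_double _ _ (hVge t ht)
  have hV0 : V 0 ≤ (3/2) * En 0 := hVle 0 self_mem_Ici
  have h3 : Real.exp (ω*t) * V 0 ≤ Real.exp (ω*t) * ((3/2) * En 0) :=
    mul_le_mul_of_nonneg_left hV0 hexppos.le
  have hfinal : En t ≤ 3 * Real.exp (ω * t) * En 0 :=
    stmt10_fin (En t) (V t) (Real.exp (ω * t)) (V 0) (En 0) hEt hVt h3
  simpa only [hEndef, hEhdef] using hfinal
end
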